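/- arXiv:2403.05800 — 11 statements merged into one kernel-verified Lean document; each statement's English description precedes it below -/
import Mathlib

section
/- Let R be a (not necessarily commutative) ring, let u, v ∈ R, and let c ∈ R be a central element satisfying v·u = c. For every integer m ≥ 0 set W_m := ∑_{k=0}^{m} u^k·v^{m−k}. Then: (1) (u+v)·W_0 = W_1 and, for every m ≥ 1, (u+v)·W_m = W_{m+1} + c·W_{m−1}; (2) for every m ≥ 0, (u+v)^m = ∑_{A=0}^{⌊m/2⌋} C(m−A, A)·c^A·W_{m−2A}. -/
/-- `C(A,B) := binom(A+B, B) − binom(A+B, B−1)`, with the convention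
`binom(a, −1) = 0`. -/
def heckeC (A B : ℕ) : ℤ :=
  ((A + B).choose B : ℤ) - (if B = 0 then 0 else ((A + B).choose (B - 1) : ℤ))

def hf (m A : ℕ) : ℤ :=
  (m.choose A : ℤ) - (if A = 0 then 0 else (m.choose (A - 1) : ℤ))

lemma hf_zero_right (m : ℕ) : hf m 0 = 1 := by simp [hf]

lemma hf_pascal (m A : ℕ) : hf (m + 1) (A + 1) = hf m (A + 1) + hf m A := by
  rcases A with _ | B
  · simp [hf, Nat.choose_succ_succ]
  · simp only [hf, Nat.choose_succ_succ, Nat.succ_ne_zero, if_false,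
      Nat.add_sub_cancel]
    push_cast
    ring

lemma hf_zero_central (m A : ℕ) (h : 2 * A = m + 1) : hf m A = 0 := by
  obtain ⟨k, rfl⟩ : ∃ k, A = k + 1 := ⟨A - 1, by omega⟩
  have hm : m = 2 * k + 1 := by omega
  subst hm
  have hs : (2 * k + 1).choose (k + 1) = (2 * k + 1).choose k := by
    have := Nat.choose_symm (n := 2 * k + 1) (k := k) (by omega)
    have h2 : 2 * k + 1 - k = k + 1 := by omega
    rw [h2] at this
    exact this
  simp [hf, hs]

lemma heckeC_eq_hf (m A : ℕ) (h : A ≤ m) : heckeC (m - A) A = hf m A := by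
  unfold heckeC hf
  rw [Nat.sub_add_cancel h]

/-- Let `R` be a (not necessarily commutative) ring, `u v c : R` with `c`
central and `v * u = c`.  Setting `W m = ∑_{k=0}^m u^k v^{m-k}`, we have
`(u+v) W₀ = W₁`, `(u+v) Wₘ = W_{m+1} + c W_{m-1}` for `m ≥ 1`, and
`(u+v)^m = ∑_{A=0}^{⌊m/2⌋} C(m−A,A) c^A W_{m−2A}`. -/
theorem hecke_power_expansion (R : Type*) [Ring R] (u v c : R)
    (hc : ∀ r : R, c * r = r * c) (hvu : v * u = c)
    (W : ℕ → R) (hW : ∀ m, W m = ∑ k ∈ Finset.range (m + 1), u ^ k * v ^ (m - k)) :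
    ((u + v) * W 0 = W 1 ∧
      ∀ m : ℕ, 1 ≤ m → (u + v) * W m = W (m + 1) + c * W (m - 1)) ∧
    ∀ m : ℕ, (u + v) ^ m =
      ∑ A ∈ Finset.range (m / 2 + 1), heckeC (m - A) A • (c ^ A * W (m - 2 * A)) := by
  -- W 0 = 1, W 1 = v + u
  have hW0 : W 0 = 1 := by simp [hW]
  have hW1 : W 1 = v + u := by
    rw [hW]
    simp [Finset.sum_range_succ]
  -- u * W m = W (m+1) - v^(m+1)
  have hL1 : ∀ m : ℕ, W (m + 1) = u * W m + v ^ (m + 1) := by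
    intro m
    rw [hW (m + 1), hW m, Finset.sum_range_succ']
    simp only [pow_zero, one_mul, Nat.sub_zero, Nat.succ_sub_succ]
    rw [Finset.mul_sum]
    congr 1
    apply Finset.sum_congr rfl
    intro k _
    rw [pow_succ', mul_assoc]
  -- v * W (m+1) = v^(m+2) + c * W m
  have hL2 : ∀ m : ℕ, v * W (m + 1) = c * W m + v ^ (m + 2) := by
    intro m
    rw [hW (m + 1), hW m, Finset.mul_sum, Finset.sum_range_succ']
    simp only [pow_zero, one_mul, Nat.sub_zero, Nat.succ_sub_succ]
    rw [Finset.mul_sum]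
    congr 1
    · apply Finset.sum_congr rfl
      intro k _
      rw [pow_succ', ← mul_assoc, ← mul_assoc, hvu, mul_assoc]
    · rw [← pow_succ']
  have hbase : (u + v) * W 0 = W 1 := by
    rw [hW0, hW1, mul_one, add_comm]
  have hrec : ∀ m : ℕ, 1 ≤ m → (u + v) * W m = W (m + 1) + c * W (m - 1) := by
    intro m hm
    obtain ⟨n, rfl⟩ : ∃ n, m = n + 1 := ⟨m - 1, by omega⟩
    rw [add_mul, hL2 n, hL1 (n + 1)]
    simp only [Nat.add_sub_cancel]
    abel
  refine ⟨⟨hbase, hrec⟩, ?_⟩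
  -- c^A commutes with everything
  have hcA : ∀ (A : ℕ) (r : R), c ^ A * r = r * c ^ A := by
    intro A r
    have h : Commute c r := hc r
    exact (h.pow_left A).eq
  -- main claim with extended range
  have key : ∀ m : ℕ, (u + v) ^ m =
      ∑ A ∈ Finset.range (m + 1),
        (if 2 * A ≤ m then hf m A • (c ^ A * W (m - 2 * A)) else 0) := by
    intro m
    induction m with
    | zero => simp [hW0, hf_zero_right]
    | succ m ih =>
      have step : (u + v) ^ (m + 1) =
          ∑ A ∈ Finset.range (m + 1),
            ((if 2 * A ≤ m then hf m A • (c ^ A * W (m + 1 - 2 * A)) else 0)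
              + (if 2 * A + 1 ≤ m then hf m A • (c ^ (A + 1) * W (m - 2 * A - 1)) else 0)) := by
        rw [pow_succ', ih, Finset.mul_sum]
        apply Finset.sum_congr rfl
        intro A _
        by_cases h1 : 2 * A ≤ m
        · rw [if_pos h1]
          rw [mul_smul_comm]
          by_cases h2 : 2 * A + 1 ≤ m
          · -- interior case
            rw [if_pos h1, if_pos h2]
            have hmove : (u + v) * (c ^ A * W (m - 2 * A)) =
                c ^ A * ((u + v) * W (m - 2 * A)) := by
              rw [← mul_assoc, ← hcA, mul_assoc]
            rw [hmove, hrec (m - 2 * A) (by omega)]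
            have e1 : m - 2 * A + 1 = m + 1 - 2 * A := by omega
            have e2 : m - 2 * A - 1 = m - 2 * A - 1 := rfl
            rw [e1, mul_add, ← smul_add]
            congr 2
            rw [← mul_assoc, ← pow_succ]
          · -- boundary: 2A = m
            have h3 : 2 * A = m := by omega
            rw [if_pos h1, if_neg h2, add_zero]
            have hz : m - 2 * A = 0 := by omega
            have hz1 : m + 1 - 2 * A = 1 := by omega
            rw [hz, hz1]
            congr 1
            rw [← mul_assoc, ← hcA, mul_assoc, hbase]
        · rw [if_neg h1, if_neg h1, if_neg (by omega), mul_zero, add_zero]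
      -- reindex the second sum
      have reidx : ∑ A ∈ Finset.range (m + 1),
            (if 2 * A + 1 ≤ m then hf m A • (c ^ (A + 1) * W (m - 2 * A - 1)) else 0)
          = ∑ A ∈ Finset.range (m + 2),
            (if A ≠ 0 ∧ 2 * A ≤ m + 1 then hf m (A - 1) • (c ^ A * W (m + 1 - 2 * A)) else 0) := by
        rw [Finset.sum_range_succ' (n := m + 1)]
        simp only [ne_eq, not_true_eq_false, false_and, if_false, add_zero,
          Nat.succ_ne_zero, not_false_eq_true, true_and, Nat.add_sub_cancel]
        apply Finset.sum_congr rfl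
        intro A _
        have hcond : (2 * (A + 1) ≤ m + 1) ↔ (2 * A + 1 ≤ m) := by omega
        by_cases h : 2 * A + 1 ≤ m
        · rw [if_pos h, if_pos (hcond.mpr h)]
          have harg : m + 1 - 2 * (A + 1) = m - 2 * A - 1 := by omega
          rw [harg]
        · rw [if_neg h, if_neg (fun hh => h (hcond.mp hh))]
      -- extend the first sum
      have ext1 : ∑ A ∈ Finset.range (m + 2),
            (if 2 * A ≤ m then hf m A • (c ^ A * W (m + 1 - 2 * A)) else 0)
          = ∑ A ∈ Finset.range (m + 1),
            (if 2 * A ≤ m then hf m A • (c ^ A * W (m + 1 - 2 * A)) else 0) := by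
        rw [Finset.sum_range_succ]
        rw [if_neg (by omega), add_zero]
      rw [step, Finset.sum_add_distrib, reidx, ← ext1, ← Finset.sum_add_distrib]
      apply Finset.sum_congr rfl
      intro A _
      rcases Nat.eq_zero_or_pos A with rfl | hA
      · simp only [Nat.mul_zero, Nat.zero_le, if_pos, ne_eq, not_true_eq_false,
          false_and, if_false, add_zero, hf_zero_right]
      · obtain ⟨B, rfl⟩ : ∃ B, A = B + 1 := ⟨A - 1, by omega⟩
        simp only [Nat.succ_ne_zero, ne_eq, not_false_eq_true, true_and,
          Nat.add_sub_cancel]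
        by_cases h1 : 2 * (B + 1) ≤ m
        · rw [if_pos h1, if_pos (by omega), if_pos (by omega), hf_pascal, add_smul]
        · by_cases h2 : 2 * (B + 1) = m + 1
          · rw [if_neg h1, if_pos (le_of_eq h2), if_pos (le_of_eq h2), zero_add]
            have : hf (m + 1) (B + 1) = hf m B := by
              rw [hf_pascal, hf_zero_central m (B + 1) h2, zero_add]
            rw [this]
          · rw [if_neg h1, if_neg (by omega), if_neg (by omega), add_zero]
  -- convert extended range to the stated range
  intro m
  rw [key m]
  symm
  calc ∑ A ∈ Finset.range (m / 2 + 1), heckeC (m - A) A • (c ^ A * W (m - 2 * A))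
      = ∑ A ∈ Finset.range (m / 2 + 1),
          (if 2 * A ≤ m then hf m A • (c ^ A * W (m - 2 * A)) else 0) := by
        apply Finset.sum_congr rfl
        intro A hA
        have hA' : A ≤ m / 2 := Nat.lt_succ_iff.mp (Finset.mem_range.mp hA)
        rw [if_pos (by omega), heckeC_eq_hf m A (by omega)]
    _ = ∑ A ∈ Finset.range (m + 1),
          (if 2 * A ≤ m then hf m A • (c ^ A * W (m - 2 * A)) else 0) := by
        apply Finset.sum_subset (Finset.range_subset_range.mpr (by omega : m / 2 + 1 ≤ m + 1))
        intro A _ hA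
        have hlt : m / 2 < A := by
          by_contra hcon
          exact hA (Finset.mem_range.mpr (by omega))
        rw [if_neg (by omega)]
end

section
/- Let p be a prime and n ≥ 2 an even integer. Suppose a sequence (W_m)_{m≥0} of elements of ℚ_p converges p-adically to W ∈ ℚ_p. Then the sequence m ↦ ∑_{A=0}^{⌊m!/2⌋} C(m!−A, A)·p^{(n+1)A}·W_{m!−2A} converges p-adically, as m → ∞, to (1 − p^{n+1})·W. -/
open Filter Topology

variable {p : ℕ} [Fact p.Prime]

lemma fact_tendsto_zero : Tendsto (fun m : ℕ => ((m.factorial : ℚ_[p]))) atTop (nhds 0) := by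
  have hp1 : 1 < p := (Fact.out : p.Prime).one_lt
  rw [tendsto_zero_iff_norm_tendsto_zero]
  apply squeeze_zero (fun m => norm_nonneg _) (g := fun m => ((p : ℝ)⁻¹) ^ (m / p))
  · intro m
    have hv : m / p ≤ padicValNat p (m.factorial) := by
      rw [padicValNat_factorial (b := Nat.log p m + 2) (by omega)]
      have h1 : (1 : ℕ) ∈ Finset.Ico 1 (Nat.log p m + 2) := by
        simp
      simpa using Finset.single_le_sum (f := fun i => m / p ^ i)
        (fun i _ => Nat.zero_le _) h1
    obtain ⟨t, ht⟩ : p ^ (m / p) ∣ m.factorial :=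
      dvd_trans (pow_dvd_pow p hv) pow_padicValNat_dvd
    calc ‖((m.factorial : ℚ_[p]))‖ = ‖((p : ℚ_[p]) ^ (m / p))‖ * ‖((t : ℚ_[p]))‖ := by
          rw [← norm_mul]; norm_cast; rw [ht]
      _ ≤ ((p : ℝ)⁻¹) ^ (m / p) * 1 := by
          apply mul_le_mul _ _ (norm_nonneg _) (by positivity)
          · rw [norm_pow, Padic.norm_p]
          · exact_mod_cast Padic.norm_int_le_one (t : ℤ)
      _ = ((p : ℝ)⁻¹) ^ (m / p) := mul_one _
  · have hgeo : Tendsto (fun k : ℕ => ((p : ℝ)⁻¹) ^ k) atTop (nhds 0) := by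
      apply tendsto_pow_atTop_nhds_zero_of_lt_one (by positivity)
      rw [inv_lt_one_iff₀]; right; exact_mod_cast hp1
    exact hgeo.comp (tendsto_atTop_atTop.2 fun b =>
      ⟨b * p, fun m hm => (Nat.le_div_iff_mul_le (by omega)).2 hm⟩)

lemma choose_tendsto (A : ℕ) :
    Tendsto (fun m : ℕ => ((m.factorial.choose A : ℚ_[p]))) atTop
      (nhds (if A = 0 then 1 else 0)) := by
  induction A with
  | zero => simpa using tendsto_const_nhds
  | succ A ih =>
    have key : ∀ᶠ m : ℕ in atTop,
        (fun m : ℕ => ((m.factorial.choose A : ℚ_[p])) * ((m.factorial : ℚ_[p]) - A) / (A + 1)) m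
          = ((m.factorial.choose (A + 1) : ℚ_[p])) := by
      filter_upwards [eventually_ge_atTop (A + 1)] with m hm
      have hA : A ≤ m.factorial := le_trans (by omega) (Nat.self_le_factorial m)
      have := Nat.choose_succ_right_eq m.factorial A
      have hcast : ((m.factorial.choose (A+1) : ℚ_[p])) * (A + 1)
          = (m.factorial.choose A : ℚ_[p]) * ((m.factorial : ℚ_[p]) - A) := by
        have h3 := congrArg (fun k : ℕ => (k : ℚ_[p])) this
        push_cast [Nat.cast_sub hA] at h3
        exact h3
      rw [div_eq_iff (Nat.cast_add_one_ne_zero A : ((A : ℚ_[p]) + 1) ≠ 0)]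
      push_cast
      linear_combination -hcast
    have h2 : Tendsto
        (fun m : ℕ => ((m.factorial.choose A : ℚ_[p])) * ((m.factorial : ℚ_[p]) - A) / (A + 1))
        atTop (nhds ((if A = 0 then 1 else 0) * ((0 : ℚ_[p]) - A) / (A + 1))) := by
      exact (ih.mul (fact_tendsto_zero.sub tendsto_const_nhds)).div_const _
    have : ((if A = 0 then (1:ℚ_[p]) else 0) * ((0 : ℚ_[p]) - A) / (A + 1))
        = (if A + 1 = 0 then 1 else 0) := by
      split_ifs with h h2' <;> simp_all
    rw [this] at h2
    exact h2.congr' key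

lemma heckeC_tendsto (A : ℕ) :
    Tendsto (fun m : ℕ => ((heckeC (m.factorial - A) A : ℚ_[p]))) atTop
      (nhds (if A = 0 then 1 else if A = 1 then -1 else 0)) := by
  have key : ∀ᶠ m : ℕ in atTop,
      (fun m : ℕ => ((m.factorial.choose A : ℚ_[p])
          - (if A = 0 then 0 else (m.factorial.choose (A-1) : ℚ_[p])))) m
        = ((heckeC (m.factorial - A) A : ℚ_[p])) := by
    filter_upwards [eventually_ge_atTop A] with m hm
    have hA : A ≤ m.factorial := le_trans hm (Nat.self_le_factorial m)
    unfold heckeC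
    rw [Nat.sub_add_cancel hA]
    push_cast
    split_ifs <;> simp
  refine Tendsto.congr' key ?_
  by_cases hA0 : A = 0
  · subst hA0
    simpa using (choose_tendsto (p := p) 0)
  · have h2 := (choose_tendsto (p := p) A).sub (choose_tendsto (p := p) (A - 1))
    simp only [hA0, if_false]
    have : (if A = 0 then (1:ℚ_[p]) else 0) - (if A - 1 = 0 then 1 else 0)
        = (if A = 1 then -1 else 0) := by
      rcases A with _ | _ | A <;> simp_all
    rw [this] at h2
    exact h2


/-- Let `p` be a prime and `n ≥ 2` an even integer.  If `(W_m)` is a sequence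
in `ℚ_p` converging `p`-adically to `W`, then
`∑_{A=0}^{⌊m!/2⌋} C(m!−A, A) p^{(n+1)A} W_{m!−2A}` converges `p`-adically, as
`m → ∞`, to `(1 − p^{n+1}) W`. -/
theorem limit_lemma (p : ℕ) [Fact p.Prime] (n : ℕ) (hn : 2 ≤ n) (hne : Even n)
    (W : ℕ → ℚ_[p]) (Wlim : ℚ_[p]) (hW : Tendsto W atTop (nhds Wlim)) :
    Tendsto
      (fun m : ℕ =>
        ∑ A ∈ Finset.range (m.factorial / 2 + 1),
          (heckeC (m.factorial - A) A : ℚ_[p]) * (p : ℚ_[p]) ^ ((n + 1) * A) *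
            W (m.factorial - 2 * A))
      atTop (nhds ((1 - (p : ℚ_[p]) ^ (n + 1)) * Wlim)) := by
  have hp1 : 1 < p := (Fact.out : p.Prime).one_lt
  set F : ℕ → ℕ → ℚ_[p] := fun m A =>
    (heckeC (m.factorial - A) A : ℚ_[p]) * (p : ℚ_[p]) ^ ((n + 1) * A) *
      W (m.factorial - 2 * A) with hF
  set r : ℝ := ((p : ℝ)⁻¹) ^ (n + 1) with hrdef
  have hr0 : 0 ≤ r := by positivity
  have hr1 : r < 1 := by
    apply pow_lt_one₀ (by positivity) _ (by omega)
    rw [inv_lt_one_iff₀]; right; exact_mod_cast hp1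
  have hnormpow : ∀ A : ℕ, ‖(p : ℚ_[p]) ^ ((n + 1) * A)‖ = r ^ A := by
    intro A
    rw [norm_pow, Padic.norm_p, hrdef, ← pow_mul]
  obtain ⟨C0, hC0⟩ := (hW.norm).bddAbove_range
  set C : ℝ := max C0 1 with hCdef
  have hC : ∀ k, ‖W k‖ ≤ C := fun k => le_trans (hC0 ⟨k, rfl⟩) (le_max_left _ _)
  have hC1 : (1 : ℝ) ≤ C := le_max_right _ _
  have hCpos : (0 : ℝ) < C := lt_of_lt_of_le one_pos hC1
  rw [Metric.tendsto_atTop]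
  intro ε hε
  have hgeo : Tendsto (fun K : ℕ => C * r ^ K) atTop (nhds 0) := by
    simpa using (tendsto_pow_atTop_nhds_zero_of_lt_one hr0 hr1).const_mul C
  obtain ⟨K0, hK0⟩ := Metric.tendsto_atTop.1 hgeo (ε / 2) (by positivity)
  set K : ℕ := max K0 2 with hKdef
  have hK2 : 2 ≤ K := le_max_right _ _
  have hKbound : C * r ^ K < ε / 2 := by
    have h := hK0 K (le_max_left _ _)
    rwa [Real.dist_eq, sub_zero, abs_of_nonneg (by positivity)] at h
  -- head sum tends to the limit
  have headlim : ∀ A : ℕ, Tendsto (fun m : ℕ => F m A) atTop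
      (nhds ((if A = 0 then 1 else if A = 1 then -1 else 0) *
        (p : ℚ_[p]) ^ ((n + 1) * A) * Wlim)) := by
    intro A
    have hWc : Tendsto (fun m : ℕ => W (m.factorial - 2 * A)) atTop (nhds Wlim) :=
      hW.comp (tendsto_atTop_atTop.2 fun b =>
        ⟨b + 2 * A, fun m hm => by have := Nat.self_le_factorial m; omega⟩)
    exact ((heckeC_tendsto A).mul tendsto_const_nhds).mul hWc
  have hLsum : (∑ A ∈ Finset.range K,
      (if A = 0 then (1 : ℚ_[p]) else if A = 1 then -1 else 0) *
        (p : ℚ_[p]) ^ ((n + 1) * A) * Wlim) = (1 - (p : ℚ_[p]) ^ (n + 1)) * Wlim := by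
    rw [← Finset.sum_subset (Finset.range_subset_range.2 hK2) (fun A _ hA => by
      have h2 : 2 ≤ A := by simp at hA; omega
      have h0 : A ≠ 0 := by omega
      have h1 : A ≠ 1 := by omega
      simp [h0, h1])]
    rw [Finset.sum_range_succ, Finset.sum_range_one]
    simp
    ring
  have Hsum : Tendsto (fun m : ℕ => ∑ A ∈ Finset.range K, F m A) atTop
      (nhds ((1 - (p : ℚ_[p]) ^ (n + 1)) * Wlim)) := by
    rw [← hLsum]
    exact tendsto_finset_sum _ (fun A _ => headlim A)
  obtain ⟨N1, hN1⟩ := Metric.tendsto_atTop.1 Hsum (ε / 2) (by positivity)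
  refine ⟨max N1 (2 * K), fun m hm => ?_⟩
  have hm1 : N1 ≤ m := le_trans (le_max_left _ _) hm
  have hmK : K ≤ m.factorial / 2 := by
    have h2K : 2 * K ≤ m := le_trans (le_max_right _ _) hm
    have := Nat.self_le_factorial m
    omega
  have hsplit : (∑ A ∈ Finset.range (m.factorial / 2 + 1), F m A)
      = (∑ A ∈ Finset.range K, F m A)
        + ∑ A ∈ Finset.Ico K (m.factorial / 2 + 1), F m A := by
    simp only [Finset.range_eq_Ico]
    exact (Finset.sum_Ico_consecutive _ (Nat.zero_le K) (by omega)).symm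
  have tailbound : ‖∑ A ∈ Finset.Ico K (m.factorial / 2 + 1), F m A‖ ≤ C * r ^ K := by
    apply IsUltrametricDist.norm_sum_le_of_forall_le_of_nonneg (by positivity)
    intro A hA
    have hKA : K ≤ A := (Finset.mem_Ico.1 hA).1
    calc ‖F m A‖ = ‖((heckeC (m.factorial - A) A : ℚ_[p]))‖ *
          ‖(p : ℚ_[p]) ^ ((n + 1) * A)‖ * ‖W (m.factorial - 2 * A)‖ := by
            rw [hF]; rw [norm_mul, norm_mul]
      _ ≤ 1 * r ^ A * C := by
          refine mul_le_mul (mul_le_mul ?_ ?_ (norm_nonneg _) zero_le_one)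
            (hC _) (norm_nonneg _) (by positivity)
          · exact Padic.norm_int_le_one _
          · rw [hnormpow]
      _ = C * r ^ A := by ring
      _ ≤ C * r ^ K := by
          exact mul_le_mul_of_nonneg_left (pow_le_pow_of_le_one hr0 hr1.le hKA) hCpos.le
  calc dist (∑ A ∈ Finset.range (m.factorial / 2 + 1), F m A)
        ((1 - (p : ℚ_[p]) ^ (n + 1)) * Wlim)
      ≤ dist (∑ A ∈ Finset.range (m.factorial / 2 + 1), F m A)
          (∑ A ∈ Finset.range K, F m A)
        + dist (∑ A ∈ Finset.range K, F m A) ((1 - (p : ℚ_[p]) ^ (n + 1)) * Wlim) :=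
        dist_triangle _ _ _
    _ < ε / 2 + ε / 2 := by
        apply add_lt_add _ (hN1 m hm1)
        rw [dist_eq_norm, hsplit, add_sub_cancel_left]
        exact lt_of_le_of_lt tailbound hKbound
    _ = ε := by ring
end

section
/- Let p be a prime and n ≥ 2 an even integer. Then, p-adically, lim_{m→∞} ∑_{A=0}^{⌊m!/2⌋} ( binom(m!, A) − binom(m!, A−1) )·p^{(n+1)A} = 1 − p^{n+1} in ℚ_p. -/
open Filter Topology

private lemma aux_one_le_norm_mul (p : ℕ) [hp : Fact p.Prime] (B : ℕ) (hB : B ≠ 0) :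
    1 ≤ ‖(B : ℚ_[p])‖ * B := by
  have hB0 : (B : ℚ_[p]) ≠ 0 := Nat.cast_ne_zero.mpr hB
  rw [Padic.norm_eq_zpow_neg_valuation hB0, Padic.valuation_natCast]
  have hple : (p : ℝ) ^ (padicValNat p B : ℤ) ≤ B := by
    rw [zpow_natCast]
    exact_mod_cast Nat.le_of_dvd (Nat.pos_of_ne_zero hB) pow_padicValNat_dvd
  have hp1 : (0 : ℝ) < p := by exact_mod_cast hp.out.pos
  calc (1 : ℝ) = (p : ℝ) ^ (-(padicValNat p B : ℤ)) * (p : ℝ) ^ (padicValNat p B : ℤ) := by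
        rw [← zpow_add₀ hp1.ne']; simp
    _ ≤ (p : ℝ) ^ (-(padicValNat p B : ℤ)) * B :=
        mul_le_mul_of_nonneg_left hple (zpow_nonneg hp1.le _)

private lemma aux_choose_norm (p : ℕ) [hp : Fact p.Prime] (N B : ℕ) (hN : N ≠ 0) (hB : B ≠ 0) :
    ‖((N.choose B : ℕ) : ℚ_[p])‖ ≤ ‖(N : ℚ_[p])‖ * B := by
  have key : (N : ℚ_[p]) * ((N - 1).choose (B - 1)) = (N.choose B) * B := by
    have h := Nat.add_one_mul_choose_eq (N - 1) (B - 1)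
    have e1 : N - 1 + 1 = N := by omega
    have e2 : B - 1 + 1 = B := by omega
    simp only [Nat.succ_eq_add_one, e1, e2] at h
    exact_mod_cast h
  have h1 : ‖(N.choose B : ℚ_[p])‖ * ‖(B : ℚ_[p])‖ ≤ ‖(N : ℚ_[p])‖ := by
    rw [← norm_mul, ← key, norm_mul]
    calc ‖(N : ℚ_[p])‖ * ‖(((N - 1).choose (B - 1) : ℕ) : ℚ_[p])‖
        ≤ ‖(N : ℚ_[p])‖ * 1 := by
          refine mul_le_mul_of_nonneg_left ?_ (norm_nonneg _)
          exact_mod_cast Padic.norm_int_le_one (((N - 1).choose (B - 1) : ℤ))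
      _ = ‖(N : ℚ_[p])‖ := mul_one _
  calc ‖(N.choose B : ℚ_[p])‖ = ‖(N.choose B : ℚ_[p])‖ * 1 := (mul_one _).symm
    _ ≤ ‖(N.choose B : ℚ_[p])‖ * (‖(B : ℚ_[p])‖ * B) :=
        mul_le_mul_of_nonneg_left (aux_one_le_norm_mul p B hB) (norm_nonneg _)
    _ = (‖(N.choose B : ℚ_[p])‖ * ‖(B : ℚ_[p])‖) * B := by ring
    _ ≤ ‖(N : ℚ_[p])‖ * B := by
        refine mul_le_mul_of_nonneg_right h1 ?_
        exact_mod_cast Nat.zero_le B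

private lemma aux_pow_dvd_factorial (p : ℕ) [hp : Fact p.Prime] (k : ℕ) :
    p ^ k ∣ (k * p).factorial := by
  induction k with
  | zero => simp
  | succ k ih =>
    have hp1 : 1 ≤ p := hp.out.pos
    have hle : k * p + 1 ≤ (k + 1) * p := by
      rw [add_mul, one_mul]; omega
    have h1 : (k * p).factorial ∣ ((k + 1) * p - 1).factorial :=
      Nat.factorial_dvd_factorial (by omega)
    have h2 : ((k + 1) * p).factorial = ((k + 1) * p) * ((k + 1) * p - 1).factorial := by
      have h3 : (k + 1) * p = ((k + 1) * p - 1) + 1 := by omega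
      rw [h3, Nat.factorial_succ, ← h3]
    rw [pow_succ, h2, mul_comm (p ^ k) p]
    exact mul_dvd_mul (dvd_mul_left p (k + 1)) (ih.trans h1)

private lemma aux_factorial_norm_tendsto (p : ℕ) [hp : Fact p.Prime] :
    Tendsto (fun m : ℕ => ‖((m.factorial : ℕ) : ℚ_[p])‖) atTop (nhds 0) := by
  have hp0 : 0 < p := hp.out.pos
  have hp1 : (1 : ℝ) < p := by exact_mod_cast hp.out.one_lt
  have hb : ∀ m : ℕ, ‖((m.factorial : ℕ) : ℚ_[p])‖ ≤ ((p : ℝ)⁻¹) ^ (m / p) := by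
    intro m
    have hd : ((p : ℤ)) ^ (m / p) ∣ ((m.factorial : ℕ) : ℤ) := by
      exact_mod_cast (aux_pow_dvd_factorial p (m / p)).trans
        (Nat.factorial_dvd_factorial (Nat.div_mul_le_self m p))
    have h := (Padic.norm_int_le_pow_iff_dvd ((m.factorial : ℕ) : ℤ) (m / p)).mpr hd
    rw [show (((m.factorial : ℕ) : ℤ) : ℚ_[p]) = ((m.factorial : ℕ) : ℚ_[p]) by push_cast; ring]
      at h
    calc ‖((m.factorial : ℕ) : ℚ_[p])‖ ≤ (p : ℝ) ^ (-(m / p : ℕ) : ℤ) := h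
      _ = ((p : ℝ)⁻¹) ^ (m / p) := by
          rw [zpow_neg, zpow_natCast, inv_pow]
  refine squeeze_zero (fun m => norm_nonneg _) hb ?_
  have h1 : Tendsto (fun m : ℕ => m / p) atTop atTop := by
    rw [tendsto_atTop]
    intro b
    filter_upwards [eventually_ge_atTop (b * p)] with m hm
    exact (Nat.le_div_iff_mul_le hp0).mpr hm
  exact (tendsto_pow_atTop_nhds_zero_of_lt_one (by positivity)
    (inv_lt_one_of_one_lt₀ hp1)).comp h1

/-- Let `p` be a prime and `n ≥ 2` an even integer.  Then, `p`-adically,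
`lim_{m→∞} ∑_{A=0}^{⌊m!/2⌋} (binom(m!, A) − binom(m!, A−1)) p^{(n+1)A}
 = 1 − p^{n+1}` in `ℚ_p`, with the convention `binom(a, −1) = 0`. -/
theorem binomial_sum_p_adic_limit (p : ℕ) [Fact p.Prime] (n : ℕ) (hn : 2 ≤ n)
    (hne : Even n) :
    Tendsto
      (fun m : ℕ =>
        ∑ A ∈ Finset.range (m.factorial / 2 + 1),
          ((((m.factorial.choose A : ℤ) -
              if A = 0 then 0 else (m.factorial.choose (A - 1) : ℤ)) : ℤ) : ℚ_[p]) *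
            (p : ℚ_[p]) ^ ((n + 1) * A))
      atTop (nhds (1 - (p : ℚ_[p]) ^ (n + 1))) := by
  have hp2 : 2 ≤ p := (Fact.out : p.Prime).two_le
  have hp0 : (0 : ℝ) < p := by positivity
  set x : ℚ_[p] := (p : ℚ_[p]) ^ (n + 1) with hxdef
  have hxnorm : ‖x‖ = ((p : ℝ)⁻¹) ^ (n + 1) := by
    rw [hxdef, norm_pow, Padic.norm_p]
  have hxle1 : ‖x‖ ≤ 1 := by
    rw [hxnorm]
    exact pow_le_one₀ (by positivity) (inv_le_one_of_one_le₀ (by exact_mod_cast hp2.trans' (by norm_num)))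
  rw [tendsto_iff_norm_sub_tendsto_zero]
  have hbound : ∀ m : ℕ, 2 ≤ m →
      ‖(∑ A ∈ Finset.range (m.factorial / 2 + 1),
          ((((m.factorial.choose A : ℤ) -
              if A = 0 then 0 else (m.factorial.choose (A - 1) : ℤ)) : ℤ) : ℚ_[p]) *
            (p : ℚ_[p]) ^ ((n + 1) * A)) - (1 - x)‖
        ≤ ‖((m.factorial : ℕ) : ℚ_[p])‖ := by
    intro m hm
    set N := m.factorial with hNdef
    have hN2 : 2 ≤ N := hm.trans (Nat.self_le_factorial m)
    have hN0 : N ≠ 0 := by omega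
    have hK : 1 ≤ N / 2 := (Nat.one_le_div_iff (by norm_num)).mpr hN2
    set K := N / 2 with hKdef
    set d : ℕ → ℤ := fun A =>
      if A = 0 then 0 else if A = 1 then (N : ℤ)
        else ((N.choose A : ℤ) - (N.choose (A - 1) : ℤ)) with hd
    have key2 : (∑ A ∈ Finset.range (K + 1),
          ((((N.choose A : ℤ) - if A = 0 then 0 else (N.choose (A - 1) : ℤ)) : ℤ) : ℚ_[p]) *
            (p : ℚ_[p]) ^ ((n + 1) * A))
        - (∑ A ∈ Finset.range (K + 1), ((d A : ℚ_[p]) * x ^ A)) = 1 - x := by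
      rw [← Finset.sum_sub_distrib]
      have hterm : ∀ A ∈ Finset.range (K + 1),
          ((((N.choose A : ℤ) - if A = 0 then 0 else (N.choose (A - 1) : ℤ)) : ℤ) : ℚ_[p]) *
            (p : ℚ_[p]) ^ ((n + 1) * A) - ((d A : ℚ_[p]) * x ^ A)
          = (if A = 0 then (1 : ℚ_[p]) else 0) + (if A = 1 then -x else 0) := by
        intro A _
        match A with
        | 0 => simp [hd]
        | 1 => simp [hd, hxdef, Nat.choose_one_right]; push_cast; ring
        | (B + 2) =>
          have h2 : ¬(B + 2 = 0) := by omega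
          have h1 : ¬(B + 2 = 1) := by omega
          simp only [hd, hxdef, ← pow_mul, if_neg h2, if_neg h1]
          ring
      rw [Finset.sum_congr rfl hterm, Finset.sum_add_distrib,
        Finset.sum_ite_eq' (Finset.range (K + 1)) 0 (fun _ => (1 : ℚ_[p])),
        Finset.sum_ite_eq' (Finset.range (K + 1)) 1 (fun _ => -x)]
      have h0 : (0 : ℕ) ∈ Finset.range (K + 1) := by simp
      have h1 : (1 : ℕ) ∈ Finset.range (K + 1) := by simp; omega
      rw [if_pos h0, if_pos h1]
      ring
    have heq : (∑ A ∈ Finset.range (K + 1),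
          ((((N.choose A : ℤ) - if A = 0 then 0 else (N.choose (A - 1) : ℤ)) : ℤ) : ℚ_[p]) *
            (p : ℚ_[p]) ^ ((n + 1) * A)) - (1 - x)
        = ∑ A ∈ Finset.range (K + 1), ((d A : ℚ_[p]) * x ^ A) := by
      linear_combination key2
    rw [heq]
    refine IsUltrametricDist.norm_sum_le_of_forall_le_of_nonneg (norm_nonneg _) ?_
    intro A hA
    match A with
    | 0 => simp [hd]
    | 1 =>
      simp only [hd, if_neg (by omega : ¬(1 = 0)), if_pos rfl, pow_one, norm_mul,
        Int.cast_natCast]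
      exact mul_le_of_le_one_right (norm_nonneg _) hxle1
    | (B + 2) =>
      have h2 : ¬(B + 2 = 0) := by omega
      have h1 : ¬(B + 2 = 1) := by omega
      have e : B + 2 - 1 = B + 1 := by omega
      simp only [hd, if_neg h2, if_neg h1, e, Int.cast_sub, norm_mul]
      have hc1 : ‖((N.choose (B + 2) : ℤ) : ℚ_[p]) - ((N.choose (B + 1) : ℤ) : ℚ_[p])‖
          ≤ ‖((N : ℕ) : ℚ_[p])‖ * (B + 2 : ℕ) := by
        rw [sub_eq_add_neg]
        refine (IsUltrametricDist.norm_add_le_max _ _).trans (max_le ?_ ?_)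
        · have := aux_choose_norm p N (B + 2) hN0 (by omega)
          rw [show (((N.choose (B + 2) : ℕ)) : ℚ_[p]) = (((N.choose (B + 2) : ℤ)) : ℚ_[p])
            by push_cast; ring] at this
          exact_mod_cast this
        · rw [norm_neg]
          have := aux_choose_norm p N (B + 1) hN0 (by omega)
          rw [show (((N.choose (B + 1) : ℕ)) : ℚ_[p]) = (((N.choose (B + 1) : ℤ)) : ℚ_[p])
            by push_cast; ring] at this
          refine this.trans ?_
          refine mul_le_mul_of_nonneg_left ?_ (norm_nonneg _)
          exact_mod_cast Nat.le_succ (B + 1)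
      have hxA : ‖x ^ (B + 2)‖ = ((p : ℝ)⁻¹) ^ ((n + 1) * (B + 2)) := by
        rw [norm_pow, hxnorm, ← pow_mul]
      have hnat : (B + 2 : ℕ) ≤ p ^ ((n + 1) * (B + 2)) := by
        calc B + 2 ≤ 2 ^ (B + 2) := (Nat.lt_two_pow_self (n := B + 2)).le
          _ ≤ 2 ^ ((n + 1) * (B + 2)) :=
              Nat.pow_le_pow_right (by norm_num) (Nat.le_mul_of_pos_left _ (by omega))
          _ ≤ p ^ ((n + 1) * (B + 2)) := Nat.pow_le_pow_left hp2 _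
      calc ‖((N.choose (B + 2) : ℤ) : ℚ_[p]) - ((N.choose (B + 1) : ℤ) : ℚ_[p])‖ * ‖x ^ (B + 2)‖
          ≤ (‖((N : ℕ) : ℚ_[p])‖ * (B + 2 : ℕ)) * ‖x ^ (B + 2)‖ :=
            mul_le_mul_of_nonneg_right hc1 (norm_nonneg _)
        _ = ‖((N : ℕ) : ℚ_[p])‖ * ((B + 2 : ℕ) * ((p : ℝ)⁻¹) ^ ((n + 1) * (B + 2))) := by
            rw [hxA]; ring
        _ ≤ ‖((N : ℕ) : ℚ_[p])‖ * 1 := by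
            refine mul_le_mul_of_nonneg_left ?_ (norm_nonneg _)
            rw [inv_pow, ← div_eq_mul_inv, div_le_one (by positivity)]
            exact_mod_cast hnat
        _ = ‖((N : ℕ) : ℚ_[p])‖ := mul_one _
  refine squeeze_zero' (Eventually.of_forall fun m => norm_nonneg _)
    ((eventually_ge_atTop 2).mono fun m hm => hbound m hm) (aux_factorial_norm_tendsto p)
end

section
/- Let p be a prime and let s, t, u be integers with t ≥ 1. (1) If u ≥ 1, then the p-adic limit lim_{m→∞} ∑_{k=0}^{m} p^{u(m−k)}·p^{−(k−s)}·B̃_t(p^{k−s}) exists in ℚ_p and equals B_{t−1}/(1 − p^u). (2) If ε ≥ 1 is an integer with u + ε ≥ 1, then lim_{m→∞} p^{εm}·∑_{k=0}^{m} p^{u(m−k)}·p^{−(k−s)}·B̃_t(p^{k−s}) = 0 in ℚ_p. -/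
open Filter Topology

/-- `B̃_t(x) := (B_t(x) − B_t)/t`, where `B_t(x)` is the `t`-th Bernoulli
polynomial and `B_t = B_t(0)` the `t`-th Bernoulli number. -/
noncomputable def Btil (t : ℕ) (x : ℚ) : ℚ :=
  ((Polynomial.bernoulli t).eval x - bernoulli t) / t

open Finset in
lemma my_zpow_mul {K : Type*} [Field K] {a : K} (ha : a ≠ 0) (m n : ℤ) :
    a ^ (m * n) = (a ^ m) ^ n := by
  have h := zpow_mul (Units.mk0 a ha) m n
  have h2 := congrArg (Units.val (α := K)) h
  simpa [Units.val_zpow_eq_zpow_val] using h2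

lemma conv_tendsto_zero {K : Type*} [NormedField K] {a b : K} (ha : ‖a‖ < 1) (hb : ‖b‖ < 1) :
    Tendsto (fun m : ℕ => ∑ k ∈ Finset.range (m + 1), a ^ (m - k) * b ^ k) atTop (nhds 0) := by
  set q := max ‖a‖ ‖b‖ with hq
  have hq0 : 0 ≤ q := le_trans (norm_nonneg a) (le_max_left _ _)
  have hq1 : q < 1 := max_lt ha hb
  have hbound : ∀ m : ℕ,
      ‖∑ k ∈ Finset.range (m + 1), a ^ (m - k) * b ^ k‖ ≤ ((m : ℝ) + 1) * q ^ m := by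
    intro m
    calc ‖∑ k ∈ Finset.range (m + 1), a ^ (m - k) * b ^ k‖
        ≤ ∑ k ∈ Finset.range (m + 1), ‖a ^ (m - k) * b ^ k‖ := norm_sum_le _ _
      _ ≤ ∑ _k ∈ Finset.range (m + 1), q ^ m := by
          apply Finset.sum_le_sum
          intro k hk
          have hk' : k ≤ m := Nat.lt_succ_iff.mp (Finset.mem_range.mp hk)
          rw [norm_mul, norm_pow, norm_pow]
          calc ‖a‖ ^ (m - k) * ‖b‖ ^ k ≤ q ^ (m - k) * q ^ k := by
                apply mul_le_mul (pow_le_pow_left₀ (norm_nonneg a) (le_max_left _ _) _)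
                  (pow_le_pow_left₀ (norm_nonneg b) (le_max_right _ _) _)
                  (pow_nonneg (norm_nonneg b) _) (pow_nonneg hq0 _)
            _ = q ^ m := by rw [← pow_add, Nat.sub_add_cancel hk']
      _ = ((m : ℝ) + 1) * q ^ m := by
          rw [Finset.sum_const, Finset.card_range, nsmul_eq_mul]; push_cast; ring
  apply squeeze_zero_norm hbound
  have h1 : Summable (fun m : ℕ => (m : ℝ) * q ^ m) := by
    have := summable_pow_mul_geometric_of_norm_lt_one (R := ℝ) 1
      (by rwa [Real.norm_of_nonneg hq0])
    simpa using this
  have h2 : Summable (fun m : ℕ => q ^ m) := summable_geometric_of_lt_one hq0 hq1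
  have h3 := (h1.add h2).tendsto_atTop_zero
  convert h3 using 2 with m
  ring

lemma geom_conv {K : Type*} [NormedField K] [CompleteSpace K] {r : K} (hr : ‖r‖ < 1) :
    Tendsto (fun m : ℕ => ∑ k ∈ Finset.range (m + 1), r ^ (m - k)) atTop (nhds (1 - r)⁻¹) := by
  have h := (hasSum_geometric_of_norm_lt_one hr).tendsto_sum_nat
  have h2 := h.comp (tendsto_add_atTop_nat 1)
  apply h2.congr
  intro m
  simpa using (Finset.sum_range_reflect (fun j => r ^ j) (m + 1)).symm

open Finset in
lemma btil_expand (n : ℕ) {x : ℚ} (hx : x ≠ 0) :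
    x⁻¹ * Btil (n + 1) x
      = bernoulli n + ∑ i ∈ Finset.range n,
          (bernoulli i * ((n + 1).choose i) / (n + 1)) * x ^ (n - i) := by
  have heval : (Polynomial.bernoulli (n + 1)).eval x
      = ∑ i ∈ Finset.range (n + 2), bernoulli i * ((n + 1).choose i) * x ^ (n + 1 - i) := by
    simp [Polynomial.bernoulli, Polynomial.eval_finset_sum]
  rw [Btil, heval, Finset.sum_range_succ]
  simp only [Nat.sub_self, pow_zero, Nat.choose_self, Nat.cast_one, mul_one]
  rw [add_sub_cancel_right, Finset.sum_range_succ]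
  have hx' : ∀ i ∈ Finset.range n, bernoulli i * ((n + 1).choose i : ℚ) * x ^ (n + 1 - i)
      = (bernoulli i * ((n + 1).choose i : ℚ) * x ^ (n - i)) * x := by
    intro i hi
    have h : n + 1 - i = (n - i) + 1 := by
      have := Finset.mem_range.mp hi; omega
    rw [h, pow_succ]; ring
  rw [Finset.sum_congr rfl hx', ← Finset.sum_mul]
  have hR : ∑ i ∈ Finset.range n, (bernoulli i * ((n + 1).choose i : ℚ) / (n + 1)) * x ^ (n - i)
      = (∑ i ∈ Finset.range n, bernoulli i * ((n + 1).choose i : ℚ) * x ^ (n - i)) / (n + 1) := by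
    rw [Finset.sum_div]
    apply Finset.sum_congr rfl
    intro i _
    ring
  rw [hR, Nat.choose_succ_self_right]
  have hn1 : ((n : ℚ) + 1) ≠ 0 := by positivity
  have hc : ((n + 1 : ℕ) : ℚ) = (n : ℚ) + 1 := by push_cast; ring
  rw [hc]
  have hsub : n + 1 - n = 1 := by omega
  rw [hsub, pow_one]
  field_simp
  ring

/-- Let `p` be a prime and `s, t, u` integers with `t ≥ 1`.
(1) If `u ≥ 1`, then `lim_{m→∞} ∑_{k=0}^m p^{u(m−k)} p^{−(k−s)} B̃_t(p^{k−s})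
    = B_{t−1}/(1 − p^u)` in `ℚ_p`.
(2) If `ε ≥ 1` is an integer with `u + ε ≥ 1`, then
    `lim_{m→∞} p^{εm} ∑_{k=0}^m p^{u(m−k)} p^{−(k−s)} B̃_t(p^{k−s}) = 0`. -/
theorem bernoulli_sum_p_adic_limit (p : ℕ) [Fact p.Prime] (s u : ℤ) (t : ℕ)
    (ht : 1 ≤ t) :
    (1 ≤ u →
      Tendsto
        (fun m : ℕ =>
          ((∑ k ∈ Finset.range (m + 1),
              (p : ℚ) ^ (u * ((m : ℤ) - (k : ℤ))) * (p : ℚ) ^ (-((k : ℤ) - s)) *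
                Btil t ((p : ℚ) ^ ((k : ℤ) - s)) : ℚ) : ℚ_[p]))
        atTop (nhds (((bernoulli (t - 1) : ℚ) : ℚ_[p]) / (1 - (p : ℚ_[p]) ^ u)))) ∧
    (∀ ε : ℤ, 1 ≤ ε → 1 ≤ u + ε →
      Tendsto
        (fun m : ℕ =>
          (p : ℚ_[p]) ^ (ε * (m : ℤ)) *
            ((∑ k ∈ Finset.range (m + 1),
                (p : ℚ) ^ (u * ((m : ℤ) - (k : ℤ))) * (p : ℚ) ^ (-((k : ℤ) - s)) *
                  Btil t ((p : ℚ) ^ ((k : ℤ) - s)) : ℚ) : ℚ_[p]))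
        atTop (nhds 0)) := by
  obtain ⟨n, rfl⟩ : ∃ n, t = n + 1 := ⟨t - 1, by omega⟩
  have hp1 : 1 < p := (Fact.out : p.Prime).one_lt
  have hpQ : (p : ℚ) ≠ 0 := Nat.cast_ne_zero.mpr (by omega)
  have hP : ((p : ℚ_[p])) ≠ 0 := Nat.cast_ne_zero.mpr (by omega)
  have hp1R : (1 : ℝ) < (p : ℝ) := by exact_mod_cast hp1
  -- norms of powers of p
  have hlt : ∀ v : ℤ, 1 ≤ v → ‖(p : ℚ_[p]) ^ v‖ < 1 := by
    intro v hv
    rw [Padic.norm_p_zpow]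
    calc ((p : ℝ)) ^ (-v) < (p : ℝ) ^ (0 : ℤ) := zpow_lt_zpow_right₀ hp1R (by omega)
      _ = 1 := zpow_zero _
  set B : ℚ_[p] := ((bernoulli n : ℚ) : ℚ_[p]) with hB
  set c : ℕ → ℚ := fun i => bernoulli i * ((n + 1).choose i) / (n + 1) with hc
  set ρ : ℕ → ℚ_[p] := fun i => (p : ℚ_[p]) ^ (n - i) with hρ
  set a : ℕ → ℚ_[p] :=
    fun i => ((c i : ℚ) : ℚ_[p]) * (p : ℚ_[p]) ^ (-(s * ((n - i : ℕ) : ℤ))) with ha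
  set r : ℚ_[p] := (p : ℚ_[p]) ^ u with hr
  have hρlt : ∀ i ∈ Finset.range n, ‖ρ i‖ < 1 := by
    intro i hi
    have hin : i < n := Finset.mem_range.mp hi
    have : ρ i = (p : ℚ_[p]) ^ ((n - i : ℕ) : ℤ) := by rw [hρ, zpow_natCast]
    rw [this]
    exact hlt _ (by omega)
  -- per-term identity
  have hterm : ∀ m k : ℕ, k ≤ m →
      (((p : ℚ) ^ (u * ((m : ℤ) - (k : ℤ))) * (p : ℚ) ^ (-((k : ℤ) - s)) *
          Btil (n + 1) ((p : ℚ) ^ ((k : ℤ) - s)) : ℚ) : ℚ_[p])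
      = B * r ^ (m - k)
        + ∑ i ∈ Finset.range n, a i * (r ^ (m - k) * (ρ i) ^ k) := by
    intro m k hk
    have hx : ((p : ℚ) ^ ((k : ℤ) - s)) ≠ 0 := zpow_ne_zero _ hpQ
    have h1 : (p : ℚ) ^ (-((k : ℤ) - s)) * Btil (n + 1) ((p : ℚ) ^ ((k : ℤ) - s))
        = bernoulli n + ∑ i ∈ Finset.range n, c i * ((p : ℚ) ^ ((k : ℤ) - s)) ^ (n - i) := by
      rw [zpow_neg, btil_expand n hx]
    rw [mul_assoc, h1]
    push_cast
    have hA : ((p : ℚ_[p])) ^ (u * ((m : ℤ) - (k : ℤ))) = r ^ (m - k) := by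
      have he : (m : ℤ) - (k : ℤ) = ((m - k : ℕ) : ℤ) := by omega
      rw [he, my_zpow_mul hP, zpow_natCast, hr]
    have hBpow : ∀ i ∈ Finset.range n,
        ((p : ℚ_[p]) ^ ((k : ℤ) - s)) ^ (n - i)
          = (p : ℚ_[p]) ^ (-(s * ((n - i : ℕ) : ℤ))) * (ρ i) ^ k := by
      intro i _
      have e1 : ((p : ℚ_[p]) ^ ((k : ℤ) - s)) ^ (n - i)
          = (p : ℚ_[p]) ^ (((k : ℤ) - s) * ((n - i : ℕ) : ℤ)) := by
        rw [my_zpow_mul hP, zpow_natCast]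
      have e2 : ((k : ℤ) - s) * ((n - i : ℕ) : ℤ)
          = (-(s * ((n - i : ℕ) : ℤ))) + ((n - i : ℕ) : ℤ) * (k : ℤ) := by ring
      have e3 : (p : ℚ_[p]) ^ (((n - i : ℕ) : ℤ) * (k : ℤ)) = (ρ i) ^ k := by
        rw [my_zpow_mul hP]
        simp [hρ, zpow_natCast]
      rw [e1, e2, zpow_add₀ hP, e3]
    rw [hA, Finset.sum_congr rfl (fun i hi => by rw [hBpow i hi])]
    rw [mul_add, Finset.mul_sum]
    congr 1
    · rw [mul_comm]
    · apply Finset.sum_congr rfl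
      intro i _
      rw [ha, hc]
      push_cast
      ring
  -- sum identity
  have hsum : ∀ m : ℕ,
      ((∑ k ∈ Finset.range (m + 1),
          (p : ℚ) ^ (u * ((m : ℤ) - (k : ℤ))) * (p : ℚ) ^ (-((k : ℤ) - s)) *
            Btil (n + 1) ((p : ℚ) ^ ((k : ℤ) - s)) : ℚ) : ℚ_[p])
      = B * (∑ k ∈ Finset.range (m + 1), r ^ (m - k))
        + ∑ i ∈ Finset.range n,
            a i * (∑ k ∈ Finset.range (m + 1), r ^ (m - k) * (ρ i) ^ k) := by
    intro m
    rw [Rat.cast_sum]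
    rw [Finset.sum_congr rfl
      (fun k hk => hterm m k (Nat.lt_succ_iff.mp (Finset.mem_range.mp hk)))]
    rw [Finset.sum_add_distrib, ← Finset.mul_sum, Finset.sum_comm]
    congr 1
    apply Finset.sum_congr rfl
    intro i _
    rw [Finset.mul_sum]
  constructor
  · -- part 1
    intro hu
    have hrlt : ‖r‖ < 1 := hlt u hu
    have hgeom := (geom_conv hrlt).const_mul B
    have herr : Tendsto
        (fun m : ℕ => ∑ i ∈ Finset.range n,
          a i * (∑ k ∈ Finset.range (m + 1), r ^ (m - k) * (ρ i) ^ k))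
        atTop (nhds 0) := by
      have h := tendsto_finset_sum (Finset.range n)
        (fun i hi => (conv_tendsto_zero hrlt (hρlt i hi)).const_mul (a i))
      simpa using h
    have hfin := hgeom.add herr
    rw [add_zero] at hfin
    have : ((bernoulli (n + 1 - 1) : ℚ) : ℚ_[p]) / (1 - (p : ℚ_[p]) ^ u) = B * (1 - r)⁻¹ := by
      simp [hB, hr, div_eq_mul_inv]
    rw [this]
    exact hfin.congr (fun m => (hsum m).symm)
  · -- part 2
    intro ε hε huε
    set r' : ℚ_[p] := (p : ℚ_[p]) ^ (u + ε) with hr'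
    set σ : ℚ_[p] := (p : ℚ_[p]) ^ ε with hσ
    have hr'lt : ‖r'‖ < 1 := hlt _ huε
    have hσlt : ‖σ‖ < 1 := hlt _ hε
    have hk2 : ∀ m k : ℕ, k ≤ m →
        (p : ℚ_[p]) ^ (ε * (m : ℤ)) * r ^ (m - k) = r' ^ (m - k) * σ ^ k := by
      intro m k hk
      have e1 : r ^ (m - k) = (p : ℚ_[p]) ^ (u * ((m : ℤ) - (k : ℤ))) := by
        rw [show (m : ℤ) - (k : ℤ) = ((m - k : ℕ) : ℤ) from by omega, my_zpow_mul hP,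
          zpow_natCast, hr]
      have e2 : r' ^ (m - k) = (p : ℚ_[p]) ^ ((u + ε) * ((m : ℤ) - (k : ℤ))) := by
        rw [show (m : ℤ) - (k : ℤ) = ((m - k : ℕ) : ℤ) from by omega, my_zpow_mul hP,
          zpow_natCast, hr']
      have e3 : σ ^ k = (p : ℚ_[p]) ^ (ε * (k : ℤ)) := by
        rw [my_zpow_mul hP, zpow_natCast, hσ]
      rw [e1, e2, e3, ← zpow_add₀ hP, ← zpow_add₀ hP]
      congr 1
      ring
    have hsum2 : ∀ m : ℕ,
        (p : ℚ_[p]) ^ (ε * (m : ℤ)) *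
          ((∑ k ∈ Finset.range (m + 1),
              (p : ℚ) ^ (u * ((m : ℤ) - (k : ℤ))) * (p : ℚ) ^ (-((k : ℤ) - s)) *
                Btil (n + 1) ((p : ℚ) ^ ((k : ℤ) - s)) : ℚ) : ℚ_[p])
        = B * (∑ k ∈ Finset.range (m + 1), r' ^ (m - k) * σ ^ k)
          + ∑ i ∈ Finset.range n,
              a i * (∑ k ∈ Finset.range (m + 1), r' ^ (m - k) * (σ * ρ i) ^ k) := by
      intro m
      rw [hsum m, mul_add]
      congr 1
      · rw [mul_left_comm]
        congr 1
        rw [Finset.mul_sum]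
        apply Finset.sum_congr rfl
        intro k hk
        exact hk2 m k (Nat.lt_succ_iff.mp (Finset.mem_range.mp hk))
      · rw [Finset.mul_sum]
        apply Finset.sum_congr rfl
        intro i _
        rw [mul_left_comm]
        congr 1
        rw [Finset.mul_sum]
        apply Finset.sum_congr rfl
        intro k hk
        have hk' : k ≤ m := Nat.lt_succ_iff.mp (Finset.mem_range.mp hk)
        rw [← mul_assoc, hk2 m k hk', mul_pow]
        ring
    have hσρ : ∀ i ∈ Finset.range n, ‖σ * ρ i‖ < 1 := by
      intro i hi
      rw [norm_mul]
      have h1 := hρlt i hi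
      have h2 := hσlt
      nlinarith [norm_nonneg σ, norm_nonneg (ρ i)]
    have hmain : Tendsto
        (fun m : ℕ =>
          B * (∑ k ∈ Finset.range (m + 1), r' ^ (m - k) * σ ^ k)
            + ∑ i ∈ Finset.range n,
                a i * (∑ k ∈ Finset.range (m + 1), r' ^ (m - k) * (σ * ρ i) ^ k))
        atTop (nhds 0) := by
      have h1 := (conv_tendsto_zero hr'lt hσlt).const_mul B
      have h2 := tendsto_finset_sum (Finset.range n)
        (fun i hi => (conv_tendsto_zero hr'lt (hσρ i hi)).const_mul (a i))
      have h3 := h1.add h2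
      simpa using h3
    exact hmain.congr (fun m => (hsum2 m).symm)
end

section
/- Let p be a prime and let b, s, t, u be integers with s ≥ 0 and t ≥ 0. For m ≥ 0 define the rational number S_m := ∑_{k=0}^{m} p^{u(m−k)} ∑_{l=0}^{k−1} p^{l·s}·( B̃_{t+1}(p^{k−l})/p^{k−l} − p^b·B̃_{t+1}(p^{k−l−1})/p^{k−l−1} ). (1) If s ≥ 1 and u ≥ 1, then lim_{m→∞} S_m = (B_t/(1−p^s))·((1−p^b)/(1−p^u)) in ℚ_p. (2) If ε ≥ 1 is an integer with u + ε ≥ 1, then lim_{m→∞} p^{εm}·S_m = 0 in ℚ_p. -/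
open Filter Topology

/-- The rational number
`S_m := ∑_{k=0}^{m} p^{u(m−k)} ∑_{l=0}^{k−1} p^{ls}
  (B̃_{t+1}(p^{k−l})/p^{k−l} − p^b B̃_{t+1}(p^{k−l−1})/p^{k−l−1})`. -/
noncomputable def Ssum (p : ℕ) (b : ℤ) (s t : ℕ) (u : ℤ) (m : ℕ) : ℚ :=
  ∑ k ∈ Finset.range (m + 1),
    (p : ℚ) ^ (u * ((m : ℤ) - (k : ℤ))) *
      ∑ l ∈ Finset.range k,
        (p : ℚ) ^ (l * s) *
          (Btil (t + 1) ((p : ℚ) ^ ((k : ℤ) - l)) / (p : ℚ) ^ ((k : ℤ) - l) -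
            (p : ℚ) ^ b * Btil (t + 1) ((p : ℚ) ^ ((k : ℤ) - l - 1)) /
              (p : ℚ) ^ ((k : ℤ) - l - 1))

/-! ### Auxiliary geometric-convolution limits in `ℚ_[p]` -/

lemma DBS.conv_zero {p : ℕ} [Fact p.Prime] (x : ℚ_[p]) (hx : ‖x‖ < 1) (a : ℕ → ℚ_[p])
    (ha : Tendsto a atTop (nhds 0)) :
    Tendsto (fun m => ∑ k ∈ Finset.range (m + 1), x ^ (m - k) * a k) atTop (nhds 0) := by
  rw [NormedAddCommGroup.tendsto_nhds_zero]
  intro ε hε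
  obtain ⟨M, hM⟩ := ha.norm.bddAbove_range
  have hM' : ∀ k, ‖a k‖ ≤ M := fun k => hM (Set.mem_range_self k)
  have hεpos : 0 < ε / 2 := by positivity
  obtain ⟨N, hN⟩ : ∃ N, ∀ k ≥ N, ‖a k‖ ≤ ε / 2 := by
    obtain ⟨N, hN⟩ := Metric.tendsto_atTop.mp ha.norm (ε / 2) hεpos
    refine ⟨N, fun k hk => ?_⟩
    have := hN k hk
    rw [norm_zero, Real.dist_eq, sub_zero] at this
    exact (le_abs_self _).trans this.le
  have hxM : Tendsto (fun n : ℕ => ‖x‖ ^ n * M) atTop (nhds 0) := by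
    simpa using (tendsto_pow_atTop_nhds_zero_of_lt_one (norm_nonneg x) hx).mul_const M
  obtain ⟨N2, hN2⟩ : ∃ N2, ∀ n ≥ N2, ‖x‖ ^ n * M ≤ ε / 2 := by
    obtain ⟨N2, hN2⟩ := Metric.tendsto_atTop.mp hxM (ε / 2) hεpos
    refine ⟨N2, fun n hn => ?_⟩
    have := hN2 n hn
    rw [Real.dist_eq, sub_zero] at this
    exact (le_abs_self _).trans this.le
  filter_upwards [eventually_ge_atTop (N + N2)] with m hm
  have hbound : ‖∑ k ∈ Finset.range (m + 1), x ^ (m - k) * a k‖ ≤ ε / 2 := by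
    apply IsUltrametricDist.norm_sum_le_of_forall_le_of_nonneg hεpos.le
    intro k hk
    rw [Finset.mem_range] at hk
    rw [norm_mul, norm_pow]
    rcases lt_or_ge k N with h | h
    · calc ‖x‖ ^ (m - k) * ‖a k‖ ≤ ‖x‖ ^ (m - k) * M :=
            mul_le_mul_of_nonneg_left (hM' k) (by positivity)
        _ ≤ ε / 2 := hN2 (m - k) (by omega)
    · calc ‖x‖ ^ (m - k) * ‖a k‖ ≤ 1 * (ε / 2) :=
            mul_le_mul (pow_le_one₀ (norm_nonneg x) hx.le) (hN k h) (norm_nonneg _) zero_le_one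
        _ = ε / 2 := one_mul _
  linarith

lemma DBS.conv_limit {p : ℕ} [Fact p.Prime] (x : ℚ_[p]) (hx : ‖x‖ < 1) (a : ℕ → ℚ_[p])
    (A : ℚ_[p]) (ha : Tendsto a atTop (nhds A)) :
    Tendsto (fun m => ∑ k ∈ Finset.range (m + 1), x ^ (m - k) * a k) atTop
      (nhds (A * (1 - x)⁻¹)) := by
  have h1 : ∀ m : ℕ, ∑ k ∈ Finset.range (m + 1), x ^ (m - k) * a k
      = (∑ k ∈ Finset.range (m + 1), x ^ (m - k) * (a k - A))
        + A * ∑ j ∈ Finset.range (m + 1), x ^ j := by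
    intro m
    have h2 : A * ∑ j ∈ Finset.range (m + 1), x ^ j
        = ∑ k ∈ Finset.range (m + 1), x ^ (m - k) * A := by
      rw [Finset.mul_sum, ← Finset.sum_range_reflect (fun j => A * x ^ j) (m + 1)]
      apply Finset.sum_congr rfl
      intro k hk
      rw [Finset.mem_range] at hk
      rw [mul_comm]
      congr 2
    rw [h2, ← Finset.sum_add_distrib]
    apply Finset.sum_congr rfl
    intro k _
    ring
  have hz : Tendsto (fun m => ∑ k ∈ Finset.range (m + 1), x ^ (m - k) * (a k - A)) atTop
      (nhds 0) := by
    apply DBS.conv_zero x hx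
    simpa using ha.sub_const A
  have hg : Tendsto (fun m : ℕ => A * ∑ j ∈ Finset.range (m + 1), x ^ j) atTop
      (nhds (A * (1 - x)⁻¹)) := by
    have := (hasSum_geometric_of_norm_lt_one hx).tendsto_sum_nat
    exact (this.comp (tendsto_add_atTop_nat 1)).const_mul A
  have := hz.add hg
  rw [zero_add] at this
  exact this.congr fun m => (h1 m).symm

/-! ### The Bernoulli-polynomial identity and the basic limit -/

lemma DBS.Btil_eq (t : ℕ) (x : ℚ) :
    Btil (t + 1) x = (∑ i ∈ Finset.range (t + 1),
      (bernoulli i * ((t + 1).choose i) / (t + 1) : ℚ) * x ^ (t - i)) * x := by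
  have ht : ((t : ℚ) + 1) ≠ 0 := by positivity
  rw [Btil, Polynomial.bernoulli, Polynomial.eval_finset_sum]
  simp only [Polynomial.eval_monomial]
  rw [Finset.sum_range_succ]
  simp only [Nat.choose_self, Nat.sub_self, pow_zero, Nat.cast_one, mul_one]
  rw [add_sub_cancel_right, div_eq_iff (by push_cast; exact ht), Finset.sum_mul, Finset.sum_mul]
  apply Finset.sum_congr rfl
  intro i hi
  rw [Finset.mem_range] at hi
  have h2 : t + 1 - i = (t - i) + 1 := by omega
  rw [h2, pow_succ]
  push_cast
  field_simp

lemma DBS.F_tendsto (p : ℕ) [Fact p.Prime] (t : ℕ) :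
    Tendsto (fun j : ℕ => ((Btil (t + 1) ((p : ℚ) ^ j) / (p : ℚ) ^ j : ℚ) : ℚ_[p])) atTop
      (nhds ((bernoulli t : ℚ) : ℚ_[p])) := by
  have hp : (1 : ℕ) < p := (Fact.out : p.Prime).one_lt
  have hp0 : (p : ℚ) ≠ 0 := by positivity
  have key : ∀ j : ℕ, ((Btil (t + 1) ((p : ℚ) ^ j) / (p : ℚ) ^ j : ℚ) : ℚ_[p])
      = ∑ i ∈ Finset.range (t + 1),
          ((bernoulli i * ((t + 1).choose i) / (t + 1) : ℚ) : ℚ_[p]) *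
            ((p : ℚ_[p]) ^ j) ^ (t - i) := by
    intro j
    rw [DBS.Btil_eq, mul_div_assoc, div_self (pow_ne_zero j hp0), mul_one]
    push_cast
    rfl
  rw [show ((bernoulli t : ℚ) : ℚ_[p]) = ∑ i ∈ Finset.range (t + 1),
      (if i = t then ((bernoulli t : ℚ) : ℚ_[p]) else 0) by
    rw [Finset.sum_ite_eq' (Finset.range (t + 1)) t, if_pos (Finset.self_mem_range_succ t)]]
  refine Tendsto.congr (fun j => (key j).symm) (tendsto_finset_sum _ ?_)
  intro i hi
  rw [Finset.mem_range] at hi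
  by_cases h : i = t
  · subst h
    simp only [if_pos rfl, Nat.sub_self, pow_zero, mul_one]
    have hQ : (bernoulli i * ((i + 1).choose i) / (i + 1) : ℚ) = bernoulli i := by
      rw [Nat.choose_succ_self_right]
      have h1 : ((i : ℚ) + 1) ≠ 0 := by positivity
      push_cast
      rw [mul_div_assoc, div_self h1, mul_one]
    rw [hQ]
    exact tendsto_const_nhds
  · simp only [if_neg h]
    have hti : t - i ≠ 0 := by omega
    have hlt : ‖((p : ℚ_[p])) ^ (t - i)‖ < 1 := by
      rw [norm_pow]
      exact pow_lt_one₀ (norm_nonneg _) Padic.norm_p_lt_one hti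
    have h0 : Tendsto (fun j : ℕ => ((p : ℚ_[p]) ^ (t - i)) ^ j) atTop (nhds 0) :=
      tendsto_pow_atTop_nhds_zero_of_norm_lt_one hlt
    have heq : ∀ j : ℕ, ((p : ℚ_[p]) ^ j) ^ (t - i) = ((p : ℚ_[p]) ^ (t - i)) ^ j := by
      intro j; rw [← pow_mul, ← pow_mul, Nat.mul_comm]
    refine Tendsto.congr (fun j => by rw [heq j]) ?_
    simpa using h0.const_mul ((bernoulli i * ((t + 1).choose i) / (t + 1) : ℚ) : ℚ_[p])

/-! ### Rewriting `Ssum` as a double geometric convolution -/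

noncomputable def DBS.fQ (p t j : ℕ) : ℚ := Btil (t + 1) ((p : ℚ) ^ j) / (p : ℚ) ^ j

noncomputable def DBS.aQ (p : ℕ) (b : ℤ) (t j : ℕ) : ℚ :=
  if j = 0 then 0 else DBS.fQ p t j - (p : ℚ) ^ b * DBS.fQ p t (j - 1)

lemma DBS.Ssum_eq (p : ℕ) (b : ℤ) (s t : ℕ) (u : ℤ) (m : ℕ) :
    Ssum p b s t u m = ∑ k ∈ Finset.range (m + 1), ((p : ℚ) ^ u) ^ (m - k) *
      ∑ j ∈ Finset.range (k + 1), ((p : ℚ) ^ s) ^ (k - j) * DBS.aQ p b t j := by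
  rw [Ssum]
  apply Finset.sum_congr rfl
  intro k hk
  rw [Finset.mem_range] at hk
  congr 1
  · rw [← zpow_natCast ((p : ℚ) ^ u), ← zpow_mul]
    congr 1
    congr 1
    omega
  · rw [Finset.sum_range_succ']
    have a0 : DBS.aQ p b t 0 = 0 := if_pos rfl
    rw [a0, mul_zero, add_zero,
      ← Finset.sum_range_reflect (fun i => ((p : ℚ) ^ s) ^ (k - (i + 1)) * DBS.aQ p b t (i + 1)) k]
    apply Finset.sum_congr rfl
    intro l hl
    rw [Finset.mem_range] at hl
    have e1 : k - 1 - l + 1 = k - l := by omega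
    have e2 : k - (k - l) = l := by omega
    rw [e1, e2, DBS.aQ, if_neg (by omega : ¬ (k - l = 0)), DBS.fQ, DBS.fQ]
    have e3 : (k : ℤ) - (l : ℤ) = ((k - l : ℕ) : ℤ) := by omega
    have e4 : ((k - l : ℕ) : ℤ) - 1 = ((k - l - 1 : ℕ) : ℤ) := by omega
    rw [e3, e4, zpow_natCast, zpow_natCast, mul_comm l s, pow_mul, mul_div_assoc]

noncomputable def DBS.FP (p : ℕ) [Fact p.Prime] (t j : ℕ) : ℚ_[p] := ((DBS.fQ p t j : ℚ) : ℚ_[p])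

noncomputable def DBS.aP (p : ℕ) [Fact p.Prime] (b : ℤ) (t j : ℕ) : ℚ_[p] :=
  if j = 0 then 0 else DBS.FP p t j - (p : ℚ_[p]) ^ b * DBS.FP p t (j - 1)

lemma DBS.aQ_cast (p : ℕ) [Fact p.Prime] (b : ℤ) (t j : ℕ) :
    ((DBS.aQ p b t j : ℚ) : ℚ_[p]) = DBS.aP p b t j := by
  rw [DBS.aQ, DBS.aP, apply_ite (fun q : ℚ => (q : ℚ_[p]))]
  simp only [DBS.FP]
  push_cast
  rfl

lemma DBS.Ssum_cast (p : ℕ) [Fact p.Prime] (b : ℤ) (s t : ℕ) (u : ℤ) (m : ℕ) :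
    ((Ssum p b s t u m : ℚ) : ℚ_[p]) =
      ∑ k ∈ Finset.range (m + 1), ((p : ℚ_[p]) ^ u) ^ (m - k) *
        ∑ j ∈ Finset.range (k + 1), ((p : ℚ_[p]) ^ s) ^ (k - j) * DBS.aP p b t j := by
  rw [DBS.Ssum_eq]
  push_cast [DBS.aQ_cast]
  rfl

lemma DBS.norm_p_zpow_lt_one (p : ℕ) [Fact p.Prime] (u : ℤ) (hu : 1 ≤ u) :
    ‖(p : ℚ_[p]) ^ u‖ < 1 := by
  lift u to ℕ using (by omega)
  rw [zpow_natCast, norm_pow]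
  exact pow_lt_one₀ (norm_nonneg _) Padic.norm_p_lt_one (by exact_mod_cast by omega : u ≠ 0)

lemma DBS.aP_tendsto (p : ℕ) [Fact p.Prime] (b : ℤ) (t : ℕ) :
    Tendsto (DBS.aP p b t) atTop
      (nhds (((bernoulli t : ℚ) : ℚ_[p]) * (1 - (p : ℚ_[p]) ^ b))) := by
  have hF : Tendsto (DBS.FP p t) atTop (nhds ((bernoulli t : ℚ) : ℚ_[p])) := by
    exact DBS.F_tendsto p t
  have hF1 : Tendsto (fun j => DBS.FP p t (j - 1)) atTop (nhds ((bernoulli t : ℚ) : ℚ_[p])) :=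
    hF.comp (tendsto_sub_atTop_nat 1)
  have hG : Tendsto (fun j => DBS.FP p t j - (p : ℚ_[p]) ^ b * DBS.FP p t (j - 1)) atTop
      (nhds (((bernoulli t : ℚ) : ℚ_[p]) * (1 - (p : ℚ_[p]) ^ b))) := by
    have := hF.sub (hF1.const_mul ((p : ℚ_[p]) ^ b))
    convert this using 2
    ring
  refine Tendsto.congr' ?_ hG
  filter_upwards [eventually_ge_atTop 1] with j hj
  rw [DBS.aP, if_neg (by omega)]

/-- Let `p` be a prime and `b, s, t, u` integers with `s ≥ 0`, `t ≥ 0`.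
(1) If `s ≥ 1` and `u ≥ 1`, then `lim_{m→∞} S_m
    = (B_t/(1−p^s))((1−p^b)/(1−p^u))` in `ℚ_p`.
(2) If `ε ≥ 1` is an integer with `u + ε ≥ 1`, then
    `lim_{m→∞} p^{εm} S_m = 0` in `ℚ_p`. -/
theorem double_bernoulli_sum_p_adic_limit (p : ℕ) [Fact p.Prime] (b : ℤ)
    (s t : ℕ) (u : ℤ) :
    (1 ≤ s → 1 ≤ u →
      Tendsto (fun m : ℕ => ((Ssum p b s t u m : ℚ) : ℚ_[p])) atTop
        (nhds (((bernoulli t : ℚ) : ℚ_[p]) / (1 - (p : ℚ_[p]) ^ (s : ℤ)) *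
          ((1 - (p : ℚ_[p]) ^ b) / (1 - (p : ℚ_[p]) ^ u))))) ∧
    (∀ ε : ℤ, 1 ≤ ε → 1 ≤ u + ε →
      Tendsto
        (fun m : ℕ => (p : ℚ_[p]) ^ (ε * (m : ℤ)) * ((Ssum p b s t u m : ℚ) : ℚ_[p]))
        atTop (nhds 0)) := by
  have hp0 : (p : ℚ_[p]) ≠ 0 := by
    exact_mod_cast Nat.cast_ne_zero.mpr (Fact.out : p.Prime).ne_zero
  set Bt : ℚ_[p] := ((bernoulli t : ℚ) : ℚ_[p]) with hBt
  set Pb : ℚ_[p] := (p : ℚ_[p]) ^ b with hPb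
  set Y : ℚ_[p] := (p : ℚ_[p]) ^ s with hY
  set X : ℚ_[p] := (p : ℚ_[p]) ^ u with hX
  set T : ℕ → ℚ_[p] := fun k =>
    ∑ j ∈ Finset.range (k + 1), Y ^ (k - j) * DBS.aP p b t j with hT
  have hcast : ∀ m : ℕ, ((Ssum p b s t u m : ℚ) : ℚ_[p])
      = ∑ k ∈ Finset.range (m + 1), X ^ (m - k) * T k := fun m => DBS.Ssum_cast p b s t u m
  have haP := DBS.aP_tendsto p b t
  have hYle : ‖Y‖ ≤ 1 := by
    rw [hY, norm_pow]
    exact pow_le_one₀ (norm_nonneg _) Padic.norm_p_lt_one.le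
  constructor
  · intro hs hu
    have hYlt : ‖Y‖ < 1 := by
      rw [hY, norm_pow]
      exact pow_lt_one₀ (norm_nonneg _) Padic.norm_p_lt_one (by omega)
    have hXlt : ‖X‖ < 1 := DBS.norm_p_zpow_lt_one p u hu
    have hTlim : Tendsto T atTop (nhds ((Bt * (1 - Pb)) * (1 - Y)⁻¹)) :=
      DBS.conv_limit Y hYlt _ _ haP
    have := DBS.conv_limit X hXlt T _ hTlim
    have heq : (Bt * (1 - Pb)) * (1 - Y)⁻¹ * (1 - X)⁻¹
        = Bt / (1 - (p : ℚ_[p]) ^ (s : ℤ)) * ((1 - Pb) / (1 - X)) := by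
      rw [zpow_natCast, ← hY]
      simp only [div_eq_mul_inv]
      ring
    rw [heq] at this
    exact this.congr fun m => (hcast m).symm
  · intro ε hε huε
    have hX'lt : ‖(p : ℚ_[p]) ^ (u + ε)‖ < 1 := DBS.norm_p_zpow_lt_one p (u + ε) huε
    have hPεlt : ‖(p : ℚ_[p]) ^ ε‖ < 1 := DBS.norm_p_zpow_lt_one p ε hε
    -- T is bounded in norm
    obtain ⟨M, hM⟩ := haP.norm.bddAbove_range
    have hM' : ∀ j, ‖DBS.aP p b t j‖ ≤ M := fun j => hM (Set.mem_range_self j)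
    have hM0 : 0 ≤ M := (norm_nonneg _).trans (hM' 0)
    have hTbd : ∀ k, ‖T k‖ ≤ M := by
      intro k
      apply IsUltrametricDist.norm_sum_le_of_forall_le_of_nonneg hM0
      intro j _
      rw [norm_mul, norm_pow]
      calc ‖Y‖ ^ (k - j) * ‖DBS.aP p b t j‖ ≤ 1 * M :=
            mul_le_mul (pow_le_one₀ (norm_nonneg _) hYle) (hM' j) (norm_nonneg _) zero_le_one
        _ = M := one_mul M
    have hc : Tendsto (fun k => ((p : ℚ_[p]) ^ ε) ^ k * T k) atTop (nhds 0) := by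
      refine squeeze_zero_norm (a := fun k : ℕ => ‖(p : ℚ_[p]) ^ ε‖ ^ k * M) (fun k => ?_) ?_
      · rw [norm_mul, norm_pow]
        exact mul_le_mul_of_nonneg_left (hTbd k) (by positivity)
      · simpa using
          (tendsto_pow_atTop_nhds_zero_of_lt_one (norm_nonneg _) hPεlt).mul_const M
    have hmain := DBS.conv_limit ((p : ℚ_[p]) ^ (u + ε)) hX'lt _ 0 hc
    rw [zero_mul] at hmain
    refine hmain.congr fun m => ?_
    rw [hcast m, Finset.mul_sum]
    apply Finset.sum_congr rfl
    intro k hk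
    rw [Finset.mem_range] at hk
    have hkey : (p : ℚ_[p]) ^ (ε * (m : ℤ)) * X ^ (m - k)
        = ((p : ℚ_[p]) ^ (u + ε)) ^ (m - k) * ((p : ℚ_[p]) ^ ε) ^ k := by
      rw [hX, ← zpow_natCast ((p : ℚ_[p]) ^ u), ← zpow_natCast ((p : ℚ_[p]) ^ (u + ε)),
        ← zpow_natCast ((p : ℚ_[p]) ^ ε), ← zpow_mul, ← zpow_mul, ← zpow_mul,
        ← zpow_add₀ hp0, ← zpow_add₀ hp0]
      congr 1
      have hmk : ((m - k : ℕ) : ℤ) = (m : ℤ) - (k : ℤ) := by omega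
      rw [hmk]
      ring
    rw [← mul_assoc, ← hkey]
    ring
end

section
/- Let a, b, x₁, x₂ ∈ ℂ and let k₁, k₂ ≥ 0 be integers. Assume x₁·(a + t(b−a)) + x₂ ≠ 0 for every t ∈ [0,1] (in particular x₁a+x₂ ≠ 0 and x₁b+x₂ ≠ 0). Then the integral of (b−z)^{k₁}(z−a)^{k₂}/(x₁z+x₂)^{2+k₁+k₂} along the straight segment from a to b, i.e. ∫_0^1 (b−γ(t))^{k₁}(γ(t)−a)^{k₂}/(x₁γ(t)+x₂)^{2+k₁+k₂}·(b−a) dt with γ(t) = a + t(b−a), equals (k₁!·k₂!/(k₁+k₂+1)!)·(b−a)^{k₁+k₂+1}/((x₁a+x₂)^{k₁+1}(x₁b+x₂)^{k₂+1}). -/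
open intervalIntegral

lemma feyn_deriv (A B : ℂ) (hA : A ≠ 0) (p q : ℕ) (z : ℂ) (hz : A + z*(B-A) ≠ 0) :
    HasDerivAt (fun w : ℂ => w^(q+1) * (1-w)^p / (((q:ℂ)+1) * A * (A + w*(B-A))^(p+q+1)))
      (z^q * (1-z)^p / (A + z*(B-A))^(p+q+2)
        - (p:ℂ) * B / (((q:ℂ)+1)*A) * (z^(q+1) * (1-z)^(p-1) / (A + z*(B-A))^(p+q+2))) z := by
  have hq : ((q:ℂ)+1) ≠ 0 := Nat.cast_add_one_ne_zero q
  have h1 : HasDerivAt (fun w : ℂ => w^(q+1)) (((q:ℂ)+1) * z^q) z := by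
    simpa using hasDerivAt_pow (q+1) z
  have h2 : HasDerivAt (fun w : ℂ => (1-w)^p) ((p:ℂ)*(1-z)^(p-1)*(-1)) z := by
    exact ((hasDerivAt_id z).const_sub 1).pow p
  have hN := h1.mul h2
  have h3 : HasDerivAt (fun w : ℂ => A + w*(B-A)) (B-A) z := by
    simpa using ((hasDerivAt_id z).mul_const (B-A)).const_add A
  have hLd := ((h3.pow (p+q+1)).const_mul (((q:ℂ)+1)*A))
  have hD0 : ((q:ℂ)+1)*A*(A + z*(B-A))^(p+q+1) ≠ 0 :=
    mul_ne_zero (mul_ne_zero hq hA) (pow_ne_zero _ hz)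
  have := hN.div hLd hD0
  refine this.congr_deriv ?_
  simp only [Pi.mul_apply, Pi.pow_apply]
  rcases p with _ | n
  · push_cast
    field_simp
    ring
  · push_cast
    field_simp
    ring

lemma feyn_integrable (A B : ℂ)
    (hL : ∀ t : ℝ, t ∈ Set.Icc (0:ℝ) 1 → A + (t:ℂ)*(B-A) ≠ 0) (p q m : ℕ) :
    IntervalIntegrable (fun t : ℝ => (t:ℂ)^q * (1-(t:ℂ))^p / (A + (t:ℂ)*(B-A))^m)
      MeasureTheory.volume 0 1 := by
  apply ContinuousOn.intervalIntegrable
  rw [Set.uIcc_of_le (zero_le_one (α := ℝ))]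
  apply ContinuousOn.div
  · exact ((Complex.continuous_ofReal.pow q).mul
      ((continuous_const.sub Complex.continuous_ofReal).pow p)).continuousOn
  · exact ((continuous_const.add (Complex.continuous_ofReal.mul continuous_const)).pow m).continuousOn
  · intro t ht
    exact pow_ne_zero _ (hL t ht)

lemma feyn_key (A B : ℂ)
    (hL : ∀ t : ℝ, t ∈ Set.Icc (0:ℝ) 1 → A + (t:ℂ)*(B-A) ≠ 0) (p q : ℕ) :
    (∫ t in (0:ℝ)..1, (t:ℂ)^q * (1-(t:ℂ))^p / (A + (t:ℂ)*(B-A))^(p+q+2))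
      = ((p.factorial : ℂ) * (q.factorial : ℂ) / ((p+q+1).factorial : ℂ))
          / (A^(p+1) * B^(q+1)) := by
  have hA : A ≠ 0 := by simpa using hL 0 (by norm_num)
  have hB : B ≠ 0 := by
    have := hL 1 (by norm_num)
    simpa using this
  have hIcc : Set.uIcc (0:ℝ) 1 = Set.Icc 0 1 := Set.uIcc_of_le zero_le_one
  induction p generalizing q with
  | zero =>
    have hq : ((q:ℂ)+1) ≠ 0 := Nat.cast_add_one_ne_zero q
    have hderiv : ∀ t ∈ Set.uIcc (0:ℝ) 1,
        HasDerivAt (fun t : ℝ => ((t:ℂ))^(q+1) * (1-(t:ℂ))^0 / (((q:ℂ)+1) * A * (A + (t:ℂ)*(B-A))^(0+q+1)))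
          ((t:ℂ)^q * (1-(t:ℂ))^0 / (A + (t:ℂ)*(B-A))^(0+q+2)
            - (0:ℂ) * B / (((q:ℂ)+1)*A) * ((t:ℂ)^(q+1) * (1-(t:ℂ))^(0-1) / (A + (t:ℂ)*(B-A))^(0+q+2))) t := by
      intro t ht
      exact_mod_cast (feyn_deriv A B hA 0 q (t:ℂ) (hL t (hIcc ▸ ht))).comp_ofReal
    have hint : IntervalIntegrable (fun t : ℝ =>
        (t:ℂ)^q * (1-(t:ℂ))^0 / (A + (t:ℂ)*(B-A))^(0+q+2)
          - (0:ℂ) * B / (((q:ℂ)+1)*A) * ((t:ℂ)^(q+1) * (1-(t:ℂ))^(0-1) / (A + (t:ℂ)*(B-A))^(0+q+2)))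
        MeasureTheory.volume 0 1 :=
      (feyn_integrable A B hL 0 q (0+q+2)).sub
        ((feyn_integrable A B hL (0-1) (q+1) (0+q+2)).const_mul _)
    have ftc := intervalIntegral.integral_eq_sub_of_hasDerivAt hderiv hint
    have e0 : (∫ t in (0:ℝ)..1, (t:ℂ)^q * (1-(t:ℂ))^0 / (A + (t:ℂ)*(B-A))^(0+q+2))
        = ∫ t in (0:ℝ)..1,
          ((t:ℂ)^q * (1-(t:ℂ))^0 / (A + (t:ℂ)*(B-A))^(0+q+2)
            - (0:ℂ) * B / (((q:ℂ)+1)*A) * ((t:ℂ)^(q+1) * (1-(t:ℂ))^(0-1) / (A + (t:ℂ)*(B-A))^(0+q+2))) := by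
      apply intervalIntegral.integral_congr
      intro t ht
      ring
    rw [e0, ftc]
    have hfq : ((q.factorial : ℂ)) ≠ 0 := by exact_mod_cast q.factorial_ne_zero
    simp only [Complex.ofReal_one, Complex.ofReal_zero, one_pow, sub_self]
    rw [show A + 1*(B-A) = B by ring]
    simp [Nat.factorial_succ]
    field_simp
  | succ n ih =>
    have hq : ((q:ℂ)+1) ≠ 0 := Nat.cast_add_one_ne_zero q
    set c : ℂ := ((n:ℂ)+1) * B / (((q:ℂ)+1)*A) with hc
    have hderiv : ∀ t ∈ Set.uIcc (0:ℝ) 1,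
        HasDerivAt (fun t : ℝ => ((t:ℂ))^(q+1) * (1-(t:ℂ))^(n+1) / (((q:ℂ)+1) * A * (A + (t:ℂ)*(B-A))^(n+1+q+1)))
          ((t:ℂ)^q * (1-(t:ℂ))^(n+1) / (A + (t:ℂ)*(B-A))^(n+1+q+2)
            - c * ((t:ℂ)^(q+1) * (1-(t:ℂ))^n / (A + (t:ℂ)*(B-A))^(n+1+q+2))) t := by
      intro t ht
      have := (feyn_deriv A B hA (n+1) q (t:ℂ) (hL t (hIcc ▸ ht))).comp_ofReal
      rw [hc]
      push_cast at this ⊢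
      convert this using 2
    have hint1 : IntervalIntegrable (fun t : ℝ =>
        (t:ℂ)^q * (1-(t:ℂ))^(n+1) / (A + (t:ℂ)*(B-A))^(n+1+q+2)
          - c * ((t:ℂ)^(q+1) * (1-(t:ℂ))^n / (A + (t:ℂ)*(B-A))^(n+1+q+2)))
        MeasureTheory.volume 0 1 :=
      (feyn_integrable A B hL (n+1) q (n+1+q+2)).sub
        ((feyn_integrable A B hL n (q+1) (n+1+q+2)).const_mul _)
    have hint2 : IntervalIntegrable (fun t : ℝ =>
        (t:ℂ)^(q+1) * (1-(t:ℂ))^n / (A + (t:ℂ)*(B-A))^(n+1+q+2)) MeasureTheory.volume 0 1 :=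
      feyn_integrable A B hL n (q+1) (n+1+q+2)
    have ftc := intervalIntegral.integral_eq_sub_of_hasDerivAt hderiv hint1
    have e1 : (∫ t in (0:ℝ)..1, (t:ℂ)^q * (1-(t:ℂ))^(n+1) / (A + (t:ℂ)*(B-A))^(n+1+q+2))
        = (∫ t in (0:ℝ)..1,
            ((t:ℂ)^q * (1-(t:ℂ))^(n+1) / (A + (t:ℂ)*(B-A))^(n+1+q+2)
              - c * ((t:ℂ)^(q+1) * (1-(t:ℂ))^n / (A + (t:ℂ)*(B-A))^(n+1+q+2))))
          + c * ∫ t in (0:ℝ)..1, (t:ℂ)^(q+1) * (1-(t:ℂ))^n / (A + (t:ℂ)*(B-A))^(n+1+q+2) := by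
      rw [← intervalIntegral.integral_const_mul, ← intervalIntegral.integral_add hint1 (hint2.const_mul c)]
      apply intervalIntegral.integral_congr
      intro t ht
      ring
    have ihq := ih (q+1)
    have hzero : (∫ t in (0:ℝ)..1,
            ((t:ℂ)^q * (1-(t:ℂ))^(n+1) / (A + (t:ℂ)*(B-A))^(n+1+q+2)
              - c * ((t:ℂ)^(q+1) * (1-(t:ℂ))^n / (A + (t:ℂ)*(B-A))^(n+1+q+2)))) = 0 := by
      rw [ftc]
      norm_num
    have e2 : (∫ t in (0:ℝ)..1, (t:ℂ)^(q+1) * (1-(t:ℂ))^n / (A + (t:ℂ)*(B-A))^(n+1+q+2))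
        = ((n.factorial : ℂ) * ((q+1).factorial : ℂ) / ((n+(q+1)+1).factorial : ℂ))
            / (A^(n+1) * B^(q+1+1)) := by
      rw [← ihq]
      congr 1
      ext t
      congr 2
      omega
    rw [e1, hzero, zero_add, e2]
    have hfq : ((q.factorial : ℂ)) ≠ 0 := by exact_mod_cast q.factorial_ne_zero
    have hfn : (((n+q+2).factorial : ℂ)) ≠ 0 := by exact_mod_cast (n+q+2).factorial_ne_zero
    have h1 : n+(q+1)+1 = n+q+2 := by omega
    have h2 : n+1+q+1 = n+q+2 := by omega
    rw [h1, h2, hc]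
    have hfn1 : (((n+1).factorial : ℕ) : ℂ) = ((n:ℂ)+1) * (n.factorial : ℂ) := by
      push_cast [Nat.factorial_succ]; ring
    have hfq1 : (((q+1).factorial : ℕ) : ℂ) = ((q:ℂ)+1) * (q.factorial : ℂ) := by
      push_cast [Nat.factorial_succ]; ring
    have hP : A^(n+1) ≠ 0 := pow_ne_zero _ hA
    have hR : B^(q+1) ≠ 0 := pow_ne_zero _ hB
    rw [hfn1, hfq1, pow_succ A (n+1), pow_succ B (q+1)]
    rw [div_div, div_div, div_mul_div_comm,
      div_eq_div_iff (by apply_rules [mul_ne_zero]) (by apply_rules [mul_ne_zero])]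
    ring

/-- Feynman parametrization: for `a, b, x₁, x₂ ∈ ℂ` with `x₁ z + x₂ ≠ 0` on
the segment from `a` to `b`, the integral of
`(b−z)^{k₁}(z−a)^{k₂}/(x₁z+x₂)^{2+k₁+k₂}` along that segment equals
`(k₁! k₂!/(k₁+k₂+1)!) (b−a)^{k₁+k₂+1}/((x₁a+x₂)^{k₁+1}(x₁b+x₂)^{k₂+1})`. -/
theorem feynman_parametrization (a b x₁ x₂ : ℂ) (k₁ k₂ : ℕ)
    (h : ∀ t : ℝ, t ∈ Set.Icc (0 : ℝ) 1 → x₁ * (a + (t : ℂ) * (b - a)) + x₂ ≠ 0) :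
    (∫ t in (0 : ℝ)..1,
        (b - (a + (t : ℂ) * (b - a))) ^ k₁ * ((a + (t : ℂ) * (b - a)) - a) ^ k₂ /
            (x₁ * (a + (t : ℂ) * (b - a)) + x₂) ^ (2 + k₁ + k₂) * (b - a)) =
      ((k₁.factorial : ℂ) * (k₂.factorial : ℂ) / ((k₁ + k₂ + 1).factorial : ℂ)) *
        (b - a) ^ (k₁ + k₂ + 1) /
          ((x₁ * a + x₂) ^ (k₁ + 1) * (x₁ * b + x₂) ^ (k₂ + 1)) := by
  set A := x₁ * a + x₂ with hA
  set B := x₁ * b + x₂ with hB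
  have hL : ∀ t : ℝ, t ∈ Set.Icc (0:ℝ) 1 → A + (t:ℂ)*(B-A) ≠ 0 := by
    intro t ht
    have := h t ht
    rw [hA, hB]
    convert this using 1
    ring
  have e1 : (∫ t in (0 : ℝ)..1,
        (b - (a + (t : ℂ) * (b - a))) ^ k₁ * ((a + (t : ℂ) * (b - a)) - a) ^ k₂ /
            (x₁ * (a + (t : ℂ) * (b - a)) + x₂) ^ (2 + k₁ + k₂) * (b - a))
      = (b-a)^(k₁+k₂+1) * ∫ t in (0:ℝ)..1, (t:ℂ)^k₂ * (1-(t:ℂ))^k₁ / (A + (t:ℂ)*(B-A))^(k₁+k₂+2) := by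
    rw [← intervalIntegral.integral_const_mul]
    apply intervalIntegral.integral_congr
    intro t ht
    dsimp only
    have hd : x₁ * (a + (t:ℂ) * (b - a)) + x₂ = A + (t:ℂ)*(B-A) := by rw [hA, hB]; ring
    have he : 2 + k₁ + k₂ = k₁ + k₂ + 2 := by omega
    rw [hd, he]
    have h1 : b - (a + (t:ℂ) * (b - a)) = (1-(t:ℂ)) * (b-a) := by ring
    have h2 : (a + (t:ℂ) * (b - a)) - a = (t:ℂ) * (b-a) := by ring
    rw [h1, h2, mul_pow, mul_pow]
    ring
  rw [e1, feyn_key A B hL k₁ k₂]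
  ring
end

section
/- Let n ≥ 2 be an even integer, p a prime, and k ≥ 0 an integer. Then for every s ∈ ℂ with Re(s) > n+1 one has (1/p^k)·∑_{j=0}^{p^k−1} ∫_0^∞ (E_{n+2}((iy+j)/p^k) − 1)·y^s dy = (2·Γ(s+1)/(ζ(−1−n)·(2π)^{s+1}))·∑_{μ=1}^{∞} σ_{n+1}(p^k·μ)/μ^{s+1}, where Γ is the Gamma function and the series on the right converges absolutely. -/
open Complex Real MeasureTheory Set

noncomputable def Eis (n : ℕ) (z : ℂ) : ℂ :=
  1 + (2 / riemannZeta (-1 - (n : ℂ))) *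
    ∑' k : ℕ, ((∑ d ∈ (k + 1).divisors, d ^ (n + 1) : ℕ) : ℂ) *
      Complex.exp (2 * (π : ℂ) * Complex.I * ((k : ℂ) + 1) * z)

section helpers

lemma contOn (s : ℂ) (a : ℝ) :
    ContinuousOn (fun y : ℝ => Complex.exp (-(a * y)) * (y : ℂ) ^ s) (Ioi (0:ℝ)) := by
  apply ContinuousOn.mul
  · exact (Complex.continuous_exp.comp (by continuity)).continuousOn
  · intro y hy
    exact (continuousAt_ofReal_cpow_const y s (Or.inr (mem_Ioi.mp hy).ne')).continuousWithinAt

lemma measF (s : ℂ) (a : ℝ) :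
    AEStronglyMeasurable (fun y : ℝ => Complex.exp (-(a * y)) * (y : ℂ) ^ s)
      (volume.restrict (Ioi (0:ℝ))) :=
  (contOn s a).aestronglyMeasurable measurableSet_Ioi

lemma normF (s : ℂ) (a : ℝ) {y : ℝ} (hy : 0 < y) :
    ‖Complex.exp (-(a * y)) * (y : ℂ) ^ s‖ = y ^ s.re * Real.exp (-a * y) := by
  rw [norm_mul, Complex.norm_exp,
    Complex.norm_cpow_eq_rpow_re_of_pos hy]
  have : (-((a:ℂ) * (y:ℂ))).re = -a * y := by simp
  rw [this, mul_comm]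

lemma intOn (s : ℂ) (hs : 0 < s.re + 1) {a : ℝ} (ha : 0 < a) :
    IntegrableOn (fun y : ℝ => Complex.exp (-(a * y)) * (y : ℂ) ^ s) (Ioi 0) := by
  have h1 : IntegrableOn (fun y : ℝ => y ^ s.re * Real.exp (-a * y)) (Ioi 0) := by
    have := integrableOn_rpow_mul_exp_neg_mul_rpow (p := 1) (s := s.re) (b := a)
      (by linarith) one_pos ha
    exact this.congr_fun (fun y hy => by simp only [Real.rpow_one]) measurableSet_Ioi
  refine Integrable.mono' h1 (measF s a) ?_
  filter_upwards [ae_restrict_mem measurableSet_Ioi] with y hy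
  rw [normF s a (mem_Ioi.mp hy)]

lemma intVal (s : ℂ) (hs : 0 < s.re + 1) {a : ℝ} (ha : 0 < a) :
    ∫ y in Ioi (0:ℝ), Complex.exp (-(a * y)) * (y : ℂ) ^ s
      = (1 / (a:ℂ)) ^ (s + 1) * Complex.Gamma (s + 1) := by
  rw [← integral_cpow_mul_exp_neg_mul_Ioi (a := s + 1) (by simpa using hs) ha]
  refine setIntegral_congr_fun measurableSet_Ioi (fun y hy => ?_)
  rw [add_sub_cancel_right, mul_comm]

lemma normIntVal (s : ℂ) (hs : 0 < s.re + 1) {a : ℝ} (ha : 0 < a) :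
    ∫ y in Ioi (0:ℝ), ‖Complex.exp (-(a * y)) * (y : ℂ) ^ s‖
      = (1 / a) ^ (s.re + 1) * Real.Gamma (s.re + 1) := by
  rw [← integral_rpow_mul_exp_neg_mul_Ioi (by simpa using hs) ha]
  refine setIntegral_congr_fun measurableSet_Ioi (fun y hy => ?_)
  rw [normF s a (mem_Ioi.mp hy), add_sub_cancel_right, neg_mul]

noncomputable def Cz : ℝ := ∑' d : ℕ, 1 / (d : ℝ) ^ (2:ℝ)

lemma Cz_summable : Summable (fun d : ℕ => 1 / (d : ℝ) ^ (2:ℝ)) :=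
  Real.summable_one_div_nat_rpow.mpr one_lt_two

lemma sigma_bound (n m : ℕ) (hn : 1 ≤ n) :
    ((∑ d ∈ m.divisors, d ^ (n + 1) : ℕ) : ℝ) ≤ Cz * (m : ℝ) ^ (n + 1) := by
  rw [← Nat.sum_div_divisors m (fun d => d ^ (n+1))]
  push_cast
  calc ∑ d ∈ m.divisors, ((m / d : ℕ) : ℝ) ^ (n+1)
      ≤ ∑ d ∈ m.divisors, (m : ℝ) ^ (n+1) * (1 / (d:ℝ) ^ (2:ℝ)) := by
        refine Finset.sum_le_sum fun d hd => ?_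
        have hd1 : 1 ≤ d := Nat.one_le_iff_ne_zero.mpr (Nat.pos_of_mem_divisors hd).ne'
        have hd1' : (1:ℝ) ≤ (d:ℝ) := by exact_mod_cast hd1
        have h1 : ((m / d : ℕ) : ℝ) ^ (n+1) ≤ ((m:ℝ) / d) ^ (n+1) := by
          refine pow_le_pow_left₀ (by positivity) Nat.cast_div_le _
        refine h1.trans ?_
        rw [div_pow, mul_one_div]
        refine div_le_div_of_nonneg_left (by positivity) (by positivity) ?_
        calc ((d:ℝ)) ^ (2:ℝ) = (d:ℝ)^(2:ℕ) := by
              rw [show ((2:ℝ)) = ((2:ℕ):ℝ) by norm_num, Real.rpow_natCast]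
          _ ≤ (d:ℝ) ^ (n+1) := pow_le_pow_right₀ hd1' (by omega)
    _ = (m : ℝ) ^ (n+1) * ∑ d ∈ m.divisors, (1 / (d:ℝ) ^ (2:ℝ)) := by
        rw [Finset.mul_sum]
    _ ≤ (m : ℝ) ^ (n+1) * Cz := by
        refine mul_le_mul_of_nonneg_left ?_ (by positivity)
        exact Summable.sum_le_tsum _ (fun d _ => by positivity) Cz_summable
    _ = Cz * (m : ℝ) ^ (n+1) := mul_comm _ _

lemma sumKey (n : ℕ) (σr : ℝ) (h : (n:ℝ) + 2 < σr) :
    Summable (fun μ : ℕ => ((μ:ℝ)+1) ^ (n+1) / ((μ:ℝ)+1) ^ σr) := by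
  have : ∀ μ : ℕ, ((μ:ℝ)+1) ^ (n+1) / ((μ:ℝ)+1) ^ σr
      = ((μ:ℝ)+1) ^ (((n:ℝ)+1) - σr) := by
    intro μ
    rw [Real.rpow_sub (by positivity), ← Real.rpow_natCast (((μ:ℝ)+1)) (n+1)]
    push_cast
    ring_nf
  simp_rw [this]
  have hsum : Summable (fun μ : ℕ => ((μ:ℝ)) ^ (((n:ℝ)+1) - σr)) :=
    Real.summable_nat_rpow.mpr (by linarith)
  have := (summable_nat_add_iff 1).mpr hsum
  simpa using this

-- master summability
lemma sumNorm (n P : ℕ) (hP : 1 ≤ P) (hn : 1 ≤ n) (σr : ℝ) (h : (n:ℝ) + 2 < σr) :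
    Summable (fun μ : ℕ =>
      ((∑ d ∈ (P * (μ + 1)).divisors, d ^ (n + 1) : ℕ) : ℝ) / ((μ:ℝ)+1) ^ σr) := by
  refine Summable.of_nonneg_of_le (fun μ => by positivity) (fun μ => ?_)
    (((sumKey n σr h).mul_left (Cz * (P:ℝ)^(n+1))))
  have hb := sigma_bound n (P * (μ+1)) hn
  rw [div_le_iff₀ (by positivity)]
  calc ((∑ d ∈ (P * (μ + 1)).divisors, d ^ (n + 1) : ℕ) : ℝ)
      ≤ Cz * ((P * (μ+1) : ℕ) : ℝ) ^ (n+1) := hb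
    _ = Cz * (P:ℝ)^(n+1) * ((μ:ℝ)+1)^(n+1) := by
        rw [Nat.cast_mul, mul_pow]; push_cast; ring
    _ = Cz * (P:ℝ)^(n+1) * (((μ:ℝ)+1) ^ (n+1) / ((μ:ℝ)+1) ^ σr) * ((μ:ℝ)+1) ^ σr := by
        have hne : ((μ:ℝ)+1)^σr ≠ 0 := by positivity
        field_simp

lemma charSum (P : ℕ) (hP : 0 < P) (m : ℕ) :
    ∑ j ∈ Finset.range P, (Complex.exp (2*π*Complex.I*(m:ℂ)/P)) ^ j
      = if P ∣ m then (P:ℂ) else 0 := by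
  have hPne : ((P:ℂ)) ≠ 0 := Nat.cast_ne_zero.mpr hP.ne'
  by_cases h : P ∣ m
  · rw [if_pos h]
    obtain ⟨c, rfl⟩ := h
    have : (2*(π:ℂ)*Complex.I*((P*c : ℕ):ℂ)/P) = (c:ℤ) * (2*π*Complex.I) := by
      push_cast; field_simp
    rw [this, Complex.exp_int_mul_two_pi_mul_I]
    simp
  · rw [if_neg h]
    have hz1 : Complex.exp (2*π*Complex.I*(m:ℂ)/P) ≠ 1 := by
      intro hc
      rw [Complex.exp_eq_one_iff] at hc
      obtain ⟨l, hl⟩ := hc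
      have h2 : (2*(π:ℂ)*Complex.I) ≠ 0 := by
        simp [Real.pi_ne_zero, Complex.I_ne_zero, Complex.ofReal_ne_zero]
      have hl' := congrArg (· * (P:ℂ)) hl
      simp only [div_mul_cancel₀ _ hPne] at hl'
      have hmc : (m:ℂ) = ((l * P : ℤ) : ℂ) := by
        refine mul_left_cancel₀ h2 ?_
        push_cast
        linear_combination hl'
      have hmz : (m:ℤ) = l * P := by exact_mod_cast hmc
      exact h (Int.natCast_dvd_natCast.mp ⟨l, by rw [hmz, mul_comm]⟩)
    rw [geom_sum_eq hz1]
    have : Complex.exp (2*π*Complex.I*(m:ℂ)/P) ^ P = 1 := by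
      rw [← Complex.exp_nat_mul]
      have : (P:ℂ) * (2*π*Complex.I*(m:ℂ)/P) = (m:ℤ) * (2*π*Complex.I) := by
        push_cast; field_simp
      rw [this, Complex.exp_int_mul_two_pi_mul_I]
    rw [this, sub_self, zero_div]

lemma reindex (P : ℕ) (hP : 0 < P) (g : ℕ → ℂ) :
    ∑' m : ℕ, (if P ∣ (m+1) then g (m+1) else 0) = ∑' μ : ℕ, g (P*(μ+1)) := by
  refine tsum_eq_tsum_of_ne_zero_bij (fun μ => P * ((μ:ℕ)+1) - 1) ?_ ?_ ?_
  · intro x y hxy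
    simp only at hxy
    have hx : 1 ≤ P * ((x:ℕ)+1) := Nat.one_le_iff_ne_zero.mpr (by positivity)
    have hy : 1 ≤ P * ((y:ℕ)+1) := Nat.one_le_iff_ne_zero.mpr (by positivity)
    have heq : P * ((x:ℕ)+1) = P * ((y:ℕ)+1) := by omega
    have := Nat.eq_of_mul_eq_mul_left hP heq
    exact Subtype.ext (by omega)
  · intro m hm
    simp only [Function.mem_support, ne_eq] at hm
    by_cases hd : P ∣ (m+1)
    · obtain ⟨c, hc⟩ := hd
      have hc0 : c ≠ 0 := by rintro rfl; simp at hc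
      have hcc : c - 1 + 1 = c := by omega
      refine ⟨⟨c - 1, ?_⟩, ?_⟩
      · simp only [Function.mem_support, ne_eq, hcc]
        rw [← hc]
        intro hg
        apply hm
        rw [if_pos ⟨c, hc⟩, hg]
      · simp only [hcc]
        omega
    · exact absurd (by rw [if_neg hd]) hm
  · intro x
    have h1 : 1 ≤ P * ((x:ℕ)+1) := Nat.one_le_iff_ne_zero.mpr (by positivity)
    have h2 : P * ((x:ℕ)+1) - 1 + 1 = P * ((x:ℕ)+1) := by omega
    simp only [h2, if_pos (Dvd.intro _ rfl)]

lemma charSum' (P : ℕ) (hP : 0 < P) (m : ℕ) :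
    ∑ j ∈ Finset.range P,
        Complex.exp ((((2*π*((m:ℝ)+1)*j/P) : ℝ) : ℂ) * Complex.I)
      = if P ∣ (m+1) then (P:ℂ) else 0 := by
  have h1 : ∀ j : ℕ,
      Complex.exp ((((2*π*((m:ℝ)+1)*j/P) : ℝ) : ℂ) * Complex.I)
        = (Complex.exp (2*π*Complex.I*(((m+1:ℕ)):ℂ)/(P:ℂ))) ^ j := by
    intro j
    rw [← Complex.exp_nat_mul]
    congr 1
    have hPne : ((P:ℂ)) ≠ 0 := Nat.cast_ne_zero.mpr hP.ne'
    push_cast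
    field_simp
  simp_rw [h1]
  exact charSum P hP (m+1)

end helpers

set_option maxHeartbeats 2000000 in
/-- Let `n ≥ 2` be even, `p` prime, `k ≥ 0`.  For every `s ∈ ℂ` with
`Re(s) > n + 1`, one has
`(1/p^k) ∑_{j=0}^{p^k−1} ∫_0^∞ (E_{n+2}((iy+j)/p^k) − 1) y^s dy
 = (2 Γ(s+1)/(ζ(−1−n) (2π)^{s+1})) ∑_{μ≥1} σ_{n+1}(p^k μ)/μ^{s+1}`,
and the series on the right converges absolutely. -/
theorem eisenstein_mellin_sum (n : ℕ) (hn : 2 ≤ n) (hne : Even n)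
    (p : ℕ) (hp : p.Prime) (k : ℕ) (s : ℂ) (hs : (n : ℝ) + 1 < s.re) :
    Summable
      (fun μ : ℕ =>
        ‖((∑ d ∈ (p ^ k * (μ + 1)).divisors, d ^ (n + 1) : ℕ) : ℂ) /
          ((μ : ℂ) + 1) ^ (s + 1)‖) ∧
    (1 / (p : ℂ) ^ k) *
        ∑ j ∈ Finset.range (p ^ k),
          ∫ y in Set.Ioi (0 : ℝ),
            (Eis n ((Complex.I * (y : ℂ) + (j : ℂ)) / (p : ℂ) ^ k) - 1) * (y : ℂ) ^ s =
      (2 * Complex.Gamma (s + 1) /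
          (riemannZeta (-1 - (n : ℂ)) * (2 * (π : ℂ)) ^ (s + 1))) *
        ∑' μ : ℕ,
          ((∑ d ∈ (p ^ k * (μ + 1)).divisors, d ^ (n + 1) : ℕ) : ℂ) /
            ((μ : ℂ) + 1) ^ (s + 1) := by
  have hn0 : (0:ℝ) ≤ (n:ℝ) := Nat.cast_nonneg n
  set P : ℕ := p ^ k with hPdef
  have hP : 0 < P := pow_pos hp.pos k
  have hPneR : (P:ℝ) ≠ 0 := Nat.cast_ne_zero.mpr hP.ne'
  have hPne : (P:ℂ) ≠ 0 := Nat.cast_ne_zero.mpr hP.ne'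
  have hs1 : 0 < s.re + 1 := by linarith
  have hσ : (n:ℝ) + 2 < s.re + 1 := by linarith
  have hn1 : 1 ≤ n := by omega
  set c : ℂ := 2 / riemannZeta (-1 - (n : ℂ)) with hc
  set σf : ℕ → ℕ := fun q => ∑ d ∈ q.divisors, d ^ (n+1) with hσf
  -- Part 1 : summability of the RHS series
  have hre : (s+1).re = s.re + 1 := by simp
  have hnormterm : ∀ μ : ℕ,
      ‖((σf (P * (μ + 1)) : ℕ) : ℂ) / ((μ : ℂ) + 1) ^ (s + 1)‖
        = ((σf (P * (μ + 1)) : ℕ) : ℝ) / ((μ:ℝ)+1) ^ (s.re+1) := by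
    intro μ
    rw [norm_div]
    have h1 : ((μ : ℂ) + 1) = (((μ:ℝ) + 1 : ℝ) : ℂ) := by push_cast; ring
    rw [h1,
      Complex.norm_cpow_eq_rpow_re_of_pos (by positivity), hre]
    congr 1
    rw [Complex.norm_natCast]
  have hsummable : Summable
      (fun μ : ℕ => ‖((σf (P * (μ + 1)) : ℕ) : ℂ) / ((μ : ℂ) + 1) ^ (s + 1)‖) := by
    refine (sumNorm n P hP hn1 (s.re+1) hσ).congr fun μ => (hnormterm μ).symm
  refine ⟨hsummable, ?_⟩
  -- Part 2 : the identity
  set a : ℕ → ℝ := fun m => 2*π*((m:ℝ)+1)/(P:ℝ) with ha_def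
  have ha : ∀ m, 0 < a m := fun m => by
    have : (0:ℝ) < (P:ℝ) := Nat.cast_pos.mpr hP
    positivity
  -- the exponential splitting
  have hexp : ∀ (j m : ℕ) (y : ℝ),
      Complex.exp (2 * (π : ℂ) * Complex.I * ((m : ℂ) + 1) *
          ((Complex.I * (y : ℂ) + (j : ℂ)) / (P : ℂ)))
        = Complex.exp ((((2*π*((m:ℝ)+1)*j/P) : ℝ) : ℂ) * Complex.I) *
            Complex.exp (-((a m : ℂ) * (y:ℂ))) := by
    intro j m y
    rw [← Complex.exp_add]
    congr 1
    rw [ha_def]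
    push_cast
    field_simp
    ring_nf
    rw [Complex.I_sq]
    ring
  -- the per-(j,m) integrand
  set E : ℕ → ℕ → ℂ := fun j m =>
    Complex.exp ((((2*π*((m:ℝ)+1)*j/P) : ℝ) : ℂ) * Complex.I) with hE_def
  have hEnorm : ∀ j m, ‖E j m‖ = 1 := fun j m => by
    rw [hE_def]; exact Complex.norm_exp_ofReal_mul_I _
  set C : ℕ → ℕ → ℂ := fun j m => c * ((σf (m+1) : ℕ) : ℂ) * E j m with hC_def
  set F : ℕ → ℕ → ℝ → ℂ := fun j m y =>
    C j m * (Complex.exp (-((a m : ℂ) * (y:ℂ))) * (y:ℂ) ^ s) with hF_def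
  -- integrand identity
  have h_int_eq : ∀ (j : ℕ) (y : ℝ),
      (Eis n ((Complex.I * (y : ℂ) + (j : ℂ)) / (P : ℂ)) - 1) * (y : ℂ) ^ s
        = ∑' m : ℕ, F j m y := by
    intro j y
    have h1 : Eis n ((Complex.I * (y : ℂ) + (j : ℂ)) / (P : ℂ)) - 1
        = c * ∑' m : ℕ, ((σf (m+1) : ℕ) : ℂ) *
            Complex.exp (2 * (π : ℂ) * Complex.I * ((m : ℂ) + 1) *
              ((Complex.I * (y : ℂ) + (j : ℂ)) / (P : ℂ))) := by
      rw [Eis, add_sub_cancel_left]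
    rw [h1, mul_comm c, mul_assoc, ← tsum_mul_right]
    refine tsum_congr fun m => ?_
    rw [hexp j m y, hF_def, hC_def]
    simp only
    ring
  -- integrability
  have hFint : ∀ j m, IntegrableOn (F j m) (Ioi 0) := by
    intro j m
    exact (intOn s hs1 (ha m)).const_mul _
  -- value of norm integrals
  have hFnorm : ∀ j m, (∫ y in Ioi (0:ℝ), ‖F j m y‖)
      = ‖c‖ * ((σf (m+1) : ℕ) : ℝ) *
        ((1 / a m) ^ (s.re + 1) * Real.Gamma (s.re + 1)) := by
    intro j m
    have h2 : ∀ y : ℝ, ‖F j m y‖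
        = (‖c‖ * ((σf (m+1) : ℕ) : ℝ)) * ‖Complex.exp (-((a m : ℂ) * (y:ℂ))) * (y:ℂ) ^ s‖ := by
      intro y
      rw [hF_def]
      simp only
      rw [norm_mul, hC_def]
      simp only
      rw [norm_mul, norm_mul, hEnorm, Complex.norm_natCast, mul_one]
    simp_rw [h2]
    rw [integral_const_mul, normIntVal s hs1 (ha m)]
  -- key real summability
  have hKey : Summable (fun m : ℕ => ((σf (m+1) : ℕ) : ℝ) * (1 / a m) ^ (s.re+1)) := by
    have hbase : Summable (fun m : ℕ =>
        ((σf (m+1) : ℕ) : ℝ) / ((m:ℝ)+1) ^ (s.re+1)) := by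
      have := sumNorm n 1 le_rfl hn1 (s.re+1) hσ
      simp only [one_mul] at this
      exact this
    refine (hbase.mul_left (((P:ℝ)/(2*π)) ^ (s.re+1))).congr fun m => ?_
    have h1 : 1 / a m = ((P:ℝ)/(2*π)) * (1/((m:ℝ)+1)) := by
      rw [ha_def]
      field_simp
    rw [h1, Real.mul_rpow (by positivity) (by positivity)]
    rw [Real.div_rpow (x := 1) (y := (m:ℝ)+1) (by norm_num) (by positivity), Real.one_rpow]
    ring
  have hFsum : ∀ j, Summable (fun m => ∫ y in Ioi (0:ℝ), ‖F j m y‖) := by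
    intro j
    refine ((hKey.mul_left (‖c‖ * Real.Gamma (s.re+1))).congr fun m => ?_).congr
      fun m => (hFnorm j m).symm
    ring
  -- replace (p:ℂ)^k by (P:ℂ) in the goal
  have hPc : ((P:ℕ):ℂ) = (p:ℂ)^k := by rw [hPdef]; push_cast; ring
  rw [← hPc]
  -- notation for the integral values
  set X : ℕ → ℂ := fun m => (1 / ((a m : ℝ) : ℂ)) ^ (s+1) * Complex.Gamma (s+1) with hX_def
  -- evaluate each integral
  have hInt : ∀ j : ℕ,
      (∫ y in Ioi (0:ℝ),
        (Eis n ((Complex.I * (y : ℂ) + (j : ℂ)) / (P : ℂ)) - 1) * (y : ℂ) ^ s)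
        = ∑' m : ℕ, C j m * X m := by
    intro j
    simp_rw [h_int_eq j]
    rw [← integral_tsum_of_summable_integral_norm (hFint j) (hFsum j)]
    refine tsum_congr fun m => ?_
    rw [hF_def]
    simp only
    rw [integral_const_mul, intVal s hs1 (ha m)]
  -- summability of the integrated series
  have hXnorm : ∀ m : ℕ, ‖X m‖ = (1 / a m) ^ (s.re+1) * ‖Complex.Gamma (s+1)‖ := by
    intro m
    rw [hX_def]
    simp only
    rw [norm_mul]
    congr 1
    have h1 : (1 / ((a m : ℝ) : ℂ)) = (((1 / a m : ℝ)) : ℂ) := by push_cast; ring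
    rw [h1, Complex.norm_cpow_eq_rpow_re_of_pos (by positivity), hre]
  have hSum2 : ∀ j : ℕ, Summable (fun m : ℕ => C j m * X m) := by
    intro j
    refine Summable.of_norm ?_
    have heq : ∀ m : ℕ, ‖C j m * X m‖
        = (‖c‖ * ‖Complex.Gamma (s+1)‖) * (((σf (m+1) : ℕ) : ℝ) * (1 / a m) ^ (s.re+1)) := by
      intro m
      rw [norm_mul, hC_def]
      simp only
      rw [norm_mul, norm_mul, hEnorm, Complex.norm_natCast, mul_one, hXnorm]
      ring
    exact ((hKey.mul_left _).congr fun m => (heq m).symm)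
  -- the character sum
  have hchar : ∀ m : ℕ, ∑ j ∈ Finset.range P, E j m
      = if P ∣ (m+1) then (P:ℂ) else 0 := by
    intro m
    simp only [hE_def]
    exact charSum' P hP m
  -- the inner j-sum
  set g : ℕ → ℂ := fun q => c * ((σf q : ℕ) : ℂ) * (P:ℂ) *
      ((1 / (((2*π*(q:ℝ)/P) : ℝ) : ℂ)) ^ (s+1) * Complex.Gamma (s+1)) with hg_def
  have hjsum : ∀ m : ℕ, ∑ j ∈ Finset.range P, (C j m * X m)
      = if P ∣ (m+1) then g (m+1) else 0 := by
    intro m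
    have h1 : ∑ j ∈ Finset.range P, (C j m * X m)
        = (c * ((σf (m+1) : ℕ) : ℂ) * ∑ j ∈ Finset.range P, E j m) * X m := by
      rw [← Finset.sum_mul, Finset.mul_sum]
    rw [h1, hchar m]
    by_cases hd : P ∣ (m+1)
    · rw [if_pos hd, if_pos hd, hg_def]
      simp only
      have hcast : ((m+1:ℕ):ℝ) = (m:ℝ)+1 := by push_cast; ring
      rw [hX_def]
      simp only
      rw [ha_def]
      simp only [hcast]
    · rw [if_neg hd, if_neg hd, mul_zero, zero_mul]
  -- the coefficient
  set K : ℂ := c * (P:ℂ) * Complex.Gamma (s+1) * ((2*(π:ℂ))^(s+1))⁻¹ with hK_def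
  -- evaluate g at multiples of P
  have hg : ∀ μ : ℕ, g (P*(μ+1))
      = K * (((σf (P*(μ+1)) : ℕ) : ℂ) / ((μ:ℂ)+1)^(s+1)) := by
    intro μ
    rw [hg_def]
    simp only
    have h1 : (2*π*(((P*(μ+1):ℕ)):ℝ)/P) = 2*π*((μ:ℝ)+1) := by
      push_cast
      field_simp
    rw [h1]
    have h2 : (1 / (((2*π*((μ:ℝ)+1)) : ℝ) : ℂ)) ^ (s+1)
        = ((2*(π:ℂ))^(s+1))⁻¹ * (((μ:ℂ)+1)^(s+1))⁻¹ := by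
      have hpos : (0:ℝ) < 2*π*((μ:ℝ)+1) := by positivity
      rw [one_div, Complex.inv_cpow _ _ (by
        rw [Complex.arg_ofReal_of_nonneg hpos.le]
        exact Real.pi_ne_zero.symm)]
      have h3 : (((2*π*((μ:ℝ)+1) : ℝ)) : ℂ) = (((2*π : ℝ)) : ℂ) * ((((μ:ℝ)+1 : ℝ)) : ℂ) := by
        push_cast
        ring
      rw [h3, mul_cpow_ofReal_nonneg (by positivity) (by positivity), mul_inv]
      congr 2
      · push_cast; ring
      · push_cast; ring
    rw [h2, hK_def, div_eq_mul_inv]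
    ring
  -- put everything together
  calc (1 / (P:ℂ)) * ∑ j ∈ Finset.range P,
        ∫ y in Ioi (0:ℝ),
          (Eis n ((Complex.I * (y : ℂ) + (j : ℂ)) / (P : ℂ)) - 1) * (y : ℂ) ^ s
      = (1 / (P:ℂ)) * ∑ j ∈ Finset.range P, ∑' m : ℕ, C j m * X m := by
        congr 1
        exact Finset.sum_congr rfl fun j _ => hInt j
    _ = (1 / (P:ℂ)) * ∑' m : ℕ, ∑ j ∈ Finset.range P, (C j m * X m) := by
        congr 1
        exact (Summable.tsum_finsetSum fun j _ => hSum2 j).symm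
    _ = (1 / (P:ℂ)) * ∑' m : ℕ, (if P ∣ (m+1) then g (m+1) else 0) := by
        congr 1
        exact tsum_congr fun m => hjsum m
    _ = (1 / (P:ℂ)) * ∑' μ : ℕ, g (P*(μ+1)) := by
        rw [reindex P hP g]
    _ = (1 / (P:ℂ)) * (K * ∑' μ : ℕ,
          (((σf (P*(μ+1)) : ℕ) : ℂ) / ((μ:ℂ)+1)^(s+1))) := by
        congr 1
        rw [← tsum_mul_left]
        exact tsum_congr fun μ => hg μ
    _ = (2 * Complex.Gamma (s + 1) /
          (riemannZeta (-1 - (n : ℂ)) * (2 * (π : ℂ)) ^ (s + 1))) *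
        ∑' μ : ℕ, (((σf (P*(μ+1)) : ℕ) : ℂ) / ((μ:ℂ)+1)^(s+1)) := by
        rw [← mul_assoc]
        congr 1
        rw [hK_def, hc]
        rw [div_eq_mul_inv (2 * Complex.Gamma (s+1)), mul_inv, div_eq_mul_inv (2:ℂ), one_div]
        field_simp
end

section
/- Let p be a prime, k ≥ 0 an integer, and a ≥ 1, e ≥ 1 integers. For an integer j with 0 ≤ j ≤ p^k − 1, let l := min(v_p(j), k) (with the convention l := k when j = 0, where v_p denotes the p-adic valuation), let j' := j/p^l, and let d := d_{k−l}(j'), where for N ≥ 1 and an integer a' coprime to p, d_N(a') denotes the unique integer with 1 ≤ d_N(a') < p^N and a'·d_N(a') ≡ 1 (mod p^N), and d_0 := 0. Then ∑_{j=0}^{p^k−1} p^{l·a}·d^{e} = ∑_{l'=0}^{k−1} p^{l'·a}·( B̃_{e+1}(p^{k−l'}) − p^{e}·B̃_{e+1}(p^{k−l'−1}) ). -/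
/-- `l := min(v_p(j), k)`, with the convention `l := k` when `j = 0`. -/
def lexp (p k j : ℕ) : ℕ :=
  if j = 0 then k else min (padicValNat p j) k

lemma Btil_nat (e M : ℕ) : Btil (e + 1) (M : ℚ) = ∑ j ∈ Finset.range M, (j : ℚ) ^ e := by
  have h := Polynomial.sum_range_pow_eq_bernoulli_sub M e
  rw [Nat.succ_eq_add_one] at h
  unfold Btil
  rw [← h]
  push_cast
  rw [mul_div_cancel_left₀]
  positivity

/-- Splitting the power sum over the units mod `p^N`. -/
lemma sum_pow_units (p : ℕ) (hp : p.Prime) (e N : ℕ) (hN : 1 ≤ N) :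
    ∑ m ∈ (Finset.range (p ^ N)).filter (fun m => ¬ p ∣ m), (m : ℚ) ^ e
      = Btil (e + 1) ((p : ℚ) ^ N) - (p : ℚ) ^ e * Btil (e + 1) ((p : ℚ) ^ (N - 1)) := by
  have h1 : Btil (e + 1) ((p : ℚ) ^ N) = ∑ m ∈ Finset.range (p ^ N), (m : ℚ) ^ e := by
    rw [show ((p : ℚ) ^ N) = ((p ^ N : ℕ) : ℚ) by push_cast; ring, Btil_nat]
  have h2 : Btil (e + 1) ((p : ℚ) ^ (N - 1))
      = ∑ m ∈ Finset.range (p ^ (N - 1)), (m : ℚ) ^ e := by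
    rw [show ((p : ℚ) ^ (N - 1)) = ((p ^ (N - 1) : ℕ) : ℚ) by push_cast; ring, Btil_nat]
  have h3 : ∑ m ∈ (Finset.range (p ^ N)).filter (fun m => p ∣ m), (m : ℚ) ^ e
      = (p : ℚ) ^ e * ∑ q ∈ Finset.range (p ^ (N - 1)), (q : ℚ) ^ e := by
    rw [Finset.mul_sum]
    refine (Finset.sum_nbij' (fun m => m / p) (fun q => p * q) ?_ ?_ ?_ ?_ ?_)
    · intro m hm
      simp only [Finset.mem_filter, Finset.mem_range] at hm ⊢
      obtain ⟨hmlt, c, rfl⟩ := hm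
      rw [Nat.mul_div_cancel_left _ hp.pos]
      have : p ^ N = p * p ^ (N - 1) := by
        rw [← pow_succ']
        congr 1
        omega
      rw [this] at hmlt
      exact Nat.lt_of_mul_lt_mul_left hmlt
    · intro q hq
      simp only [Finset.mem_range] at hq
      simp only [Finset.mem_filter, Finset.mem_range]
      refine ⟨?_, Dvd.intro q rfl⟩
      have : p ^ N = p * p ^ (N - 1) := by
        rw [← pow_succ']
        congr 1
        omega
      rw [this]
      exact Nat.mul_lt_mul_left hp.pos |>.mpr hq
    · intro m hm
      simp only [Finset.mem_filter, Finset.mem_range] at hm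
      exact Nat.mul_div_cancel' hm.2
    · intro q _
      exact Nat.mul_div_cancel_left q hp.pos
    · intro m hm
      simp only [Finset.mem_filter, Finset.mem_range] at hm
      obtain ⟨hmlt, c, rfl⟩ := hm
      simp only [Nat.mul_div_cancel_left _ hp.pos]
      push_cast
      ring
  rw [h1, h2, ← Finset.sum_filter_add_sum_filter_not (Finset.range (p ^ N))
    (fun m => p ∣ m) (fun m => (m : ℚ) ^ e), h3]
  ring

/-- `D N` preserves the set of units mod `p^N` represented in `[0, p^N)`. -/
lemma D_mem (p : ℕ) (hp : p.Prime) (N : ℕ) (hN : 1 ≤ N) (D : ℕ → ℕ → ℕ)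
    (hD : ∀ N x, 1 ≤ N → Nat.Coprime x p →
      1 ≤ D N x ∧ D N x < p ^ N ∧ x * D N x ≡ 1 [MOD p ^ N])
    (m : ℕ) (hm : ¬ p ∣ m) : D N m < p ^ N ∧ ¬ p ∣ D N m := by
  have hcop : Nat.Coprime m p := Nat.coprime_comm.mp ((hp.coprime_iff_not_dvd).mpr hm)
  obtain ⟨h1, h2, h3⟩ := hD N m hN hcop
  refine ⟨h2, ?_⟩
  intro hdvd
  have hmod : m * D N m ≡ 1 [MOD p] := h3.of_dvd (dvd_pow_self p (by omega))
  have h0 : (0 : ℕ) ≡ 1 [MOD p] :=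
    (Nat.modEq_zero_iff_dvd.mpr (hdvd.mul_left m)).symm.trans hmod
  have : p ∣ 1 := (Nat.modEq_zero_iff_dvd).mp h0.symm
  exact hp.one_lt.ne' (Nat.dvd_one.mp this)

/-- `D N` is an involution on the units mod `p^N` represented in `[0, p^N)`. -/
lemma D_invol (p : ℕ) (hp : p.Prime) (N : ℕ) (hN : 1 ≤ N) (D : ℕ → ℕ → ℕ)
    (hD : ∀ N x, 1 ≤ N → Nat.Coprime x p →
      1 ≤ D N x ∧ D N x < p ^ N ∧ x * D N x ≡ 1 [MOD p ^ N])
    (m : ℕ) (hmlt : m < p ^ N) (hm : ¬ p ∣ m) : D N (D N m) = m := by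
  have hcop : Nat.Coprime m p := Nat.coprime_comm.mp ((hp.coprime_iff_not_dvd).mpr hm)
  obtain ⟨hdlt, hd⟩ := D_mem p hp N hN D hD m hm
  have hcopd : Nat.Coprime (D N m) p := Nat.coprime_comm.mp ((hp.coprime_iff_not_dvd).mpr hd)
  obtain ⟨_, h2', h3'⟩ := hD N (D N m) hN hcopd
  obtain ⟨_, _, h3⟩ := hD N m hN hcop
  have hmod : D N m * m ≡ D N m * D N (D N m) [MOD p ^ N] := by
    calc D N m * m = m * D N m := by ring
    _ ≡ 1 [MOD p ^ N] := h3
    _ ≡ D N m * D N (D N m) [MOD p ^ N] := h3'.symm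
  have := Nat.ModEq.cancel_left_of_coprime ((hcopd.pow_right N).symm) hmod
  have heq : m % p ^ N = D N (D N m) % p ^ N := this
  rwa [Nat.mod_eq_of_lt hmlt, Nat.mod_eq_of_lt h2', eq_comm] at heq

/-- Summing the `e`-th powers of the inverses equals summing the powers themselves. -/
lemma sum_D_pow (p : ℕ) (hp : p.Prime) (e N : ℕ) (hN : 1 ≤ N) (D : ℕ → ℕ → ℕ)
    (hD : ∀ N x, 1 ≤ N → Nat.Coprime x p →
      1 ≤ D N x ∧ D N x < p ^ N ∧ x * D N x ≡ 1 [MOD p ^ N]) :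
    ∑ m ∈ (Finset.range (p ^ N)).filter (fun m => ¬ p ∣ m), ((D N m : ℕ) : ℚ) ^ e
      = ∑ m ∈ (Finset.range (p ^ N)).filter (fun m => ¬ p ∣ m), (m : ℚ) ^ e := by
  refine Finset.sum_nbij' (fun m => D N m) (fun m => D N m) ?_ ?_ ?_ ?_ ?_
  · intro m hm
    simp only [Finset.mem_filter, Finset.mem_range] at hm ⊢
    exact D_mem p hp N hN D hD m hm.2
  · intro m hm
    simp only [Finset.mem_filter, Finset.mem_range] at hm ⊢
    exact D_mem p hp N hN D hD m hm.2
  · intro m hm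
    simp only [Finset.mem_filter, Finset.mem_range] at hm
    exact D_invol p hp N hN D hD m hm.1 hm.2
  · intro m hm
    simp only [Finset.mem_filter, Finset.mem_range] at hm
    exact D_invol p hp N hN D hD m hm.1 hm.2
  · intro m _
    rfl

/-- Power-sum-over-modular-inverses identity: let `p` be prime, `k ≥ 0`,
`a, e ≥ 1`.  For `0 ≤ j ≤ p^k − 1` set `l := min(v_p(j), k)` (with `l := k`
for `j = 0`), `j' := j/p^l`, and `d := d_{k−l}(j')`, where `d_N(a')` is the
unique integer with `1 ≤ d_N(a') < p^N` and `a' d_N(a') ≡ 1 (mod p^N)`, and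
`d_0 := 0`.  Then
`∑_{j=0}^{p^k−1} p^{la} d^e
 = ∑_{l'=0}^{k−1} p^{l'a} (B̃_{e+1}(p^{k−l'}) − p^e B̃_{e+1}(p^{k−l'−1}))`. -/
theorem power_sum_modular_inverses (p : ℕ) (hp : p.Prime) (k a e : ℕ)
    (ha : 1 ≤ a) (he : 1 ≤ e) (D : ℕ → ℕ → ℕ)
    (hD0 : ∀ x, D 0 x = 0)
    (hD : ∀ N x, 1 ≤ N → Nat.Coprime x p →
      1 ≤ D N x ∧ D N x < p ^ N ∧ x * D N x ≡ 1 [MOD p ^ N]) :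
    ∑ j ∈ Finset.range (p ^ k),
        (p : ℚ) ^ (lexp p k j * a) *
          ((D (k - lexp p k j) (j / p ^ lexp p k j) : ℕ) : ℚ) ^ e =
      ∑ l ∈ Finset.range k,
        (p : ℚ) ^ (l * a) *
          (Btil (e + 1) ((p : ℚ) ^ (k - l)) -
            (p : ℚ) ^ e * Btil (e + 1) ((p : ℚ) ^ (k - l - 1))) := by
  haveI : Fact p.Prime := ⟨hp⟩
  set f : ℕ → ℚ := fun j =>
    (p : ℚ) ^ (lexp p k j * a) * ((D (k - lexp p k j) (j / p ^ lexp p k j) : ℕ) : ℚ) ^ e with hf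
  have hf0 : f 0 = 0 := by
    simp only [hf, lexp, if_pos rfl, Nat.sub_self, hD0]
    simp only [Nat.zero_div, zero_pow (by omega : e ≠ 0)]
    simp [hD0, zero_pow (by omega : e ≠ 0)]
  -- remove j = 0
  rw [show (∑ j ∈ Finset.range (p ^ k), f j)
      = ∑ j ∈ (Finset.range (p ^ k)).erase 0, f j from
    (Finset.sum_erase _ hf0).symm]
  -- reindex by (l, m) with j = p^l * m
  have key : ∑ j ∈ (Finset.range (p ^ k)).erase 0, f j
      = ∑ x ∈ (Finset.range k).sigma
          (fun l => (Finset.range (p ^ (k - l))).filter (fun m => ¬ p ∣ m)),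
          (p : ℚ) ^ (x.1 * a) * ((D (k - x.1) x.2 : ℕ) : ℚ) ^ e := by
    refine Finset.sum_nbij'
      (fun j => ⟨padicValNat p j, j / p ^ padicValNat p j⟩)
      (fun x => p ^ x.1 * x.2) ?_ ?_ ?_ ?_ ?_
    · intro j hj
      simp only [Finset.mem_erase, Finset.mem_range] at hj
      obtain ⟨hj0, hjlt⟩ := hj
      set l := padicValNat p j with hl
      have hdvd : p ^ l ∣ j := pow_padicValNat_dvd
      have hlk : l < k := by
        have h1 : p ^ l ≤ j := Nat.le_of_dvd (Nat.pos_of_ne_zero hj0) hdvd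
        have := lt_of_le_of_lt h1 hjlt
        exact (Nat.pow_lt_pow_iff_right hp.one_lt).mp this
      simp only [Finset.mem_sigma, Finset.mem_range, Finset.mem_filter]
      refine ⟨hlk, ?_, ?_⟩
      · have hj' : p ^ l * (j / p ^ l) = j := Nat.mul_div_cancel' hdvd
        have : p ^ l * (j / p ^ l) < p ^ l * p ^ (k - l) := by
          rw [hj', ← pow_add]
          rwa [show l + (k - l) = k by omega]
        exact Nat.lt_of_mul_lt_mul_left this
      · have : j / p ^ l = ordCompl[p] j := by
          rw [Nat.factorization_def j hp]
        rw [this]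
        exact Nat.not_dvd_ordCompl hp hj0
    · intro x hx
      obtain ⟨l, m⟩ := x
      simp only [Finset.mem_sigma, Finset.mem_range, Finset.mem_filter] at hx
      obtain ⟨hlk, hmlt, hm⟩ := hx
      have hm0 : m ≠ 0 := by rintro rfl; exact hm (dvd_zero p)
      simp only [Finset.mem_erase, Finset.mem_range]
      constructor
      · exact Nat.mul_ne_zero (pow_ne_zero _ hp.pos.ne') hm0
      · calc p ^ l * m < p ^ l * p ^ (k - l) :=
            (Nat.mul_lt_mul_left (pow_pos hp.pos _)).mpr hmlt
          _ = p ^ k := by rw [← pow_add]; congr 1; omega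
    · intro j hj
      simp only [Finset.mem_erase, Finset.mem_range] at hj
      exact Nat.mul_div_cancel' pow_padicValNat_dvd
    · intro x hx
      obtain ⟨l, m⟩ := x
      simp only [Finset.mem_sigma, Finset.mem_range, Finset.mem_filter] at hx
      obtain ⟨hlk, hmlt, hm⟩ := hx
      have hm0 : m ≠ 0 := by rintro rfl; exact hm (dvd_zero p)
      have hval : padicValNat p (p ^ l * m) = l := by
        rw [padicValNat.mul (pow_ne_zero _ hp.pos.ne') hm0, padicValNat.prime_pow,
          padicValNat.eq_zero_of_not_dvd hm, add_zero]
      have h2 : p ^ l * m / p ^ padicValNat p (p ^ l * m) = m := by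
        rw [hval, Nat.mul_div_cancel_left _ (pow_pos hp.pos l)]
      exact Sigma.ext hval (heq_of_eq h2)
    · intro j hj
      simp only [Finset.mem_erase, Finset.mem_range] at hj
      obtain ⟨hj0, hjlt⟩ := hj
      have hlk : padicValNat p j < k := by
        have h1 : p ^ padicValNat p j ≤ j :=
          Nat.le_of_dvd (Nat.pos_of_ne_zero hj0) pow_padicValNat_dvd
        exact (Nat.pow_lt_pow_iff_right hp.one_lt).mp (lt_of_le_of_lt h1 hjlt)
      have hlexp : lexp p k j = padicValNat p j := by
        rw [lexp, if_neg hj0, min_eq_left hlk.le]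
      simp only [hf, hlexp]
  rw [key, Finset.sum_sigma]
  refine Finset.sum_congr rfl ?_
  intro l hl
  simp only [Finset.mem_range] at hl
  have hN : 1 ≤ k - l := by omega
  trans ∑ m ∈ (Finset.range (p ^ (k - l))).filter (fun m => ¬ p ∣ m),
      (p : ℚ) ^ (l * a) * ((D (k - l) m : ℕ) : ℚ) ^ e
  · exact Finset.sum_congr rfl fun s _ => rfl
  · rw [← Finset.mul_sum, sum_D_pow p hp e (k - l) hN D hD,
      sum_pow_units p hp e (k - l) hN]
end

section
/- Let p be a prime and n ≥ 0 an integer. For a homogeneous polynomial f(X₁, X₂) of degree n with coefficients in 𝔽_p = ℤ/pℤ, define (f|T)(X₁, X₂) := f(0, X₂) + ∑_{j=0}^{p−1} f(X₁ + jX₂, 0), which is again homogeneous of degree n. Then for every homogeneous f of degree n over 𝔽_p, the polynomial (f|T)|T is a scalar multiple of X₂^n, i.e. there exists c ∈ 𝔽_p with (f|T)|T = c·X₂^n. -/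
open MvPolynomial

lemma fin2_degree (d : Fin 2 →₀ ℕ) : d.degree = d 0 + d 1 := by
  rw [Finsupp.degree_apply, Finset.sum_subset (Finset.subset_univ d.support)
    (fun x _ hx => by simpa using Finsupp.notMem_support_iff.mp hx)]
  exact Fin.sum_univ_two d

lemma evalA {p n : ℕ} (f : MvPolynomial (Fin 2) (ZMod p)) (hf : f.IsHomogeneous n)
    (Q : MvPolynomial (Fin 2) (ZMod p)) :
    aeval ![Q, 0] f = C (coeff (Finsupp.single 0 n) f) * Q ^ n := by
  conv_lhs => rw [f.as_sum]
  rw [map_sum]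
  rw [Finset.sum_eq_single (Finsupp.single (0 : Fin 2) n)]
  · rw [aeval_monomial, Finsupp.prod_fintype _ _ (fun i => pow_zero _),
      Fin.prod_univ_two]
    simp [algebraMap_eq]
  · intro d hd hne
    rw [aeval_monomial, Finsupp.prod_fintype _ _ (fun i => pow_zero _),
      Fin.prod_univ_two]
    rcases Nat.eq_zero_or_pos (d 1) with h1 | h1
    · exfalso
      apply hne
      have hdeg : d.degree = n := by
        by_contra hc
        exact mem_support_iff.mp hd (hf.coeff_eq_zero hc)
      rw [fin2_degree, h1, add_zero] at hdeg
      ext i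
      fin_cases i <;> simp [hdeg, h1]
    · simp [zero_pow h1.ne']
  · intro h
    rw [notMem_support_iff.mp h]
    simp

lemma evalB {p n : ℕ} (f : MvPolynomial (Fin 2) (ZMod p)) (hf : f.IsHomogeneous n)
    (Q : MvPolynomial (Fin 2) (ZMod p)) :
    aeval ![0, Q] f = C (coeff (Finsupp.single 1 n) f) * Q ^ n := by
  conv_lhs => rw [f.as_sum]
  rw [map_sum]
  rw [Finset.sum_eq_single (Finsupp.single (1 : Fin 2) n)]
  · rw [aeval_monomial, Finsupp.prod_fintype _ _ (fun i => pow_zero _),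
      Fin.prod_univ_two]
    simp [algebraMap_eq]
  · intro d hd hne
    rw [aeval_monomial, Finsupp.prod_fintype _ _ (fun i => pow_zero _),
      Fin.prod_univ_two]
    rcases Nat.eq_zero_or_pos (d 0) with h0 | h0
    · exfalso
      apply hne
      have hdeg : d.degree = n := by
        by_contra hc
        exact mem_support_iff.mp hd (hf.coeff_eq_zero hc)
      rw [fin2_degree, h0, zero_add] at hdeg
      ext i
      fin_cases i <;> simp [hdeg, h0]
    · simp [zero_pow h0.ne']
  · intro h
    rw [notMem_support_iff.mp h]
    simp

/-- The mod-`p` Hecke operator at `p` on two-variable polynomials over `𝔽_p`: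
`(f|T)(X₁, X₂) := f(0, X₂) + ∑_{j=0}^{p−1} f(X₁ + jX₂, 0)`. -/
noncomputable def heckeTp (p : ℕ) (f : MvPolynomial (Fin 2) (ZMod p)) :
    MvPolynomial (Fin 2) (ZMod p) :=
  aeval ![0, X 1] f +
    ∑ j ∈ Finset.range p, aeval ![X 0 + C ((j : ZMod p)) * X 1, 0] f

/-- For every homogeneous polynomial `f` of degree `n` over `𝔽_p`, the
polynomial `(f|T)|T` is a scalar multiple of `X₂^n`. -/
theorem hecke_square_lands_on_X2 (p : ℕ) (hp : p.Prime) (n : ℕ)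
    (f : MvPolynomial (Fin 2) (ZMod p)) (hf : f.IsHomogeneous n) :
    ∃ c : ZMod p, heckeTp p (heckeTp p f) = C c * (X 1) ^ n := by
  set a := coeff (Finsupp.single 0 n) f with ha
  set b := coeff (Finsupp.single 1 n) f with hb
  set G : MvPolynomial (Fin 2) (ZMod p) :=
    C b * X 1 ^ n + C a * ∑ j ∈ Finset.range p, (X 0 + C ((j : ZMod p)) * X 1) ^ n with hG
  have hg : heckeTp p f = G := by
    rw [hG]
    unfold heckeTp
    rw [evalB f hf, Finset.mul_sum]
    congr 1
    exact Finset.sum_congr rfl fun j _ => evalA f hf _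
  have hP : ((p : MvPolynomial (Fin 2) (ZMod p))) = 0 := by
    rw [← C_eq_coe_nat, ZMod.natCast_self, map_zero]
  refine ⟨b + a * ∑ j ∈ Finset.range p, ((j : ZMod p)) ^ n, ?_⟩
  rw [hg]
  unfold heckeTp
  have h1 : aeval (![0, X 1] : Fin 2 → MvPolynomial (Fin 2) (ZMod p)) G
      = C (b + a * ∑ j ∈ Finset.range p, ((j : ZMod p)) ^ n) * X 1 ^ n := by
    have key : ∀ j ∈ Finset.range p,
        aeval (![0, X 1] : Fin 2 → MvPolynomial (Fin 2) (ZMod p))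
          ((X 0 + C ((j : ZMod p)) * X 1) ^ n) = C (((j : ZMod p)) ^ n) * X 1 ^ n := by
      intro j _
      rw [map_pow, map_add, aeval_X, map_mul, aeval_C, aeval_X]
      simp only [Matrix.cons_val_zero, Matrix.cons_val_one, Matrix.head_cons, zero_add,
        algebraMap_eq]
      rw [mul_pow, ← C_pow]
    rw [hG, map_add, map_mul, map_mul, map_sum, map_pow, aeval_X, aeval_C, aeval_C,
      Finset.sum_congr rfl key, ← Finset.sum_mul, ← map_sum]
    simp only [algebraMap_eq, Matrix.cons_val_one, Matrix.head_cons, Matrix.cons_val_zero]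
    rw [map_add, map_mul]
    ring
  have h2 : ∀ k ∈ Finset.range p,
      aeval (![X 0 + C ((k : ZMod p)) * X 1, 0] : Fin 2 → MvPolynomial (Fin 2) (ZMod p)) G
      = C b * (0 : MvPolynomial (Fin 2) (ZMod p)) ^ n := by
    intro k _
    have key : ∀ j ∈ Finset.range p,
        aeval (![X 0 + C ((k : ZMod p)) * X 1, 0] : Fin 2 → MvPolynomial (Fin 2) (ZMod p))
          ((X 0 + C ((j : ZMod p)) * X 1) ^ n) = (X 0 + C ((k : ZMod p)) * X 1) ^ n := by
      intro j _
      simp only [map_pow, map_add, map_mul, aeval_X, aeval_C, Matrix.cons_val_zero,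
        Matrix.cons_val_one, Matrix.head_cons, algebraMap_eq, mul_zero, add_zero]
    rw [hG, map_add, map_mul, map_mul, map_sum, map_pow, aeval_X, aeval_C, aeval_C,
      Finset.sum_congr rfl key, Finset.sum_const, Finset.card_range, nsmul_eq_mul, hP,
      zero_mul, mul_zero, add_zero]
    simp only [algebraMap_eq, Matrix.cons_val_one, Matrix.head_cons, Matrix.cons_val_zero]
  rw [h1, Finset.sum_congr rfl h2, Finset.sum_const, Finset.card_range, nsmul_eq_mul, hP,
    zero_mul, add_zero]
end

section
/- Let p be a prime and m ≥ 2 an even integer, and write ζ(1−m) = −B_m/m ∈ ℚ (a nonzero rational number), with numerator N_m > 0 and denominator J_m > 0 in lowest terms. (1) If m is not divisible by p−1, then p does not divide J_m; equivalently, ord_p(ζ(1−m)) = ord_p(N_m). (2) If p−1 divides m, then p does not divide N_m, i.e. ord_p(N_m) = 0. -/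
/-- `ζ(1−m) = −B_m/m` as a rational number, for `m ≥ 1`. -/
noncomputable def zetaVal (m : ℕ) : ℚ :=
  -(bernoulli m) / (m : ℚ)

/-- `N_m`: the (positive) numerator of `ζ(1−m) = −B_m/m`. -/
noncomputable def Nzeta (m : ℕ) : ℕ :=
  (zetaVal m).num.natAbs

open Finset

variable {p : ℕ} [hp : Fact p.Prime]

private lemma hpQ : (1:ℚ) < p := by exact_mod_cast Nat.one_lt_cast.mpr hp.out.one_lt
private lemma hp0Q : (p:ℚ) ≠ 0 := by exact_mod_cast hp.out.ne_zero

/-- norm of `p^a / j`. -/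
lemma norm_pow_div (a : ℕ) {j : ℕ} (hj : j ≠ 0) :
    padicNorm p ((p:ℚ)^a / j) = (p:ℚ)^((padicValNat p j : ℤ) - a) := by
  have h1 : padicNorm p ((p:ℚ)^a) = (p:ℚ)^(-(a:ℤ)) := by
    rw [padicNorm.eq_zpow_of_nonzero (pow_ne_zero _ hp0Q),
      padicValRat.pow _, padicValRat.self hp.out.one_lt]
    norm_num
  have h2 : padicNorm p (j:ℚ) = (p:ℚ)^(-(padicValNat p j:ℤ)) := by
    rw [padicNorm.eq_zpow_of_nonzero (mod_cast hj), padicValRat.of_nat]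
  rw [padicNorm.div, h1, h2, ← zpow_sub₀ hp0Q]
  ring_nf

lemma zpow_mono_p {x y : ℤ} (h : x ≤ y) : (p:ℚ)^x ≤ (p:ℚ)^y :=
  zpow_le_zpow_right₀ hpQ.le h

/-- `v_p(j) ≤ j - 1` for `j ≥ 1`. -/
lemma padicValNat_le_pred {j : ℕ} (hj : j ≠ 0) : padicValNat p j ≤ j - 1 := by
  have h := Nat.le_of_dvd (Nat.pos_of_ne_zero hj) (pow_padicValNat_dvd (p := p) (n := j))
  have h2 : padicValNat p j < p ^ padicValNat p j :=
    Nat.lt_of_lt_of_le Nat.lt_two_pow_self (Nat.pow_le_pow_left hp.out.one_lt _)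
  omega

/-- `v_p(j) ≤ j - 2` for `j ≥ 2`, except `p = j = 2`. -/
lemma padicValNat_le_sub_two {j : ℕ} (hj : 2 ≤ j) (hex : p ≠ 2 ∨ j ≠ 2) :
    padicValNat p j ≤ j - 2 := by
  obtain ⟨v, hv⟩ : ∃ v, padicValNat p j = v := ⟨_, rfl⟩
  have hdvd : p ^ v ∣ j := hv ▸ pow_padicValNat_dvd
  have hle : p ^ v ≤ j := Nat.le_of_dvd (by omega) hdvd
  rw [hv]
  rcases Nat.eq_zero_or_pos v with h0 | h1
  · omega
  rcases eq_or_lt_of_le (show 1 ≤ v from h1) with h1 | h2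
  · -- v = 1
    rw [← h1] at hdvd hle ⊢
    rw [pow_one] at hdvd hle
    rcases hex with hp2 | hj2
    · have : 3 ≤ p := by have := hp.out.two_le; omega
      omega
    · rcases Nat.eq_or_lt_of_le hp.out.two_le with h2p | h3p
      · obtain ⟨c, rfl⟩ := hdvd
        omega
      · omega
  · -- v ≥ 2 : j ≥ p^v ≥ 2^v ≥ v + 2
    have h2v : v + 2 ≤ 2 ^ v := by
      clear hv hdvd hle
      have h2' : 2 ≤ v := h2
      clear h2 h1
      induction v, h2' using Nat.le_induction with
      | base => norm_num
      | succ n hn ih =>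
        have : 2 ^ (n+1) = 2 * 2 ^ n := by rw [pow_succ]; ring
        omega
    have : 2 ^ v ≤ p ^ v := Nat.pow_le_pow_left hp.out.two_le _
    omega

/-- Rearranged Faulhaber: `n·B_m = S_m(n) − ∑_{i<m} B_i C(m,i) n^{m+1−i}/(m+1−i)`. -/
lemma faulhaber_shift (n m : ℕ) :
    (n:ℚ) * bernoulli m =
      (∑ k ∈ range n, (k:ℚ)^m) -
      ∑ i ∈ range m, bernoulli i * (m.choose i) * (n:ℚ)^(m+1-i) / ((m+1-i : ℕ) : ℚ) := by
  have key := sum_range_pow n m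
  rw [Finset.sum_range_succ] at key
  have hlast : bernoulli m * (((m+1).choose m : ℕ):ℚ) * (n:ℚ)^(m+1-m) / ((m:ℚ)+1)
      = (n:ℚ) * bernoulli m := by
    have h1 : m + 1 - m = 1 := by omega
    rw [Nat.choose_succ_self_right, h1]
    have : ((m:ℚ)+1) ≠ 0 := by positivity
    field_simp
    push_cast
    ring
  have hterm : ∀ i ∈ range m,
      bernoulli i * (((m+1).choose i : ℕ):ℚ) * (n:ℚ)^(m+1-i) / ((m:ℚ)+1)
      = bernoulli i * ((m.choose i : ℕ):ℚ) * (n:ℚ)^(m+1-i) / ((m+1-i : ℕ):ℚ) := by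
    intro i hi
    rw [mem_range] at hi
    have hq : ((m.choose i : ℕ):ℚ) * ((m:ℚ)+1) = (((m+1).choose i : ℕ):ℚ) * ((m+1-i:ℕ):ℚ) := by
      have h := Nat.choose_mul_succ_eq m i
      exact_mod_cast congrArg (Nat.cast : ℕ → ℚ) h
    have h1 : ((m:ℚ)+1) ≠ 0 := by positivity
    have h2 : ((m+1-i : ℕ):ℚ) ≠ 0 := by
      have : 0 < m + 1 - i := by omega
      exact_mod_cast this.ne'
    rw [div_eq_div_iff h1 h2]
    linear_combination (-(bernoulli i * (n:ℚ)^(m+1-i))) * hq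
  rw [Finset.sum_congr rfl hterm] at key
  rw [key, hlast]
  ring

section Main
variable {p : ℕ} [hp : Fact p.Prime]

/-- Bound for a single Faulhaber tail term with `n = p^N`. -/
lemma term_bound {i m : ℕ} (N : ℕ) (hi : i < m) (hN : 1 ≤ N)
    (hint : padicNorm p ((p:ℚ) * bernoulli i) ≤ 1) :
    padicNorm p (bernoulli i * ((m.choose i : ℕ):ℚ) * ((p:ℚ)^N)^(m+1-i) / ((m+1-i : ℕ):ℚ))
      ≤ (p:ℚ)^((padicValNat p (m+1-i) : ℤ) + 1 - (N:ℤ)*((m+1-i : ℕ):ℤ)) := by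
  set j := m + 1 - i with hj
  have hj2 : 2 ≤ j := by omega
  have hNj : 1 ≤ N * j := by nlinarith
  have hrw : bernoulli i * ((m.choose i : ℕ):ℚ) * ((p:ℚ)^N)^j / ((j : ℕ):ℚ)
      = ((p:ℚ) * bernoulli i) * ((m.choose i : ℕ):ℚ) * ((p:ℚ)^(N*j-1) / ((j:ℕ):ℚ)) := by
    have : ((p:ℚ)^N)^j = (p:ℚ) * (p:ℚ)^(N*j-1) := by
      rw [← pow_mul, ← pow_succ']
      congr 1
      omega
    rw [this]
    ring
  rw [hrw, padicNorm.mul, padicNorm.mul, norm_pow_div _ (by omega)]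
  have h1 : padicNorm p ((m.choose i : ℕ):ℚ) ≤ 1 := padicNorm.of_nat _
  have hz : (0:ℚ) ≤ (p:ℚ)^((padicValNat p j : ℤ) - (N*j-1 : ℕ)) :=
    zpow_nonneg (by positivity) _
  calc padicNorm p ((p:ℚ) * bernoulli i) * padicNorm p ((m.choose i : ℕ):ℚ)
        * ((p:ℚ)^((padicValNat p j : ℤ) - (N*j-1 : ℕ)))
      ≤ 1 * 1 * ((p:ℚ)^((padicValNat p j : ℤ) - (N*j-1 : ℕ))) := by
        apply mul_le_mul (mul_le_mul hint h1 (padicNorm.nonneg _) (by norm_num)) le_rfl hz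
        norm_num
    _ = (p:ℚ)^((padicValNat p j : ℤ) - (N*j-1 : ℕ)) := by ring
    _ ≤ (p:ℚ)^((padicValNat p j : ℤ) + 1 - (N:ℤ)*((j : ℕ):ℤ)) := by
        apply zpow_mono_p
        have : ((N*j-1 : ℕ):ℤ) = (N:ℤ)*(j:ℤ) - 1 := by
          push_cast [Nat.cast_sub hNj]
          push_cast
          ring
        omega

/-- The integer power sum `S_m(n)` as a rational. -/
lemma sum_pow_cast (n m : ℕ) :
    (∑ k ∈ Finset.range n, (k:ℚ)^m) = ((∑ k ∈ Finset.range n, k^m : ℕ) : ℚ) := by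
  push_cast
  rfl

/-- von Staudt–Clausen integrality: `p·B_m` is a `p`-adic integer. -/
lemma norm_p_mul_bernoulli_le_one : ∀ m : ℕ, padicNorm p ((p:ℚ) * bernoulli m) ≤ 1 := by
  intro m
  induction m using Nat.strong_induction_on with
  | _ m ih =>
    rcases Nat.eq_zero_or_pos m with rfl | hm
    · simp only [bernoulli_zero, mul_one]
      rw [show ((p:ℚ)) = ((p:ℕ):ℚ) from rfl]
      exact padicNorm.of_nat p
    have hf := faulhaber_shift p m
    have hfp : (p:ℚ) * bernoulli m =
        ((∑ k ∈ Finset.range p, k^m : ℕ) : ℚ) -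
        ∑ i ∈ Finset.range m, bernoulli i * ((m.choose i : ℕ):ℚ) * ((p:ℚ)^1)^(m+1-i) / ((m+1-i : ℕ):ℚ) := by
      rw [hf, sum_pow_cast]
      norm_num
    rw [hfp]
    refine le_trans padicNorm.sub (max_le (padicNorm.of_nat _) ?_)
    apply padicNorm.sum_le' _ zero_le_one
    intro i hi
    rw [Finset.mem_range] at hi
    refine le_trans (term_bound 1 hi le_rfl (ih i hi)) ?_
    have hv : padicValNat p (m+1-i) ≤ (m+1-i) - 1 := padicValNat_le_pred (by omega)
    have h2 : 2 ≤ m+1-i := by omega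
    calc (p:ℚ)^((padicValNat p (m+1-i) : ℤ) + 1 - (1:ℤ)*((m+1-i : ℕ):ℤ))
        ≤ (p:ℚ)^(0:ℤ) := zpow_mono_p (by omega)
      _ = 1 := zpow_zero _

/-- The key congruence `p·B_m ≡ S_m(p) (mod p)`; for `p = 2` we need `B_{m−1} = 0`. -/
lemma norm_p_mul_bernoulli_sub_sum {m : ℕ} (hm : 1 ≤ m) (hB : p = 2 → bernoulli (m-1) = 0) :
    padicNorm p ((p:ℚ) * bernoulli m - ((∑ k ∈ Finset.range p, k^m : ℕ):ℚ)) ≤ (p:ℚ)⁻¹ := by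
  have hfp : (p:ℚ) * bernoulli m - ((∑ k ∈ Finset.range p, k^m : ℕ):ℚ) =
      -∑ i ∈ Finset.range m, bernoulli i * ((m.choose i : ℕ):ℚ) * ((p:ℚ)^1)^(m+1-i) / ((m+1-i : ℕ):ℚ) := by
    rw [faulhaber_shift p m, sum_pow_cast]
    norm_num
  rw [hfp, padicNorm.neg]
  have hinv : (p:ℚ)⁻¹ = (p:ℚ)^(-1:ℤ) := by
    rw [zpow_neg_one]
  apply padicNorm.sum_le' _ (by positivity)
  intro i hi
  rw [Finset.mem_range] at hi
  by_cases hbad : p = 2 ∧ i = m - 1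
  · have : bernoulli i = 0 := by rw [hbad.2]; exact hB hbad.1
    rw [this]
    simp only [zero_mul, zero_div, padicNorm.zero]
    positivity
  · refine le_trans (term_bound 1 hi le_rfl (norm_p_mul_bernoulli_le_one i)) ?_
    rw [hinv]
    apply zpow_mono_p
    have h2 : 2 ≤ m+1-i := by omega
    have hv : padicValNat p (m+1-i) ≤ (m+1-i) - 2 := by
      apply padicValNat_le_sub_two h2
      by_cases hp2 : p = 2
      · right; omega
      · left; exact hp2
    omega

/-- `S_m(p) mod p` is `-1` if `(p-1) ∣ m`, else `0`. -/
lemma sum_pow_zmod {m : ℕ} (hm : 1 ≤ m) :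
    ((∑ k ∈ Finset.range p, k^m : ℕ) : ZMod p) = if (p-1) ∣ m then -1 else 0 := by
  classical
  have hcast : ((∑ k ∈ Finset.range p, k^m : ℕ) : ZMod p)
      = ∑ k ∈ Finset.range p, ((k : ZMod p))^m := by
    push_cast
    rfl
  have hre : ∑ k ∈ Finset.range p, ((k : ZMod p))^m = ∑ x : ZMod p, x^m := by
    apply Finset.sum_nbij' (fun (k:ℕ) => (k : ZMod p)) (fun (x : ZMod p) => x.val)
    · intro a _; exact Finset.mem_univ _
    · intro x _
      rw [Finset.mem_range]
      exact ZMod.val_lt x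
    · intro a ha
      rw [Finset.mem_range] at ha
      exact ZMod.val_cast_of_lt ha
    · intro x _
      have : NeZero p := ⟨hp.out.ne_zero⟩
      exact ZMod.natCast_rightInverse x
    · intro a _; rfl
  have hunits : ∑ x : ZMod p, x^m = ∑ x : (ZMod p)ˣ, ((x:ZMod p))^m := by
    let φ : (ZMod p)ˣ ↪ ZMod p := ⟨fun x ↦ x, Units.val_injective⟩
    have hmap : Finset.univ.map φ = Finset.univ \ {0} := by
      ext x
      simpa only [Finset.mem_map, Finset.mem_univ, Function.Embedding.coeFn_mk, true_and,
        Finset.mem_sdiff, Finset.mem_singleton, φ] using (show (∃ a : (ZMod p)ˣ, (a : ZMod p) = x) ↔ x ≠ 0 from isUnit_iff_ne_zero)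
    calc ∑ x : ZMod p, x ^ m = ∑ x ∈ Finset.univ \ {(0 : ZMod p)}, x ^ m := by
          rw [← Finset.sum_sdiff ({0} : Finset (ZMod p)).subset_univ, Finset.sum_singleton,
            zero_pow (by omega), add_zero]
      _ = ∑ x : (ZMod p)ˣ, ((x:ZMod p)) ^ m := by
          simp [φ, ← hmap, Finset.univ.sum_map φ]
  rw [hcast, hre, hunits]
  have := FiniteField.sum_pow_units (ZMod p) m
  rwa [ZMod.card] at this

/-- von Staudt–Clausen: if `(p-1) ∣ m` (and `m` even, `2 ≤ m`) then `v_p(B_m) = -1`,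
expressed as `padicNorm p (p·B_m) = 1`. -/
lemma norm_p_mul_bernoulli_eq_one {m : ℕ} (hm : 2 ≤ m) (hme : Even m) (hd : (p-1) ∣ m) :
    padicNorm p ((p:ℚ) * bernoulli m) = 1 := by
  by_cases hsp : p = 2 ∧ m = 2
  · obtain ⟨hp2, hm2⟩ := hsp
    subst hp2 hm2
    have hb2 : bernoulli 2 = 1/6 := by
      rw [bernoulli_eq_bernoulli'_of_ne_one (by norm_num), bernoulli'_two]
    rw [hb2]
    have h3 : padicNorm 2 ((3:ℕ):ℚ) = 1 := (padicNorm.nat_eq_one_iff 3).mpr (by norm_num)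
    have hc : ((2:ℕ):ℚ) * (1/6) = 1 / ((3:ℕ):ℚ) := by norm_num
    rw [hc, padicNorm.div, padicNorm.one, h3]
    norm_num
  · have hB : p = 2 → bernoulli (m-1) = 0 := by
      intro hp2
      have hm4 : 4 ≤ m := by
        rcases hme with ⟨r, hr⟩
        omega
      rw [bernoulli_eq_bernoulli'_of_ne_one (by omega)]
      exact bernoulli'_eq_zero_of_odd (by rcases hme with ⟨r, hr⟩; exact ⟨r - 1, by omega⟩) (by omega)
    set S : ℕ := ∑ k ∈ Finset.range p, k^m with hSdef
    have hS1 : padicNorm p ((S:ℚ) + 1) ≤ (p:ℚ)⁻¹ := by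
      have hz : ((S:ℤ) + 1 : ℤ) = ((S + 1 : ℕ) : ℤ) := by push_cast; ring
      have hdvd : ((p:ℤ)) ∣ ((S:ℤ) + 1) := by
        have : (((S:ℤ) + 1 : ℤ) : ZMod p) = 0 := by
          push_cast
          rw [sum_pow_zmod (by omega), if_pos hd]
          ring
        exact_mod_cast (ZMod.intCast_zmod_eq_zero_iff_dvd _ p).mp this
      have h2 := (padicNorm.dvd_iff_norm_le (p := p) (n := 1) (z := (S:ℤ) + 1)).mp (by
        rwa [pow_one])
      have h3 : (((S:ℤ) + 1 : ℤ) : ℚ) = (S:ℚ) + 1 := by push_cast; ring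
      rw [h3] at h2
      have h4 : ((p:ℚ)) ^ (-((1:ℕ):ℤ)) = (p:ℚ)⁻¹ := by
        norm_num
      rwa [h4] at h2
    have hmain := norm_p_mul_bernoulli_sub_sum (p := p) (by omega : 1 ≤ m) hB
    have hsum : padicNorm p ((p:ℚ) * bernoulli m + 1) ≤ (p:ℚ)⁻¹ := by
      have : (p:ℚ) * bernoulli m + 1 = ((p:ℚ) * bernoulli m - (S:ℚ)) + ((S:ℚ) + 1) := by ring
      rw [this]
      exact le_trans padicNorm.nonarchimedean (max_le hmain hS1)
    have hlt : padicNorm p ((p:ℚ) * bernoulli m + 1) < padicNorm p (-1 : ℚ) := by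
      rw [padicNorm.neg, padicNorm.one]
      calc padicNorm p ((p:ℚ) * bernoulli m + 1) ≤ (p:ℚ)⁻¹ := hsum
        _ < 1 := by
          rw [inv_lt_one_iff₀]
          right
          exact hpQ
    have := padicNorm.add_eq_max_of_ne (p := p) (q := (p:ℚ) * bernoulli m + 1) (r := -1) hlt.ne
    simp only [add_neg_cancel_right] at this
    rw [this, padicNorm.neg, padicNorm.one]
    exact max_eq_right (by rw [padicNorm.neg, padicNorm.one] at hlt; exact hlt.le)

/-- If `(p-1) ∤ m`, a unit whose `m`-th power is not `1 (mod p)`. -/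
lemma exists_pow_ne_one {m : ℕ} (hnd : ¬ (p-1) ∣ m) :
    ∃ g : ℕ, ¬ p ∣ g ∧ ¬ (p:ℤ) ∣ ((g:ℤ)^m - 1) := by
  classical
  have hx : ∃ x : (ZMod p)ˣ, ((x:ZMod p))^m ≠ 1 := by
    by_contra hall
    push_neg at hall
    have h0 := FiniteField.sum_pow_units (ZMod p) m
    rw [ZMod.card, if_neg hnd, Finset.sum_congr rfl (fun x _ => hall x)] at h0
    simp only [Finset.sum_const, nsmul_eq_mul, mul_one, Finset.card_univ] at h0
    rw [ZMod.card_units] at h0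
    have hc : ((p - 1 : ℕ) : ZMod p) = -1 := by
      have h1 : ((p : ℕ) : ZMod p) = 0 := ZMod.natCast_self p
      have : ((p - 1 : ℕ) : ZMod p) = ((p:ℕ) : ZMod p) - ((1:ℕ) : ZMod p) := by
        rw [← Nat.cast_sub (by have := hp.out.two_le; omega)]
      rw [this, h1]
      push_cast
      ring
    rw [hc] at h0
    have : (1 : ZMod p) = 0 := by linear_combination -h0
    have h1 : p ∣ 1 := (ZMod.natCast_eq_zero_iff 1 p).mp (by exact_mod_cast this)
    have h2 := Nat.dvd_one.mp h1
    have := hp.out.two_le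
    omega
  obtain ⟨x, hx⟩ := hx
  haveI : NeZero p := ⟨hp.out.ne_zero⟩
  refine ⟨(x : ZMod p).val, ?_, ?_⟩
  · intro hdvd
    have h0 : (((x : ZMod p).val : ℕ) : ZMod p) = 0 := (ZMod.natCast_eq_zero_iff _ p).mpr hdvd
    rw [ZMod.natCast_rightInverse] at h0
    exact Units.ne_zero x h0
  · intro hdvd
    have h0 : ((((x : ZMod p).val : ℤ)^m - 1 : ℤ) : ZMod p) = 0 :=
      (ZMod.intCast_zmod_eq_zero_iff_dvd _ p).mpr hdvd
    push_cast at h0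
    rw [ZMod.natCast_rightInverse] at h0
    apply hx
    linear_combination h0

/-- Binomial congruence: if `p^N ∣ a - b` and `v_p(m) ≤ N` then
`p^(N + v_p(m)) ∣ a^m - b^m`. -/
lemma int_pow_cong {a b : ℤ} {N m : ℕ} (hm : 1 ≤ m) (hv : padicValNat p m ≤ N)
    (hab : (p:ℤ)^N ∣ a - b) : (p:ℤ)^(N + padicValNat p m) ∣ a^m - b^m := by
  set c : ℤ := a - b with hc
  have ha : a = c + b := by rw [hc]; ring
  rw [ha, add_pow]
  rw [Finset.sum_range_succ']
  simp only [pow_zero, one_mul, Nat.sub_zero, Nat.choose_zero_right, Nat.cast_one, mul_one]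
  rw [add_sub_cancel_right]
  apply Finset.dvd_sum
  intro k hk
  rcases Nat.eq_zero_or_pos k with rfl | hk1
  · -- term `c * b^(m-1) * m`
    rw [pow_one, Nat.choose_one_right]
    have h1 : (p:ℤ)^(N + padicValNat p m) = (p:ℤ)^N * (p:ℤ)^(padicValNat p m) := by
      rw [pow_add]
    have h2 : ((p:ℤ))^(padicValNat p m) ∣ (m:ℤ) := by
      exact_mod_cast Int.natCast_dvd_natCast.mpr (pow_padicValNat_dvd)
    rw [h1]
    have : (p:ℤ)^N * (p:ℤ)^(padicValNat p m) ∣ c * (m:ℤ) := mul_dvd_mul hab h2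
    calc (p:ℤ)^N * (p:ℤ)^(padicValNat p m) ∣ c * (m:ℤ) := this
      _ ∣ c * b^(m-1) * (m:ℤ) := ⟨b^(m-1), by ring⟩
  · -- term has `c^(k+1)` with `k+1 ≥ 2`
    have h1 : (p:ℤ)^(N + padicValNat p m) ∣ (p:ℤ)^(2*N) := pow_dvd_pow _ (by omega)
    have h2 : (p:ℤ)^(2*N) ∣ c^2 := by
      rw [mul_comm 2 N, pow_mul]
      exact pow_dvd_pow_of_dvd hab 2
    have h3 : c^2 ∣ c^(k+1) := pow_dvd_pow _ (by omega)
    calc (p:ℤ)^(N + padicValNat p m) ∣ c^(k+1) := h1.trans (h2.trans h3)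
      _ ∣ c^(k+1) * b^(m-(k+1)) * ((m.choose (k+1) : ℕ) : ℤ) := ⟨b^(m-(k+1)) * (m.choose (k+1) : ℤ), by ring⟩

/-- If `(p-1) ∤ m` and `v_p(m) ≤ N` then `p^(N+v_p(m)) ∣ ∑_{k<p^N} k^m`. -/
lemma sum_pow_int_dvd {m N : ℕ} (hm : 1 ≤ m) (hnd : ¬ (p-1) ∣ m) (hv : padicValNat p m ≤ N) :
    (p:ℤ)^(N + padicValNat p m) ∣ ∑ k ∈ Finset.range (p^N), (k:ℤ)^m := by
  classical
  obtain ⟨g, hgp, hgm⟩ := exists_pow_ne_one (p := p) hnd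
  set n : ℕ := p^N with hn
  haveI : NeZero n := ⟨pow_ne_zero _ hp.out.ne_zero⟩
  set T : ℤ := ∑ k ∈ Finset.range n, (k:ℤ)^m with hT
  -- reindex over `ZMod n`
  have hre : T = ∑ x : ZMod n, ((x.val : ℤ))^m := by
    rw [hT]
    symm
    apply Finset.sum_nbij' (fun (x : ZMod n) => x.val) (fun (k:ℕ) => (k : ZMod n))
    · intro x _
      rw [Finset.mem_range]
      exact ZMod.val_lt x
    · intro a _; exact Finset.mem_univ _
    · intro x _
      exact ZMod.natCast_rightInverse x
    · intro a ha
      rw [Finset.mem_range] at ha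
      exact ZMod.val_cast_of_lt ha
    · intro x _; rfl
  have hco : g.Coprime n := ((hp.out.coprime_iff_not_dvd.mpr hgp).symm.pow_right N)
  set u : (ZMod n)ˣ := ZMod.unitOfCoprime g hco with hu
  have hbij : Function.Bijective (fun x : ZMod n => (u : ZMod n) * x) :=
    ⟨fun a b h => by simpa using congrArg (fun y => ((u⁻¹ : (ZMod n)ˣ) : ZMod n) * y) h,
     fun y => ⟨((u⁻¹ : (ZMod n)ˣ) : ZMod n) * y, by
      simp [← mul_assoc, ← Units.val_mul]⟩⟩
  have hperm : ∑ x : ZMod n, ((((u : ZMod n) * x).val : ℤ))^m = ∑ x : ZMod n, ((x.val : ℤ))^m :=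
    Fintype.sum_bijective _ hbij _ _ (fun x => rfl)
  -- each term congruent to `g^m * x.val^m`
  have hterm : ∀ x : ZMod n,
      (p:ℤ)^(N + padicValNat p m) ∣ ((g:ℤ) * (x.val:ℤ))^m - ((((u : ZMod n) * x).val : ℤ))^m := by
    intro x
    apply int_pow_cong hm hv
    have hval : ((u : ZMod n) * x).val = (g * x.val) % n := by
      have hx : (u : ZMod n) * x = ((g * x.val : ℕ) : ZMod n) := by
        rw [hu, ZMod.coe_unitOfCoprime]
        push_cast
        rw [ZMod.natCast_rightInverse x]
      rw [hx, ZMod.val_natCast]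
    rw [hval]
    have h1 : (g * x.val) % n + n * ((g * x.val) / n) = g * x.val := Nat.mod_add_div _ _
    have hle : (g * x.val) % n ≤ g * x.val := Nat.mod_le _ _
    have hnat : n ∣ (g * x.val - (g * x.val) % n) := ⟨(g * x.val) / n, by omega⟩
    have hmod : (n:ℤ) ∣ ((g * x.val : ℕ) : ℤ) - (((g * x.val) % n : ℕ) : ℤ) := by
      have h2 := Int.natCast_dvd_natCast.mpr hnat
      rwa [Nat.cast_sub hle] at h2
    have hnc : (n:ℤ) = (p:ℤ)^N := by rw [hn]; push_cast; ring
    have hcast : ((g * x.val : ℕ) : ℤ) = (g:ℤ) * (x.val:ℤ) := by push_cast; ring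
    rw [← hnc, ← hcast]
    exact hmod
  -- conclude `p^(N+v) ∣ (g^m - 1) * T`
  have hdvd : (p:ℤ)^(N + padicValNat p m) ∣ ((g:ℤ)^m - 1) * T := by
    have hsum : ((g:ℤ)^m - 1) * T
        = ∑ x : ZMod n, (((g:ℤ) * (x.val:ℤ))^m - ((((u : ZMod n) * x).val : ℤ))^m) := by
      rw [Finset.sum_sub_distrib, hperm, ← hre]
      simp only [mul_pow]
      rw [← Finset.mul_sum, ← hre]
      ring
    rw [hsum]
    exact Finset.dvd_sum (fun x _ => hterm x)
  have hcop : IsCoprime ((p:ℤ)^(N + padicValNat p m)) ((g:ℤ)^m - 1) :=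
    ((Nat.prime_iff_prime_int.mp hp.out).coprime_iff_not_dvd.mpr hgm).pow_left
  exact hcop.dvd_of_dvd_mul_left hdvd

/-- **Adams' theorem**: if `(p-1) ∤ m` then `v_p(B_m) ≥ v_p(m)`. -/
lemma adams_bound {m : ℕ} (hm : 1 ≤ m) (hnd : ¬ (p-1) ∣ m) :
    padicNorm p (bernoulli m) ≤ (p:ℚ)^(-(padicValNat p m : ℤ)) := by
  set v := padicValNat p m with hv
  set N := v + 2 with hN
  set S : ℕ := ∑ k ∈ Finset.range (p^N), k^m with hSdef
  have hS : padicNorm p ((S:ℚ)) ≤ (p:ℚ)^(-((N+v:ℕ):ℤ)) := by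
    have hdvd : ((p^(N+v) : ℕ) : ℤ) ∣ ((S:ℕ):ℤ) := by
      have h1 := sum_pow_int_dvd (p := p) hm hnd (show v ≤ N by omega)
      have h2 : ((S:ℕ):ℤ) = ∑ k ∈ Finset.range (p^N), (k:ℤ)^m := by
        rw [hSdef]; push_cast; rfl
      rw [h2]
      exact_mod_cast h1
    have := (padicNorm.dvd_iff_norm_le (p := p) (n := N+v) (z := ((S:ℕ):ℤ))).mp hdvd
    rwa [Int.cast_natCast] at this
  have hcast : ((p^N : ℕ) : ℚ) = (p:ℚ)^N := by push_cast; ring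
  have hfp : (p:ℚ)^N * bernoulli m - (S:ℚ) =
      -∑ i ∈ Finset.range m,
        bernoulli i * ((m.choose i : ℕ):ℚ) * ((p:ℚ)^N)^(m+1-i) / ((m+1-i : ℕ):ℚ) := by
    have := faulhaber_shift (p^N) m
    rw [hcast, sum_pow_cast] at this
    rw [this, ← hSdef]
    ring
  have herr : padicNorm p ((p:ℚ)^N * bernoulli m - (S:ℚ)) ≤ (p:ℚ)^(-((N+v:ℕ):ℤ)) := by
    rw [hfp, padicNorm.neg]
    apply padicNorm.sum_le' _ (zpow_nonneg (by positivity) _)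
    intro i hi
    rw [Finset.mem_range] at hi
    refine le_trans (term_bound N hi (by omega) (norm_p_mul_bernoulli_le_one i)) (zpow_mono_p ?_)
    have hj2 : 2 ≤ m + 1 - i := by omega
    have hvj : padicValNat p (m+1-i) ≤ (m+1-i) - 1 := padicValNat_le_pred (by omega)
    set j : ℕ := m + 1 - i
    have hjz : (2:ℤ) ≤ (j:ℤ) := by exact_mod_cast hj2
    have hvjz : (padicValNat p j : ℤ) ≤ (j:ℤ) - 1 := by
      have : (padicValNat p j : ℤ) ≤ ((j - 1 : ℕ):ℤ) := by exact_mod_cast hvj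
      omega
    have hNz : (N:ℤ) = (v:ℤ) + 2 := by exact_mod_cast hN
    have hvz : (0:ℤ) ≤ (v:ℤ) := Int.natCast_nonneg _
    have hcastNv : ((N+v:ℕ):ℤ) = (N:ℤ) + (v:ℤ) := by push_cast; ring
    rw [hcastNv]
    nlinarith [mul_nonneg (by omega : (0:ℤ) ≤ (v:ℤ)+1) (by omega : (0:ℤ) ≤ (j:ℤ)-2)]
  have hcomb : padicNorm p ((p:ℚ)^N * bernoulli m) ≤ (p:ℚ)^(-((N+v:ℕ):ℤ)) := by
    have h1 : (p:ℚ)^N * bernoulli m = ((p:ℚ)^N * bernoulli m - (S:ℚ)) + (S:ℚ) := by ring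
    rw [h1]
    exact le_trans padicNorm.nonarchimedean (max_le herr hS)
  have hpn : padicNorm p ((p:ℚ)^N) = (p:ℚ)^(-(N:ℤ)) := by
    rw [padicNorm.eq_zpow_of_nonzero (pow_ne_zero _ hp0Q),
      padicValRat.pow _, padicValRat.self hp.out.one_lt]
    norm_num
  rw [padicNorm.mul, hpn] at hcomb
  have hpos : (0:ℚ) < (p:ℚ)^(N:ℤ) := zpow_pos (by exact_mod_cast hp.out.pos) _
  calc padicNorm p (bernoulli m)
      = (p:ℚ)^(N:ℤ) * ((p:ℚ)^(-(N:ℤ)) * padicNorm p (bernoulli m)) := by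
        rw [← mul_assoc, ← zpow_add₀ hp0Q]
        norm_num
    _ ≤ (p:ℚ)^(N:ℤ) * (p:ℚ)^(-((N+v:ℕ):ℤ)) := by
        apply mul_le_mul_of_nonneg_left hcomb hpos.le
    _ = (p:ℚ)^(-(v:ℤ)) := by
        rw [← zpow_add₀ hp0Q]
        congr 1
        push_cast
        ring

/-- For `m ≥ 2` even, `B_m ≠ 0` (via the 3-adic von Staudt–Clausen congruence). -/
lemma bernoulli_ne_zero_of_even' {m : ℕ} (hm : 2 ≤ m) (hme : Even m) : bernoulli m ≠ 0 := by
  haveI : Fact (Nat.Prime 3) := ⟨by norm_num⟩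
  have hdvd : (3 - 1) ∣ m := by
    rcases hme with ⟨r, hr⟩
    exact ⟨r, by omega⟩
  have h := norm_p_mul_bernoulli_eq_one (p := 3) hm hme hdvd
  intro h0
  rw [h0, mul_zero, padicNorm.zero] at h
  norm_num at h

end Main


/-- Let `p` be a prime and `m ≥ 2` even, and write `ζ(1−m) = N_m/J_m` in
lowest terms (`N_m` up to sign, `J_m = ` the denominator).
(1) If `(p−1) ∤ m` then `p ∤ J_m`; equivalently
    `ord_p(ζ(1−m)) = ord_p(N_m)`.
(2) If `(p−1) ∣ m` then `p ∤ N_m`, i.e. `ord_p(N_m) = 0`. -/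
theorem zeta_value_p_divisibility (p : ℕ) (hp : p.Prime) (m : ℕ)
    (hm : 2 ≤ m) (hme : Even m) :
    (¬ (p - 1) ∣ m →
      ¬ p ∣ (zetaVal m).den ∧
        padicValRat p (zetaVal m) = (padicValNat p (Nzeta m) : ℤ)) ∧
    ((p - 1) ∣ m → ¬ p ∣ Nzeta m ∧ padicValNat p (Nzeta m) = 0) := by
  haveI : Fact p.Prime := ⟨hp⟩
  have hm0 : ((m:ℕ):ℚ) ≠ 0 := Nat.cast_ne_zero.mpr (by omega)
  have hB : bernoulli m ≠ 0 := bernoulli_ne_zero_of_even' hm hme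
  have hz : zetaVal m ≠ 0 := by
    unfold zetaVal
    exact div_ne_zero (neg_ne_zero.mpr hB) hm0
  have hnorm : padicNorm p (zetaVal m) = padicNorm p (bernoulli m) / padicNorm p ((m:ℕ):ℚ) := by
    unfold zetaVal
    rw [padicNorm.div, padicNorm.neg]
  have hnormm : padicNorm p ((m:ℕ):ℚ) = (p:ℚ)^(-(padicValNat p m:ℤ)) := by
    rw [padicNorm.eq_zpow_of_nonzero hm0, padicValRat.of_nat]
  have hrfl : padicValRat p (zetaVal m)
      = (padicValInt p (zetaVal m).num : ℤ) - padicValNat p (zetaVal m).den := rfl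
  have hco := (zetaVal m).reduced
  have hnum_of_den : p ∣ (zetaVal m).den → ¬ p ∣ (zetaVal m).num.natAbs := by
    intro hdvd hn
    have h1 := Nat.dvd_gcd hn hdvd
    rw [Nat.Coprime] at hco
    rw [hco] at h1
    exact hp.one_lt.ne' (Nat.dvd_one.mp h1)
  constructor
  · intro hnd
    have hle : padicNorm p (zetaVal m) ≤ 1 := by
      rw [hnorm, hnormm]
      have hb := adams_bound (p := p) (by omega) hnd
      rw [div_le_one (zpow_pos (by exact_mod_cast hp.pos) _)]
      exact hb
    have hval : 0 ≤ padicValRat p (zetaVal m) := by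
      have heq := padicNorm.eq_zpow_of_nonzero (p := p) hz
      rw [heq] at hle
      have h1 : (p:ℚ)^(-padicValRat p (zetaVal m)) ≤ (p:ℚ)^(0:ℤ) := by
        rw [zpow_zero]; exact hle
      have h2 := (zpow_le_zpow_iff_right₀ (G₀ := ℚ) (by exact_mod_cast hp.one_lt)).mp h1
      omega
    have hden : ¬ p ∣ (zetaVal m).den := by
      intro hdvd
      have h1 : padicValInt p (zetaVal m).num = 0 := by
        unfold padicValInt
        exact padicValNat.eq_zero_of_not_dvd (hnum_of_den hdvd)
      have h2 : 1 ≤ padicValNat p (zetaVal m).den :=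
        one_le_padicValNat_of_dvd (zetaVal m).pos.ne' hdvd
      omega
    refine ⟨hden, ?_⟩
    have h2 : padicValNat p (zetaVal m).den = 0 := padicValNat.eq_zero_of_not_dvd hden
    rw [hrfl, h2]
    unfold Nzeta padicValInt
    simp
  · intro hd
    have h1 : padicNorm p ((p:ℚ) * bernoulli m) = 1 := norm_p_mul_bernoulli_eq_one hm hme hd
    have hnormp : padicNorm p ((p:ℕ):ℚ) = (p:ℚ)⁻¹ := padicNorm.padicNorm_p hp.one_lt
    rw [padicNorm.mul, hnormp] at h1
    have hp0 : (p:ℚ) ≠ 0 := by exact_mod_cast hp.ne_zero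
    have hnB : padicNorm p (bernoulli m) = (p:ℚ) :=
      ((inv_mul_eq_one₀ hp0).mp h1).symm
    have hgt : 1 < padicNorm p (zetaVal m) := by
      rw [hnorm, hnB, hnormm, zpow_neg, div_inv_eq_mul]
      calc (1:ℚ) = (p:ℚ)^(0:ℤ) := by rw [zpow_zero]
        _ < (p:ℚ)^(1 + (padicValNat p m:ℤ)) := by
            apply zpow_lt_zpow_right₀ (by exact_mod_cast hp.one_lt)
            omega
        _ = (p:ℚ) * (p:ℚ)^((padicValNat p m:ℤ)) := by
            rw [zpow_add₀ hp0, zpow_one]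
    have hvalneg : padicValRat p (zetaVal m) < 0 := by
      have heq := padicNorm.eq_zpow_of_nonzero (p := p) hz
      rw [heq] at hgt
      have h2 : (p:ℚ)^(0:ℤ) < (p:ℚ)^(-padicValRat p (zetaVal m)) := by
        rw [zpow_zero]; exact hgt
      have h3 := (zpow_lt_zpow_iff_right₀ (G₀ := ℚ) (by exact_mod_cast hp.one_lt)).mp h2
      omega
    have hden1 : 1 ≤ padicValNat p (zetaVal m).den := by omega
    have hdvd : p ∣ (zetaVal m).den := dvd_of_one_le_padicValNat hden1
    have hnum : ¬ p ∣ Nzeta m := hnum_of_den hdvd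
    exact ⟨hnum, padicValNat.eq_zero_of_not_dvd hnum⟩
end

section
/- Let N ≥ 1 be an integer and p a prime. Let Γ₁(Np) := { (a b; c d) ∈ SL₂(ℤ) : a ≡ d ≡ 1 and c ≡ 0 (mod Np) } and Γ(p) := { γ ∈ SL₂(ℤ) : γ ≡ Id (mod p) }. Then the subgroup of SL₂(ℤ) generated by the set { γ = (a b; c d) ∈ Γ₁(Np) : γ ∉ Γ(p) and |a+d| > 2 } is equal to Γ₁(Np). In particular, Γ₁(Np) is generated by hyperbolic elements not lying in Γ(p). -/
open CongruenceSubgroup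
open scoped MatrixGroups

private def sl2 (a b c d : ℤ) (h : a * d - b * c = 1) : SL(2, ℤ) :=
  ⟨!![a, b; c, d], by rw [Matrix.det_fin_two_of]; linarith⟩

@[simp] private lemma sl2_apply (a b c d : ℤ) (h : a * d - b * c = 1) (i j : Fin 2) :
    sl2 a b c d h i j = !![a, b; c, d] i j := rfl

@[simp] private lemma sl2_coe (a b c d : ℤ) (h : a * d - b * c = 1) :
    (sl2 a b c d h : Matrix (Fin 2) (Fin 2) ℤ) = !![a, b; c, d] := rfl

private lemma gamma1_iff (M : ℕ) (γ : SL(2, ℤ)) :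
    γ ∈ Gamma1 M ↔ (M : ℤ) ∣ γ 0 0 - 1 ∧ (M : ℤ) ∣ γ 1 1 - 1 ∧ (M : ℤ) ∣ γ 1 0 := by
  have h1 : ∀ x : ℤ, ((x : ZMod M) = 1) ↔ (M : ℤ) ∣ x - 1 := fun x => by
    rw [← sub_eq_zero, ← Int.cast_one, ← Int.cast_sub, ZMod.intCast_zmod_eq_zero_iff_dvd]
  rw [Gamma1_mem, h1, h1, ← ZMod.intCast_zmod_eq_zero_iff_dvd (a := γ 1 0)]

private lemma not_gamma {p : ℕ} {γ : SL(2, ℤ)} (h : ¬ (p : ℤ) ∣ γ 0 1) : γ ∉ Gamma p := by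
  intro hγ
  exact h ((ZMod.intCast_zmod_eq_zero_iff_dvd _ _).1 (Gamma_mem.1 hγ).2.1)

private lemma mem_S {N p : ℕ} {a b c d : ℤ} (h : a * d - b * c = 1)
    (h1 : ((N * p : ℕ) : ℤ) ∣ a - 1) (h2 : ((N * p : ℕ) : ℤ) ∣ d - 1)
    (h3 : ((N * p : ℕ) : ℤ) ∣ c) (h4 : ¬(p : ℤ) ∣ b) (h5 : 2 < |a + d|) :
    sl2 a b c d h ∈
      {γ : SL(2, ℤ) | γ ∈ Gamma1 (N * p) ∧ γ ∉ Gamma p ∧ 2 < |γ 0 0 + γ 1 1|} := by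
  refine ⟨(gamma1_iff _ _).2 ⟨by simpa using h1, by simpa using h2, by simpa using h3⟩,
    not_gamma (by simpa using h4), by simpa using h5⟩

private lemma mulT_apply (γ : SL(2, ℤ)) (n : ℤ) (i j : Fin 2) :
    (γ * ModularGroup.T ^ n) i j =
      γ i 0 * !![1, n; 0, 1] 0 j + γ i 1 * !![1, n; 0, 1] 1 j := by
  show ((γ * ModularGroup.T ^ n : SL(2, ℤ)) : Matrix (Fin 2) (Fin 2) ℤ) i j = _
  rw [Matrix.SpecialLinearGroup.coe_mul, ModularGroup.coe_T_zpow, Matrix.mul_apply,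
    Fin.sum_univ_succ, Fin.sum_univ_succ, Fin.sum_univ_zero]
  simp

private lemma T_mem_gamma1 (M : ℕ) : ModularGroup.T ∈ Gamma1 M := by
  refine (gamma1_iff _ _).2 ⟨?_, ?_, ?_⟩ <;> simp [ModularGroup.T]

@[simp] private lemma coeFn_entry (γ : SL(2, ℤ)) (i j : Fin 2) :
    (γ : Matrix (Fin 2) (Fin 2) ℤ) i j = γ i j := rfl

private lemma gamma1_le_closure (N p : ℕ) (hN : 1 ≤ N) (hp : p.Prime) :
    Gamma1 (N * p) ≤ Subgroup.closure
        {γ : SL(2, ℤ) | γ ∈ Gamma1 (N * p) ∧ γ ∉ Gamma p ∧ 2 < |γ 0 0 + γ 1 1|} := by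
  set S : Set SL(2, ℤ) :=
    {γ : SL(2, ℤ) | γ ∈ Gamma1 (N * p) ∧ γ ∉ Gamma p ∧ 2 < |γ 0 0 + γ 1 1|} with hS
  have hp2 : (2 : ℤ) ≤ (p : ℤ) := by exact_mod_cast hp.two_le
  have hpM : (p : ℤ) ∣ ((N * p : ℕ) : ℤ) := ⟨N, by push_cast; ring⟩
  have hp1 : ¬ (p : ℤ) ∣ 1 := fun h => by have := Int.le_of_dvd one_pos h; omega
  obtain ⟨M, hM⟩ : ∃ M : ℤ, ((N * p : ℕ) : ℤ) = M := ⟨_, rfl⟩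
  have hM2 : 2 ≤ M := by
    have h2 : 2 ≤ N * p := le_trans hp.two_le (Nat.le_mul_of_pos_left p hN)
    omega
  -- basic generators
  have detA1 : (1 + M) * 1 - 1 * M = 1 := by ring
  have detA2 : (1 + 2 * M) * 1 - 1 * (2 * M) = 1 := by ring
  have detA3 : 1 * (M + 1) - 1 * M = 1 := by ring
  have detH : (1 : ℤ) * 1 - 0 * M = 1 := by ring
  have hA1 : sl2 (1 + M) 1 M 1 detA1 ∈ S :=
    mem_S detA1 (by rw [hM]; exact ⟨1, by ring⟩) (by rw [hM]; exact ⟨0, by ring⟩)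
      (by rw [hM]) (by simpa using hp1) (by rw [abs_of_pos] <;> linarith)
  have hA2 : sl2 (1 + 2 * M) 1 (2 * M) 1 detA2 ∈ S :=
    mem_S detA2 (by rw [hM]; exact ⟨2, by ring⟩) (by rw [hM]; exact ⟨0, by ring⟩)
      (by rw [hM]; exact ⟨2, by ring⟩) (by simpa using hp1) (by rw [abs_of_pos] <;> linarith)
  have hA3 : sl2 1 1 M (M + 1) detA3 ∈ S :=
    mem_S detA3 (by rw [hM]; exact ⟨0, by ring⟩) (by rw [hM]; exact ⟨1, by ring⟩)
      (by rw [hM]) (by simpa using hp1) (by rw [abs_of_pos] <;> linarith)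
  have e1 : sl2 (1 + M) 1 M 1 detA1 * sl2 1 0 M 1 detH = sl2 (1 + 2 * M) 1 (2 * M) 1 detA2 := by
    apply Subtype.ext
    rw [Matrix.SpecialLinearGroup.coe_mul]
    simp only [sl2_coe]
    ext i j
    fin_cases i <;> fin_cases j <;>
      simp [Matrix.mul_apply, Fin.sum_univ_succ] <;> ring
  have hH : sl2 1 0 M 1 detH ∈ Subgroup.closure S := by
    have h := mul_mem (inv_mem (Subgroup.subset_closure hA1)) (Subgroup.subset_closure hA2)
    rwa [← e1, inv_mul_cancel_left] at h
  have e2 : sl2 1 0 M 1 detH * ModularGroup.T = sl2 1 1 M (M + 1) detA3 := by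
    apply Subtype.ext
    rw [Matrix.SpecialLinearGroup.coe_mul]
    simp only [sl2_coe, ModularGroup.coe_T]
    ext i j
    fin_cases i <;> fin_cases j <;>
      simp [Matrix.mul_apply, Fin.sum_univ_succ] <;> ring
  have hT : ModularGroup.T ∈ Subgroup.closure S := by
    have h := mul_mem (inv_mem hH) (Subgroup.subset_closure hA3)
    rwa [← e2, inv_mul_cancel_left] at h
  -- main argument
  intro γ hγ
  obtain ⟨d1, d2, d3⟩ := (gamma1_iff _ γ).1 hγ
  rw [hM] at d1 d2 d3
  have hdet : γ 0 0 * γ 1 1 - γ 0 1 * γ 1 0 = 1 := by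
    have h := γ.2
    rw [Matrix.det_fin_two] at h
    exact h
  by_cases hc : γ 1 0 = 0
  · have had : γ 0 0 * γ 1 1 = 1 := by rw [hc] at hdet; linarith
    rcases Int.mul_eq_one_iff_eq_one_or_neg_one.1 had with ⟨ha, hd⟩ | ⟨ha, hd⟩
    · have hγT : γ = ModularGroup.T ^ (γ 0 1) := by
        apply Subtype.ext
        rw [ModularGroup.coe_T_zpow]
        ext i j
        fin_cases i <;> fin_cases j <;> simp [ha, hd, hc]
      rw [hγT]
      exact zpow_mem hT _
    · -- a = d = -1, forces M = 2, N = 1, p = 2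
      have hMdvd : M ∣ 2 := by
        have h2 : M ∣ -2 := by rw [show (-2 : ℤ) = γ 0 0 - 1 from by rw [ha]; ring]; exact d1
        exact (dvd_neg).1 h2
      have hMeq : M = 2 := le_antisymm (Int.le_of_dvd (by norm_num) hMdvd) hM2
      have hpdvd : (p : ℤ) ∣ 2 := by rw [← hMeq, ← hM]; exact hpM
      have hpeq : p = 2 := by
        have := Int.le_of_dvd (by norm_num) hpdvd
        omega
      have detA4 : (-1 : ℤ) * (-3) - (-1) * (-2) = 1 := by norm_num
      have hA4 : sl2 (-1) (-1) (-2) (-3) detA4 ∈ S := by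
        refine mem_S detA4 ?_ ?_ ?_ ?_ (by norm_num)
        · rw [hM, hMeq]; norm_num
        · rw [hM, hMeq]; exact ⟨-2, by ring⟩
        · rw [hM, hMeq]; norm_num
        · rw [hpeq]; norm_num
      have e4 : γ * (ModularGroup.T ^ (γ 0 1) * sl2 1 1 M (M + 1) detA3)
          = sl2 (-1) (-1) (-2) (-3) detA4 := by
        apply Subtype.ext
        rw [Matrix.SpecialLinearGroup.coe_mul, Matrix.SpecialLinearGroup.coe_mul,
          ModularGroup.coe_T_zpow]
        simp only [sl2_coe]
        ext i j
        fin_cases i <;> fin_cases j <;>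
          simp [Matrix.mul_apply, Fin.sum_univ_succ, ha, hd, hc, hMeq] <;> ring
      have hγeq : γ = sl2 (-1) (-1) (-2) (-3) detA4
          * (ModularGroup.T ^ (γ 0 1) * sl2 1 1 M (M + 1) detA3)⁻¹ :=
        eq_mul_inv_of_mul_eq e4
      rw [hγeq]
      exact mul_mem (Subgroup.subset_closure hA4)
        (inv_mem (mul_mem (zpow_mem hT _) (Subgroup.subset_closure hA3)))
  · -- c ≠ 0
    have hc2 : 1 ≤ γ 1 0 ^ 2 := by nlinarith [Int.one_le_abs hc, sq_abs (γ 1 0), abs_nonneg (γ 1 0)]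
    obtain ⟨A0, hA0⟩ : ∃ A0 : ℤ, γ 0 0 + γ 1 1 + (1 - γ 0 1) * γ 1 0 = A0 := ⟨_, rfl⟩
    obtain ⟨n, hn⟩ : ∃ n : ℤ, 1 - γ 0 1 + p * γ 1 0 * (|A0| + 3) = n := ⟨_, rfl⟩
    have hpa : (p : ℤ) ∣ γ 0 0 - 1 := dvd_trans hpM (hM ▸ d1)
    have hmem : γ * ModularGroup.T ^ n ∈ S := by
      refine ⟨mul_mem hγ (zpow_mem (T_mem_gamma1 _) n), not_gamma ?_, ?_⟩
      · have e01 : (γ * ModularGroup.T ^ n) 0 1 = γ 0 0 * n + γ 0 1 := by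
          rw [mulT_apply]; simp
        rw [e01]
        intro hdvd
        apply hp1
        have hkey : (1 : ℤ) = (γ 0 0 * n + γ 0 1) - n * (γ 0 0 - 1)
            - p * (γ 1 0 * (|A0| + 3)) := by rw [← hn]; ring
        rw [hkey]
        exact dvd_sub (dvd_sub hdvd (Dvd.dvd.mul_left hpa n)) (dvd_mul_right _ _)
      · have e00 : (γ * ModularGroup.T ^ n) 0 0 = γ 0 0 := by rw [mulT_apply]; simp
        have e11 : (γ * ModularGroup.T ^ n) 1 1 = γ 1 0 * n + γ 1 1 := by
          rw [mulT_apply]; simp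
        rw [e00, e11]
        have htr : γ 0 0 + (γ 1 0 * n + γ 1 1)
            = A0 + (p * γ 1 0 ^ 2 - 2 * γ 1 0 ^ 2 * 0) * (|A0| + 3) := by
          rw [← hn, ← hA0]; ring
        have hj0 : (0 : ℤ) ≤ |A0| + 3 := by have := abs_nonneg A0; linarith
        have hbig : 2 < γ 0 0 + (γ 1 0 * n + γ 1 1) := by
          rw [htr]
          have hkey : 0 ≤ (p * γ 1 0 ^ 2 - 2) * (|A0| + 3) :=
            mul_nonneg (by nlinarith) hj0
          nlinarith [le_abs_self A0, neg_abs_le A0, abs_nonneg A0]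
        exact lt_of_lt_of_le hbig (le_abs_self _)
    have hγeq : γ = (γ * ModularGroup.T ^ n) * (ModularGroup.T ^ n)⁻¹ :=
      (mul_inv_cancel_right _ _).symm
    rw [hγeq]
    exact mul_mem (Subgroup.subset_closure hmem) (inv_mem (zpow_mem hT n))


/-- Let `N ≥ 1` be an integer and `p` a prime.  The subgroup of `SL₂(ℤ)`
generated by the hyperbolic elements of `Γ₁(Np)` not lying in `Γ(p)`
(i.e. those `γ = (a b; c d) ∈ Γ₁(Np)` with `γ ∉ Γ(p)` and `|a+d| > 2`)
is all of `Γ₁(Np)`. -/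
theorem gamma1_generated_by_hyperbolic (N p : ℕ) (hN : 1 ≤ N) (hp : p.Prime) :
    Subgroup.closure
        {γ : SL(2, ℤ) | γ ∈ Gamma1 (N * p) ∧ γ ∉ Gamma p ∧ 2 < |γ 0 0 + γ 1 1|} =
      Gamma1 (N * p) :=
  le_antisymm ((Subgroup.closure_le _).2 fun _ hγ => hγ.1)
    (gamma1_le_closure N p hN hp)
end
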